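/- arXiv:2107.09025 — 11 statements merged into one kernel-verified Lean document; each statement's English description precedes it below -/
import Mathlib

section
/- The set L = {2n-1, 2n, ..., 4n-2} ∪ {6n-3} of positive integers, for n ≥ 1, induces as its sum graph the disjoint union of a perfect matching on 2n vertices (n disjoint edges) together with one isolated vertex. That is, in the graph on vertex set L where u and v are adjacent iff u+v ∈ L, each label a ∈ [2n-1, 4n-2] is adjacent exactly to 6n-3-a, and 6n-3 is isolated. -/
/-- The sum graph induced by a finite set `L` of integers: vertices are the elements of `L`,
with distinct `u, v` adjacent iff `u + v ∈ L`. -/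
def sumGraph (L : Finset ℤ) : SimpleGraph {x : ℤ // x ∈ L} :=
  SimpleGraph.fromRel (fun a b => (a : ℤ) + b ∈ L)

/-- `L` induces the graph `G` together with some isolated vertices:
there is an injective labeling `f` of the vertices of `G` by elements of `L` such that
adjacency in `G` corresponds exactly to the sum condition, and every label not used
for a vertex of `G` is isolated in the induced sum graph. -/
def IsSumLabeling {V : Type*} (G : SimpleGraph V) (L : Finset ℤ) : Prop :=
  ∃ f : V → ℤ, Function.Injective f ∧ (∀ v, f v ∈ L) ∧
    (∀ u v : V, G.Adj u v ↔ (f u ≠ f v ∧ f u + f v ∈ L)) ∧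
    (∀ a ∈ L, a ∉ Set.range f → ∀ b ∈ L, b ≠ a → a + b ∉ L)

/-- The sum-diameter of `G`: the minimum of `max L - min L` over finite sets `L` of
positive integers whose induced sum graph is `G` plus isolated vertices. -/
noncomputable def sumDiam {V : Type*} (G : SimpleGraph V) : ℕ :=
  sInf {d | ∃ L : Finset ℤ, (∀ x ∈ L, 0 < x) ∧ IsSumLabeling G L ∧
    ∃ hL : L.Nonempty, (L.max' hL - L.min' hL).toNat = d}

/-- The integral sum-diameter of `G`: labels may be arbitrary integers. -/
noncomputable def intSumDiam {V : Type*} (G : SimpleGraph V) : ℕ :=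
  sInf {d | ∃ L : Finset ℤ, IsSumLabeling G L ∧
    ∃ hL : L.Nonempty, (L.max' hL - L.min' hL).toNat = d}

/-- The sum number `σ(G)`: minimum number of isolated vertices that must be added to `G`
to obtain a sum graph. -/
noncomputable def sumNumber {V : Type*} [Fintype V] (G : SimpleGraph V) : ℕ :=
  sInf {k | ∃ L : Finset ℤ, (∀ x ∈ L, 0 < x) ∧ IsSumLabeling G L ∧
    L.card = Fintype.card V + k}

/-- The spum of `G`: minimum range over labelings using exactly `σ(G)` extra isolated
vertices. -/
noncomputable def spum {V : Type*} [Fintype V] (G : SimpleGraph V) : ℕ :=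
  sInf {d | ∃ L : Finset ℤ, (∀ x ∈ L, 0 < x) ∧ IsSumLabeling G L ∧
    L.card = Fintype.card V + sumNumber G ∧
    ∃ hL : L.Nonempty, (L.max' hL - L.min' hL).toNat = d}

/-- The perfect matching `nK₂`: `n` disjoint edges on `2n` vertices. -/
def matching (n : ℕ) : SimpleGraph (Fin n × Fin 2) :=
  SimpleGraph.fromRel (fun a b => a.1 = b.1)

/-- For `n ≥ 1`, `L = [2n-1, 4n-2] ∪ {6n-3}` induces the perfect matching `nK₂` plus one
isolated vertex: each `a ∈ [2n-1, 4n-2]` is adjacent exactly to `6n-3-a`, and `6n-3` is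
isolated. -/
theorem stmt0 (n : ℕ) (hn : 1 ≤ n) :
    let L : Finset ℤ := Finset.Icc (2 * (n : ℤ) - 1) (4 * (n : ℤ) - 2) ∪ {6 * (n : ℤ) - 3}
    IsSumLabeling (matching n) L ∧
    (∀ a ∈ Finset.Icc (2 * (n : ℤ) - 1) (4 * (n : ℤ) - 2),
      (6 * (n : ℤ) - 3 - a ∈ L) ∧
      (∀ b ∈ L, (b ≠ a ∧ a + b ∈ L) ↔ b = 6 * (n : ℤ) - 3 - a)) ∧
    (∀ b ∈ L, b ≠ 6 * (n : ℤ) - 3 → 6 * (n : ℤ) - 3 + b ∉ L) := by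
  intro L
  have hL : ∀ x : ℤ, x ∈ L ↔ ((2*(n:ℤ)-1 ≤ x ∧ x ≤ 4*(n:ℤ)-2) ∨ x = 6*(n:ℤ)-3) := by
    intro x
    simp [L, Finset.mem_Icc]
    tauto
  refine ⟨⟨fun p => if p.2 = 0 then 2*(n:ℤ)-1+p.1 else 4*(n:ℤ)-2-p.1, ?_, ?_, ?_, ?_⟩, ?_, ?_⟩
  · rintro ⟨i, j⟩ ⟨i', j'⟩ h
    have hi := i.isLt; have hi' := i'.isLt
    fin_cases j <;> fin_cases j' <;> simp_all [Prod.ext_iff, Fin.ext_iff] <;> omega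
  · rintro ⟨i, j⟩
    have hi := i.isLt
    fin_cases j <;> simp [hL] <;> omega
  · rintro ⟨i, j⟩ ⟨i', j'⟩
    have hi := i.isLt; have hi' := i'.isLt
    fin_cases j <;> fin_cases j' <;>
      simp [matching, SimpleGraph.fromRel_adj, hL, Prod.ext_iff, Fin.ext_iff] <;> omega
  · intro a ha hna b hb hba
    have ha' := (hL a).1 ha
    have hb' := (hL b).1 hb
    have : a = 6*(n:ℤ)-3 := by
      rcases ha' with h | h
      · exfalso
        apply hna
        rcases le_or_gt a (3*(n:ℤ)-2) with hle | hlt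
        · refine ⟨(⟨(a - (2*(n:ℤ)-1)).toNat, by omega⟩, 0), ?_⟩
          simp; omega
        · refine ⟨(⟨(4*(n:ℤ)-2 - a).toNat, by omega⟩, 1), ?_⟩
          simp; omega
      · exact h
    rw [hL]; omega
  · intro a ha
    simp only [Finset.mem_Icc] at ha
    constructor
    · rw [hL]; omega
    · intro b hb
      have hb' := (hL b).1 hb
      constructor
      · rintro ⟨hne, hs⟩
        have := (hL (a+b)).1 hs
        omega
      · intro hba
        refine ⟨by omega, ?_⟩
        rw [hL]; omega
  · intro b hb hne
    have hb' := (hL b).1 hb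
    rw [hL]; omega
end

section
/- For even n ≥ 4, the set L = {1, 3, 5, ..., 2n-3} ∪ {2n-4, 2n} induces as its sum graph a path on n vertices together with one isolated vertex (the vertex 2n is isolated, and the remaining n labels form a path). -/
private def gfun (n : ℕ) (i : ℕ) : ℤ :=
  if i = 0 then 2*(n:ℤ)-4 else if i % 2 = 1 then 2*(i:ℤ)-1 else 2*(n:ℤ)-2*(i:ℤ)-1

private lemma memL_iff (n : ℕ) (hn : 4 ≤ n) (x : ℤ) :
    x ∈ ((Finset.range (n - 1)).image (fun k : ℕ => 2 * (k : ℤ) + 1)) ∪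
        ({2 * (n : ℤ) - 4, 2 * (n : ℤ)} : Finset ℤ) ↔
      (x % 2 = 1 ∧ 1 ≤ x ∧ x ≤ 2*(n:ℤ) - 3) ∨ x = 2*(n:ℤ)-4 ∨ x = 2*(n:ℤ) := by
  simp only [Finset.mem_union, Finset.mem_image, Finset.mem_range, Finset.mem_insert,
    Finset.mem_singleton]
  constructor
  · rintro ((⟨k, hk, rfl⟩) | h | h) <;> [left; right;right] <;> omega
  · rintro (⟨h1, h2, h3⟩ | h | h)
    · exact Or.inl ⟨(x-1).toNat / 2, by omega, by omega⟩
    · exact Or.inr (Or.inl h)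
    · exact Or.inr (Or.inr h)

private lemma gfun_cases (n : ℕ) (i : ℕ) :
    (i = 0 ∧ gfun n i = 2*(n:ℤ)-4) ∨
    (i ≠ 0 ∧ i % 2 = 1 ∧ gfun n i = 2*(i:ℤ)-1) ∨
    (i ≠ 0 ∧ i % 2 = 0 ∧ gfun n i = 2*(n:ℤ)-2*(i:ℤ)-1) := by
  unfold gfun
  by_cases h0 : i = 0
  · simp [h0]
  · by_cases h1 : i % 2 = 1
    · simp [h0, h1]
    · simp [h0, h1]; omega


/-- For even `n ≥ 4`, the set `L = {1, 3, 5, ..., 2n-3} ∪ {2n-4, 2n}` induces a path on `n`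
vertices plus one isolated vertex: `2n` is isolated and the remaining `n` labels form a path. -/
theorem stmt1 (n : ℕ) (hn : 4 ≤ n) (hev : Even n) :
    let L : Finset ℤ :=
      ((Finset.range (n - 1)).image (fun k : ℕ => 2 * (k : ℤ) + 1)) ∪ {2 * (n : ℤ) - 4, 2 * (n : ℤ)}
    (∀ b ∈ L, b ≠ 2 * (n : ℤ) → 2 * (n : ℤ) + b ∉ L) ∧
    Nonempty (SimpleGraph.pathGraph n ≃g
      (sumGraph L).induce {x : {y : ℤ // y ∈ L} | (x : ℤ) ≠ 2 * (n : ℤ)}) := by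
  intro L
  have hne : n % 2 = 0 := Nat.even_iff.mp hev
  have memL : ∀ x : ℤ, x ∈ L ↔
      (x % 2 = 1 ∧ 1 ≤ x ∧ x ≤ 2*(n:ℤ) - 3) ∨ x = 2*(n:ℤ)-4 ∨ x = 2*(n:ℤ) :=
    memL_iff n hn
  constructor
  · intro b hb hbne hmem
    rw [memL] at hb hmem
    omega
  · -- build the isomorphism
    set S : Set {y : ℤ // y ∈ L} := {x : {y : ℤ // y ∈ L} | (x : ℤ) ≠ 2 * (n : ℤ)} with hS
    -- membership of labels
    have hmemg : ∀ i : ℕ, i < n → gfun n i ∈ L := by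
      intro i hi
      rw [memL]
      rcases gfun_cases n i with ⟨h0, he⟩ | ⟨h0, h1, he⟩ | ⟨h0, h1, he⟩ <;> rw [he] <;> omega
    have hneg : ∀ i : ℕ, i < n → gfun n i ≠ 2*(n:ℤ) := by
      intro i hi
      rcases gfun_cases n i with ⟨h0, he⟩ | ⟨h0, h1, he⟩ | ⟨h0, h1, he⟩ <;> rw [he] <;> omega
    have hinj : ∀ i j : ℕ, i < n → j < n → gfun n i = gfun n j → i = j := by
      intro i j hi hj hij
      rcases gfun_cases n i with ⟨h0, he⟩ | ⟨h0, h1, he⟩ | ⟨h0, h1, he⟩ <;>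
        rcases gfun_cases n j with ⟨g0, ge⟩ | ⟨g0, g1, ge⟩ | ⟨g0, g1, ge⟩ <;>
          rw [he, ge] at hij <;> omega
    have hadj : ∀ i j : ℕ, i < n → j < n → i ≠ j →
        ((gfun n i + gfun n j ∈ L) ↔ (i + 1 = j ∨ j + 1 = i)) := by
      intro i j hi hj hij
      rw [memL]
      rcases gfun_cases n i with ⟨h0, he⟩ | ⟨h0, h1, he⟩ | ⟨h0, h1, he⟩ <;>
        rcases gfun_cases n j with ⟨g0, ge⟩ | ⟨g0, g1, ge⟩ | ⟨g0, g1, ge⟩ <;>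
          rw [he, ge] <;> omega
    have hsurj : ∀ x : ℤ, x ∈ L → x ≠ 2*(n:ℤ) → ∃ i : ℕ, i < n ∧ gfun n i = x := by
      intro x hx hxne
      rw [memL] at hx
      rcases hx with ⟨h1, h2, h3⟩ | h | h
      · by_cases h4 : x % 4 = 1
        · refine ⟨(x+1).toNat / 2, by omega, ?_⟩
          rcases gfun_cases n ((x+1).toNat / 2) with ⟨h0, he⟩ | ⟨h0, hp, he⟩ | ⟨h0, hp, he⟩ <;>
            rw [he] <;> omega
        · refine ⟨n - (x+1).toNat / 2, by omega, ?_⟩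
          rcases gfun_cases n (n - (x+1).toNat / 2) with ⟨h0, he⟩ | ⟨h0, hp, he⟩ | ⟨h0, hp, he⟩ <;>
            rw [he] <;> omega
      · exact ⟨0, by omega, by simp [gfun, h]⟩
      · omega
    -- the function into S
    have hF : ∀ i : Fin n, (⟨gfun n i.1, hmemg i.1 i.2⟩ : {y : ℤ // y ∈ L}) ∈ S := by
      intro i
      exact hneg i.1 i.2
    let F : Fin n → S := fun i => ⟨⟨gfun n i.1, hmemg i.1 i.2⟩, hF i⟩
    have hFbij : Function.Bijective F := by
      constructor
      · intro i j hij
        apply Fin.ext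
        apply hinj i.1 j.1 i.2 j.2
        simpa [F, Subtype.ext_iff] using hij
      · rintro ⟨⟨x, hx⟩, hxS⟩
        obtain ⟨i, hi, hgi⟩ := hsurj x hx hxS
        exact ⟨⟨i, hi⟩, by simp [F, Subtype.ext_iff, hgi]⟩
    refine ⟨⟨Equiv.ofBijective F hFbij, ?_⟩⟩
    intro i j
    simp only [Equiv.ofBijective_apply, SimpleGraph.comap_adj, SimpleGraph.pathGraph_adj]
    show (sumGraph L).Adj ⟨gfun n i.1, _⟩ ⟨gfun n j.1, _⟩ ↔ _
    rw [sumGraph, SimpleGraph.fromRel_adj]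
    constructor
    · rintro ⟨hne', h | h⟩
      · have hij : i.1 ≠ j.1 := fun h' => hne' (by ext; simp [h'])
        exact (hadj i.1 j.1 i.2 j.2 hij).mp h
      · have hij : i.1 ≠ j.1 := fun h' => hne' (by ext; simp [h'])
        rw [add_comm] at h
        exact (hadj i.1 j.1 i.2 j.2 hij).mp h
    · intro h
      have hij : i.1 ≠ j.1 := by omega
      refine ⟨?_, Or.inl ((hadj i.1 j.1 i.2 j.2 hij).mpr h)⟩
      intro hc
      apply hij
      apply hinj i.1 j.1 i.2 j.2
      simpa [Subtype.ext_iff] using hc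
end

section
/- For n ≥ 3, the set L = {n-1, n, ..., 2n-2} ∪ {3n-4, 3n-3} induces as its sum graph a path on n vertices (formed by the labels in [n-1, 2n-2]) together with two isolated vertices 3n-4 and 3n-3. Consequently, the sum-diameter of the path Pₙ satisfies sd(Pₙ) ≤ 2n-2. -/
private def pidx (n k : ℕ) : ℕ := if k % 2 = 0 then n - 1 - k / 2 else k / 2

private lemma pidx_le {n k : ℕ} (hk : k < n) : pidx n k ≤ n - 1 := by
  unfold pidx; split_ifs <;> omega

private lemma pidx_inj {n k l : ℕ} (hk : k < n) (hl : l < n)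
    (h : pidx n k = pidx n l) : k = l := by
  unfold pidx at h; split_ifs at h <;> omega

private lemma pidx_surj {n m : ℕ} (hn : 1 ≤ n) (hm : m ≤ n - 1) :
    ∃ k, k < n ∧ pidx n k = m := by
  by_cases h : 2 * m + 1 < n
  · exact ⟨2 * m + 1, h, by unfold pidx; split_ifs <;> omega⟩
  · exact ⟨2 * (n - 1 - m), by omega, by unfold pidx; split_ifs <;> omega⟩

private lemma pidx_adj {n i j : ℕ} (hn : 3 ≤ n) (hi : i < n) (hj : j < n) :
    (i + 1 = j ∨ j + 1 = i) ↔
      (pidx n i ≠ pidx n j ∧ (pidx n i + pidx n j = 0 ∨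
        pidx n i + pidx n j = n - 2 ∨ pidx n i + pidx n j = n - 1)) := by
  unfold pidx; split_ifs <;> omega

private def glab (n : ℕ) (k : Fin n) : ℤ := (n : ℤ) - 1 + (pidx n k.val : ℤ)
/-- For `n ≥ 3`, the set `L = [n-1, 2n-2] ∪ {3n-4, 3n-3}` induces a path on `n` vertices
(formed by the labels in `[n-1, 2n-2]`) together with two isolated vertices `3n-4` and `3n-3`.
Consequently `sd(Pₙ) ≤ 2n-2`. -/
theorem stmt2 (n : ℕ) (hn : 3 ≤ n) :
    let L : Finset ℤ :=
      Finset.Icc ((n : ℤ) - 1) (2 * (n : ℤ) - 2) ∪ {3 * (n : ℤ) - 4, 3 * (n : ℤ) - 3}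
    Nonempty (SimpleGraph.pathGraph n ≃g
      (sumGraph L).induce {x : {y : ℤ // y ∈ L} | (x : ℤ) ∈ Finset.Icc ((n : ℤ) - 1) (2 * (n : ℤ) - 2)}) ∧
    (∀ a ∈ ({3 * (n : ℤ) - 4, 3 * (n : ℤ) - 3} : Finset ℤ), ∀ b ∈ L, b ≠ a → a + b ∉ L) ∧
    sumDiam (SimpleGraph.pathGraph n) ≤ 2 * n - 2 := by
  intro L
  have hmemL : ∀ x : ℤ, x ∈ L ↔
      (((n : ℤ) - 1 ≤ x ∧ x ≤ 2 * n - 2) ∨ x = 3 * n - 4 ∨ x = 3 * n - 3) := by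
    intro x
    simp only [L, Finset.mem_union, Finset.mem_Icc, Finset.mem_insert, Finset.mem_singleton]
  have hnn : 1 ≤ n := by omega
  have hple : ∀ k : Fin n, pidx n k.val ≤ n - 1 := fun k => pidx_le k.isLt
  have hgmem : ∀ k : Fin n, (n : ℤ) - 1 ≤ glab n k ∧ glab n k ≤ 2 * n - 2 := by
    intro k
    have := hple k
    unfold glab
    omega
  have hgL : ∀ k, glab n k ∈ L := fun k => (hmemL _).2 (Or.inl (hgmem k))
  have hginj : Function.Injective (glab n) := by
    intro u v huv
    unfold glab at huv
    have : pidx n u.val = pidx n v.val := by omega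
    exact Fin.ext (pidx_inj u.isLt v.isLt this)
  have hAdj : ∀ u v : Fin n, (SimpleGraph.pathGraph n).Adj u v ↔
      (glab n u ≠ glab n v ∧ glab n u + glab n v ∈ L) := by
    intro u v
    have hu := hple u
    have hv := hple v
    rw [SimpleGraph.pathGraph_adj, pidx_adj hn u.isLt v.isLt, hmemL]
    unfold glab
    omega
  have hgsurj : ∀ x : ℤ, (n : ℤ) - 1 ≤ x → x ≤ 2 * n - 2 → ∃ k : Fin n, glab n k = x := by
    intro x h1 h2
    obtain ⟨k, hk, hkm⟩ := pidx_surj (n := n) (m := (x - ((n : ℤ) - 1)).toNat) hnn (by omega)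
    refine ⟨⟨k, hk⟩, ?_⟩
    unfold glab
    simp only [hkm]
    omega
  have hlab : IsSumLabeling (SimpleGraph.pathGraph n) L := by
    refine ⟨glab n, hginj, hgL, hAdj, ?_⟩
    intro a haL har b hbL hba hab
    have ha' := (hmemL a).1 haL
    have hb' := (hmemL b).1 hbL
    have hab' := (hmemL (a + b)).1 hab
    have ha : a = 3 * n - 4 ∨ a = 3 * n - 3 := by
      rcases ha' with h | h | h
      · obtain ⟨k, hk⟩ := hgsurj a h.1 h.2
        exact absurd ⟨k, hk⟩ har
      · exact Or.inl h
      · exact Or.inr h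
    omega
  have hiso : ∀ a ∈ ({3 * (n : ℤ) - 4, 3 * (n : ℤ) - 3} : Finset ℤ),
      ∀ b ∈ L, b ≠ a → a + b ∉ L := by
    intro a ha b hb _ hab
    simp only [Finset.mem_insert, Finset.mem_singleton] at ha
    have hb' := (hmemL b).1 hb
    have hab' := (hmemL (a + b)).1 hab
    omega
  have hmemS : ∀ k : Fin n, (⟨glab n k, hgL k⟩ : {y : ℤ // y ∈ L}) ∈
      {x : {y : ℤ // y ∈ L} | (x : ℤ) ∈ Finset.Icc ((n : ℤ) - 1) (2 * (n : ℤ) - 2)} := by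
    intro k
    simpa [Finset.mem_Icc] using hgmem k
  refine ⟨?_, hiso, ?_⟩
  · let F : Fin n → ↑{x : {y : ℤ // y ∈ L} | (x : ℤ) ∈ Finset.Icc ((n : ℤ) - 1) (2 * (n : ℤ) - 2)} :=
      fun k => ⟨⟨glab n k, hgL k⟩, hmemS k⟩
    have hFbij : Function.Bijective F := by
      constructor
      · intro u v huv
        apply hginj
        exact Subtype.ext_iff.mp (Subtype.ext_iff.mp huv)
      · rintro ⟨⟨x, hxL⟩, hxS⟩
        simp only [Set.mem_setOf_eq, Finset.mem_Icc] at hxS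
        obtain ⟨k, hk⟩ := hgsurj x hxS.1 hxS.2
        refine ⟨k, ?_⟩
        simp only [F]
        exact Subtype.ext (Subtype.ext hk)
    refine ⟨⟨Equiv.ofBijective F hFbij, ?_⟩⟩
    intro a b
    show (sumGraph L).Adj ⟨glab n a, hgL a⟩ ⟨glab n b, hgL b⟩ ↔ _
    rw [sumGraph, SimpleGraph.fromRel_adj, hAdj a b]
    constructor
    · rintro ⟨hne, h | h⟩
      · exact ⟨fun h' => hne (Subtype.ext h'), h⟩
      · exact ⟨fun h' => hne (Subtype.ext h'), by rwa [add_comm]⟩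
    · rintro ⟨hne, h⟩
      exact ⟨fun h' => hne (congrArg Subtype.val h'), Or.inl h⟩
  · have h3L : (3 * (n : ℤ) - 3) ∈ L := (hmemL _).2 (Or.inr (Or.inr rfl))
    have hminL : ((n : ℤ) - 1) ∈ L := (hmemL _).2 (Or.inl ⟨le_refl _, by omega⟩)
    have hne : L.Nonempty := ⟨_, h3L⟩
    have hmax : L.max' hne = 3 * (n : ℤ) - 3 :=
      le_antisymm (Finset.max'_le _ _ _ (fun y hy => by have := (hmemL y).1 hy; omega))
        (Finset.le_max' _ _ h3L)
    have hmin : L.min' hne = (n : ℤ) - 1 :=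
      le_antisymm (Finset.min'_le _ _ hminL)
        (Finset.le_min' _ _ _ (fun y hy => by have := (hmemL y).1 hy; omega))
    apply Nat.sInf_le
    refine ⟨L, fun x hx => by have := (hmemL x).1 hx; omega, hlab, hne, ?_⟩
    rw [hmax, hmin]
    omega
end

section
/- Let G be a graph of order n with no isolated vertices, with maximum vertex degree Δ and minimum vertex degree δ. Then the sum-diameter of G satisfies sd(G) ≥ 2n - (Δ - δ) - 2. -/
section Aux

set_option linter.unusedVariables false

private lemma digits_inj : ∀ (N : ℕ) (c d : ℕ → ℕ), (∀ i, c i ≤ 3) → (∀ i, d i ≤ 3) →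
    (∑ i ∈ Finset.range N, c i * 4 ^ i) = (∑ i ∈ Finset.range N, d i * 4 ^ i) →
    ∀ i, i < N → c i = d i := by
  intro N
  induction N with
  | zero => intro c d _ _ _ i hi; omega
  | succ N ih =>
    intro c d hc hd hsum i hi
    rw [Finset.sum_range_succ', Finset.sum_range_succ'] at hsum
    have h4 : ∀ (c : ℕ → ℕ), (∑ i ∈ Finset.range N, c (i+1) * 4 ^ (i+1))
        = 4 * ∑ i ∈ Finset.range N, c (i+1) * 4 ^ i := by
      intro c
      rw [Finset.mul_sum]
      exact Finset.sum_congr rfl fun x _ => by ring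
    rw [h4 c, h4 d] at hsum
    simp only [pow_zero, mul_one] at hsum
    have hc0 := hc 0
    have hd0 := hd 0
    have key : c 0 = d 0 ∧ (∑ i ∈ Finset.range N, c (i+1) * 4 ^ i)
        = ∑ i ∈ Finset.range N, d (i+1) * 4 ^ i := by
      constructor <;> omega
    rcases i with _ | j
    · exact key.1
    · exact ih (fun i => c (i+1)) (fun i => d (i+1)) (fun i => hc _) (fun i => hd _) key.2 j (by omega)

private lemma bridge (N : ℕ) : ∀ (m : Multiset ℕ), (∀ a ∈ m, a < N) →
    (∑ i ∈ Finset.range N, m.count i * 4 ^ i) = (m.map (fun e => 4 ^ e)).sum := by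
  intro m
  induction m using Multiset.induction_on with
  | empty => intro _; simp
  | cons a s ih =>
    intro h
    have ha : a ∈ Finset.range N := Finset.mem_range.2 (h a (Multiset.mem_cons_self a s))
    rw [Multiset.map_cons, Multiset.sum_cons, ← ih (fun x hx => h x (Multiset.mem_cons_of_mem hx))]
    have step : ∀ i, (a ::ₘ s).count i * 4 ^ i
        = s.count i * 4 ^ i + (if i = a then 4 ^ i else 0) := by
      intro i
      rw [Multiset.count_cons]
      split_ifs <;> ring
    rw [Finset.sum_congr rfl (fun x _ => step x), Finset.sum_add_distrib,
      Finset.sum_ite_eq' (Finset.range N) a (fun i => 4 ^ i)]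
    simp [ha, add_comm]

private lemma pow4_multiset_inj (m n : Multiset ℕ) (hm : ∀ x, m.count x ≤ 3)
    (hn : ∀ x, n.count x ≤ 3)
    (h : (m.map (fun e => 4 ^ e)).sum = (n.map (fun e => 4 ^ e)).sum) : m = n := by
  set N := (m + n).sup + 1 with hN
  have hmN : ∀ a ∈ m, a < N :=
    fun a ha => Nat.lt_succ_of_le (Multiset.le_sup (Multiset.mem_add.mpr (Or.inl ha)))
  have hnN : ∀ a ∈ n, a < N :=
    fun a ha => Nat.lt_succ_of_le (Multiset.le_sup (Multiset.mem_add.mpr (Or.inr ha)))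
  have hsum : (∑ i ∈ Finset.range N, m.count i * 4 ^ i)
      = ∑ i ∈ Finset.range N, n.count i * 4 ^ i := by
    rw [bridge N m hmN, bridge N n hnN, h]
  have hc := digits_inj N (fun i => m.count i) (fun i => n.count i) hm hn hsum
  rw [Multiset.ext]
  intro x
  by_cases hx : x < N
  · exact hc x hx
  · rw [Multiset.count_eq_zero_of_notMem (fun hmem => hx (hmN x hmem)),
      Multiset.count_eq_zero_of_notMem (fun hmem => hx (hnN x hmem))]

private lemma cnt2 (i j : ℕ) : ∀ x, ({i, j} : Multiset ℕ).count x ≤ 3 := by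
  intro x
  simp only [Multiset.insert_eq_cons, Multiset.count_cons, Multiset.count_singleton]
  split_ifs <;> omega

private lemma cnt1 (i : ℕ) : ∀ x, ({i} : Multiset ℕ).count x ≤ 3 := by
  intro x
  simp only [Multiset.count_singleton]
  split_ifs <;> omega

private lemma cnt3 (i j k : ℕ) : ∀ x, ({i, j, k} : Multiset ℕ).count x ≤ 3 := by
  intro x
  simp only [Multiset.insert_eq_cons, Multiset.count_cons, Multiset.count_singleton]
  split_ifs <;> omega

private lemma cnt4 (i j k l : ℕ) (hij : i ≠ j) (hkl : k ≠ l) :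
    ∀ x, ({i, j, k, l} : Multiset ℕ).count x ≤ 3 := by
  intro x
  simp only [Multiset.insert_eq_cons, Multiset.count_cons, Multiset.count_singleton]
  split_ifs <;> omega

private lemma n1 (i j k : ℕ) : 4 ^ i + 4 ^ j ≠ (4 ^ k : ℕ) := by
  intro h
  have := pow4_multiset_inj {i, j} {k} (cnt2 i j) (cnt1 k) (by simpa using h)
  have := congrArg Multiset.card this
  simp at this

private lemma n2 (i j k l : ℕ) (hij : i ≠ j) (hkl : k ≠ l)
    (h : 4 ^ i + 4 ^ j = (4 ^ k + 4 ^ l : ℕ)) : (i = k ∧ j = l) ∨ (i = l ∧ j = k) := by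
  have hmn := pow4_multiset_inj {i, j} {k, l} (cnt2 i j) (cnt2 k l) (by simpa using h)
  have h1 := congrArg (fun s => Multiset.count i s) hmn
  have h2 := congrArg (fun s => Multiset.count j s) hmn
  simp only [Multiset.insert_eq_cons, Multiset.count_cons, Multiset.count_singleton] at h1 h2
  split_ifs at h1 h2 <;> omega

private lemma n3 (i j k m : ℕ) : 4 ^ i + 4 ^ j + 4 ^ k ≠ (4 ^ m : ℕ) := by
  intro h
  have := pow4_multiset_inj {i, j, k} {m} (cnt3 i j k) (cnt1 m)
    (by simp only [Multiset.insert_eq_cons, Multiset.map_cons, Multiset.map_singleton,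
      Multiset.sum_cons, Multiset.sum_singleton]; linarith)
  have := congrArg Multiset.card this
  simp at this

private lemma n4 (i j k m p : ℕ) : 4 ^ i + 4 ^ j + 4 ^ k ≠ (4 ^ m + 4 ^ p : ℕ) := by
  intro h
  have := pow4_multiset_inj {i, j, k} {m, p} (cnt3 i j k) (cnt2 m p)
    (by simp only [Multiset.insert_eq_cons, Multiset.map_cons, Multiset.map_singleton,
      Multiset.sum_cons, Multiset.sum_singleton]; linarith)
  have := congrArg Multiset.card this
  simp at this

private lemma n5 (i j k l m : ℕ) (hij : i ≠ j) (hkl : k ≠ l) :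
    4 ^ i + 4 ^ j + (4 ^ k + 4 ^ l) ≠ (4 ^ m : ℕ) := by
  intro h
  have := pow4_multiset_inj {i, j, k, l} {m} (cnt4 i j k l hij hkl) (cnt1 m)
    (by simp only [Multiset.insert_eq_cons, Multiset.map_cons, Multiset.map_singleton,
      Multiset.sum_cons, Multiset.sum_singleton]; linarith)
  have := congrArg Multiset.card this
  simp at this

private lemma n6 (i j k l m p : ℕ) (hij : i ≠ j) (hkl : k ≠ l) :
    4 ^ i + 4 ^ j + (4 ^ k + 4 ^ l) ≠ (4 ^ m + 4 ^ p : ℕ) := by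
  intro h
  have := pow4_multiset_inj {i, j, k, l} {m, p} (cnt4 i j k l hij hkl) (cnt2 m p)
    (by simp only [Multiset.insert_eq_cons, Multiset.map_cons, Multiset.map_singleton,
      Multiset.sum_cons, Multiset.sum_singleton]; linarith)
  have := congrArg Multiset.card this
  simp at this

private lemma exists_labeling {V : Type*} [Fintype V] (G : SimpleGraph V)
    [DecidableRel G.Adj] :
    ∃ L : Finset ℤ, (∀ x ∈ L, 0 < x) ∧ IsSumLabeling G L ∧ (Nonempty V → L.Nonempty) := by
  classical
  set e := Fintype.equivFin V with he
  set f : V → ℤ := fun v => ((4 ^ (e v : ℕ) : ℕ) : ℤ) with hf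
  have hidx : ∀ {u v : V}, ((e u : ℕ) = (e v : ℕ)) → u = v := by
    intro u v h
    exact e.injective (Fin.val_injective h)
  have hidx' : ∀ {u v : V}, u ≠ v → (e u : ℕ) ≠ (e v : ℕ) := by
    intro u v h hn
    exact h (hidx hn)
  have hfinj : Function.Injective f := by
    intro u v h
    have h' : (4 : ℕ) ^ (e u : ℕ) = 4 ^ (e v : ℕ) := by
      simp only [hf] at h
      exact_mod_cast h
    exact hidx (Nat.pow_right_injective (by norm_num) h')
  set L : Finset ℤ := (Finset.univ.image f) ∪
      ((Finset.univ.filter (fun p : V × V => G.Adj p.1 p.2)).image (fun p => f p.1 + f p.2))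
      with hL
  have hmemL : ∀ x, x ∈ L ↔ ((∃ v, f v = x) ∨ ∃ p : V × V, G.Adj p.1 p.2 ∧ f p.1 + f p.2 = x) := by
    intro x
    simp [hL]
  refine ⟨L, ?_, ⟨f, hfinj, ?_, ?_, ?_⟩, ?_⟩
  · intro x hx
    rcases (hmemL x).1 hx with ⟨v, rfl⟩ | ⟨p, -, rfl⟩
    · positivity
    · positivity
  · intro v
    exact (hmemL _).2 (Or.inl ⟨v, rfl⟩)
  · intro u v
    constructor
    · intro h
      exact ⟨fun hh => G.ne_of_adj h (hfinj hh), (hmemL _).2 (Or.inr ⟨(u, v), h, rfl⟩)⟩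
    · rintro ⟨hne, hsum⟩
      have huv : (e u : ℕ) ≠ (e v : ℕ) := hidx' (fun h => hne (congrArg f h))
      rcases (hmemL _).1 hsum with ⟨w, hw⟩ | ⟨p, hadjp, hp⟩
      · exfalso
        have : (4 : ℕ) ^ (e u : ℕ) + 4 ^ (e v : ℕ) = 4 ^ (e w : ℕ) := by
          simp only [hf] at hw
          exact_mod_cast hw.symm
        exact n1 _ _ _ this
      · have hp12 : (e p.1 : ℕ) ≠ (e p.2 : ℕ) := hidx' (G.ne_of_adj hadjp)
        have hnat : (4 : ℕ) ^ (e u : ℕ) + 4 ^ (e v : ℕ)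
            = 4 ^ (e p.1 : ℕ) + 4 ^ (e p.2 : ℕ) := by
          simp only [hf] at hp
          exact_mod_cast hp.symm
        rcases n2 _ _ _ _ huv hp12 hnat with ⟨h1, h2⟩ | ⟨h1, h2⟩
        · rw [hidx h1, hidx h2]; exact hadjp
        · rw [hidx h1, hidx h2]; exact hadjp.symm
  · intro a ha hnr b hb hba hab
    obtain ⟨p, hadjp, hp⟩ : ∃ p : V × V, G.Adj p.1 p.2 ∧ f p.1 + f p.2 = a := by
      rcases (hmemL a).1 ha with ⟨v, hv⟩ | h
      · exact absurd ⟨v, hv⟩ hnr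
      · exact h
    have hp12 : (e p.1 : ℕ) ≠ (e p.2 : ℕ) := hidx' (G.ne_of_adj hadjp)
    subst hp
    rcases (hmemL b).1 hb with ⟨w, hw⟩ | ⟨q, hadjq, hq⟩
    · subst hw
      rcases (hmemL _).1 hab with ⟨w', hw'⟩ | ⟨r, hadjr, hr⟩
      · have : (4:ℕ) ^ (e p.1 : ℕ) + 4 ^ (e p.2 : ℕ) + 4 ^ (e w : ℕ) = 4 ^ (e w' : ℕ) := by
          simp only [hf] at hw'
          exact_mod_cast hw'.symm
        exact n3 _ _ _ _ this
      · have : (4:ℕ) ^ (e p.1 : ℕ) + 4 ^ (e p.2 : ℕ) + 4 ^ (e w : ℕ)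
            = 4 ^ (e r.1 : ℕ) + 4 ^ (e r.2 : ℕ) := by
          simp only [hf] at hr
          exact_mod_cast hr.symm
        exact n4 _ _ _ _ _ this
    · subst hq
      have hq12 : (e q.1 : ℕ) ≠ (e q.2 : ℕ) := hidx' (G.ne_of_adj hadjq)
      rcases (hmemL _).1 hab with ⟨w', hw'⟩ | ⟨r, hadjr, hr⟩
      · have : (4:ℕ) ^ (e p.1 : ℕ) + 4 ^ (e p.2 : ℕ) + (4 ^ (e q.1 : ℕ) + 4 ^ (e q.2 : ℕ))
            = 4 ^ (e w' : ℕ) := by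
          simp only [hf] at hw'
          exact_mod_cast hw'.symm
        exact n5 _ _ _ _ _ hp12 hq12 this
      · have : (4:ℕ) ^ (e p.1 : ℕ) + 4 ^ (e p.2 : ℕ) + (4 ^ (e q.1 : ℕ) + 4 ^ (e q.2 : ℕ))
            = 4 ^ (e r.1 : ℕ) + 4 ^ (e r.2 : ℕ) := by
          simp only [hf] at hr
          exact_mod_cast hr.symm
        exact n6 _ _ _ _ _ _ hp12 hq12 this
  · intro hne
    obtain ⟨v⟩ := hne
    exact ⟨f v, (hmemL _).2 (Or.inl ⟨v, rfl⟩)⟩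

private lemma main_bound {V : Type*} [Fintype V] [Nonempty V] (G : SimpleGraph V)
    [DecidableRel G.Adj] (hiso : ∀ v : V, ∃ w : V, G.Adj v w)
    (L : Finset ℤ) (hpos : ∀ x ∈ L, 0 < x) (hlab : IsSumLabeling G L) (hLne : L.Nonempty) :
    2 * (Fintype.card V : ℤ) - ((G.maxDegree : ℤ) - (G.minDegree : ℤ)) - 2
      ≤ L.max' hLne - L.min' hLne := by
  classical
  obtain ⟨f, hinj, hmem, hadj, -⟩ := hlab
  set a := L.min' hLne with ha
  set b := L.max' hLne with hb
  obtain ⟨vmin, -, hvmin⟩ := Finset.exists_min_image Finset.univ f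
    ⟨Classical.arbitrary V, Finset.mem_univ _⟩
  obtain ⟨vmax, -, hvmax⟩ := Finset.exists_max_image Finset.univ f
    ⟨Classical.arbitrary V, Finset.mem_univ _⟩
  have hvmin' : ∀ w, f vmin ≤ f w := fun w => hvmin w (Finset.mem_univ w)
  have hvmax' : ∀ w, f w ≤ f vmax := fun w => hvmax w (Finset.mem_univ w)
  set A := Finset.univ.image f with hA
  set B := (G.neighborFinset vmax).image (fun w => f vmax + f w) with hB
  set D := Finset.univ.filter (fun w => w ≠ vmin ∧ ¬ G.Adj vmin w) with hD
  set C := D.image (fun w => f vmin + f w) with hC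
  have hposf : ∀ v, 0 < f v := fun v => hpos _ (hmem v)
  have hsumL : ∀ {u v : V}, G.Adj u v → f u + f v ∈ L := fun h => ((hadj _ _).1 h).2
  have hfb : ∀ v, f v ≤ b := fun v => Finset.le_max' L _ (hmem v)
  have haf : ∀ v, a ≤ f v := fun v => Finset.min'_le L _ (hmem v)
  have hab2 : f vmax + f vmin ≤ b := by
    obtain ⟨w0, hw0⟩ := hiso vmax
    have h1 := Finset.le_max' L _ (hsumL hw0)
    have h2 := hvmin' w0
    rw [← hb] at h1
    linarith
  have hsub : A ∪ B ∪ C ⊆ Finset.Icc a b := by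
    intro x hx
    simp only [Finset.mem_union] at hx
    rw [Finset.mem_Icc]
    rcases hx with (hx | hx) | hx
    · obtain ⟨v, -, rfl⟩ := Finset.mem_image.1 hx
      exact ⟨haf v, hfb v⟩
    · obtain ⟨w, hw, rfl⟩ := Finset.mem_image.1 hx
      have hx' : f vmax + f w ∈ L := hsumL ((SimpleGraph.mem_neighborFinset _ _ _).1 hw)
      exact ⟨Finset.min'_le L _ hx', Finset.le_max' L _ hx'⟩
    · obtain ⟨w, hw, rfl⟩ := Finset.mem_image.1 hx
      constructor
      · have h1 := haf w
        have h2 := hposf vmin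
        linarith
      · have h1 := hvmax' w
        linarith
  have hdAB : Disjoint A B := by
    rw [Finset.disjoint_left]
    rintro x hxA hxB
    obtain ⟨v, -, rfl⟩ := Finset.mem_image.1 hxA
    obtain ⟨w, hw, heq⟩ := Finset.mem_image.1 hxB
    have h1 := hposf w
    have h2 := hvmax' v
    linarith
  have hCnotL : ∀ x ∈ C, x ∉ L := by
    intro x hx hxL
    obtain ⟨w, hw, rfl⟩ := Finset.mem_image.1 hx
    simp only [hD, Finset.mem_filter] at hw
    exact hw.2.2 ((hadj vmin w).2 ⟨fun h => hw.2.1 ((hinj h).symm), hxL⟩)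
  have hdABC : Disjoint (A ∪ B) C := by
    rw [Finset.disjoint_right]
    intro x hxC hxAB
    apply hCnotL x hxC
    rcases Finset.mem_union.1 hxAB with hx | hx
    · obtain ⟨v, -, rfl⟩ := Finset.mem_image.1 hx
      exact hmem v
    · obtain ⟨w, hw, rfl⟩ := Finset.mem_image.1 hx
      exact hsumL ((SimpleGraph.mem_neighborFinset _ _ _).1 hw)
  have hcardA : A.card = Fintype.card V := by
    rw [hA, Finset.card_image_of_injective _ hinj, Finset.card_univ]
  have haddinj : ∀ c : ℤ, Function.Injective (fun w => c + f w) :=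
    fun c x y h => hinj (by dsimp at h; linarith)
  have hcardB : B.card = G.degree vmax := by
    rw [hB, Finset.card_image_of_injective _ (haddinj _),
      SimpleGraph.card_neighborFinset_eq_degree]
  have hDeq : D = (insert vmin (G.neighborFinset vmin))ᶜ := by
    ext w
    simp only [hD, Finset.mem_filter, Finset.mem_univ, true_and, Finset.mem_compl,
      Finset.mem_insert, SimpleGraph.mem_neighborFinset]
    tauto
  have hvnotnbr : vmin ∉ G.neighborFinset vmin := by
    simp [SimpleGraph.mem_neighborFinset]
  have hcardD : D.card = Fintype.card V - (G.degree vmin + 1) := by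
    rw [hDeq, Finset.card_compl, Finset.card_insert_of_notMem hvnotnbr,
      SimpleGraph.card_neighborFinset_eq_degree]
  have hcardC : C.card = Fintype.card V - (G.degree vmin + 1) := by
    rw [hC, Finset.card_image_of_injective _ (haddinj _), hcardD]
  have hdeglt : G.degree vmin + 1 ≤ Fintype.card V := G.degree_lt_card_verts vmin
  have hcard : (A ∪ B ∪ C).card
      = Fintype.card V + G.degree vmax + (Fintype.card V - (G.degree vmin + 1)) := by
    rw [Finset.card_union_of_disjoint hdABC, Finset.card_union_of_disjoint hdAB,
      hcardA, hcardB, hcardC]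
  have hle := Finset.card_le_card hsub
  rw [hcard, Int.card_Icc] at hle
  have hable : a ≤ b := Finset.min'_le L _ (L.max'_mem hLne)
  have hle2 : ((Fintype.card V + G.degree vmax + (Fintype.card V - (G.degree vmin + 1)) : ℕ) : ℤ)
      ≤ ((b + 1 - a).toNat : ℤ) := Nat.cast_le.2 hle
  rw [Int.toNat_of_nonneg (by linarith)] at hle2
  rw [Nat.cast_add, Nat.cast_add, Nat.cast_sub hdeglt] at hle2
  push_cast at hle2
  have hdmax : (G.minDegree : ℤ) ≤ (G.degree vmax : ℤ) := by
    exact_mod_cast G.minDegree_le_degree vmax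
  have hdmin : (G.degree vmin : ℤ) ≤ (G.maxDegree : ℤ) := by
    exact_mod_cast G.degree_le_maxDegree vmin
  linarith

end Aux

/-- For a graph `G` of order `n` with no isolated vertices, maximum degree `Δ` and minimum
degree `δ`, one has `sd(G) ≥ 2n - (Δ - δ) - 2`. -/
theorem stmt3 {V : Type*} [Fintype V] (G : SimpleGraph V) [DecidableRel G.Adj]
    (hiso : ∀ v : V, ∃ w : V, G.Adj v w) :
    2 * (Fintype.card V : ℤ) - ((G.maxDegree : ℤ) - (G.minDegree : ℤ)) - 2 ≤ (sumDiam G : ℤ) := by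
  classical
  rcases isEmpty_or_nonempty V with hV | hV
  · have hcard : Fintype.card V = 0 := Fintype.card_eq_zero
    have hmax : G.maxDegree = 0 := by
      simp only [SimpleGraph.maxDegree, Finset.univ_eq_empty, Finset.image_empty]
      rfl
    have hmin : G.minDegree = 0 := by
      simp only [SimpleGraph.minDegree, Finset.univ_eq_empty, Finset.image_empty]
      rfl
    rw [hcard, hmax, hmin]
    have : (0 : ℤ) ≤ (sumDiam G : ℤ) := Int.natCast_nonneg _
    norm_num
  · obtain ⟨L0, hpos0, hlab0, hne0⟩ := exists_labeling G
    have hL0ne := hne0 hV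
    have hSne : {d | ∃ L : Finset ℤ, (∀ x ∈ L, 0 < x) ∧ IsSumLabeling G L ∧
        ∃ hL : L.Nonempty, (L.max' hL - L.min' hL).toNat = d}.Nonempty :=
      ⟨(L0.max' hL0ne - L0.min' hL0ne).toNat, L0, hpos0, hlab0, hL0ne, rfl⟩
    have hmem := Nat.sInf_mem hSne
    obtain ⟨L, hpos, hlab, hLne, hd⟩ := hmem
    have hcast : ((sumDiam G : ℕ) : ℤ) = L.max' hLne - L.min' hLne := by
      rw [sumDiam, ← hd]
      exact Int.toNat_of_nonneg (by
        have : L.min' hLne ≤ L.max' hLne := Finset.min'_le L _ (L.max'_mem hLne)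
        linarith)
    rw [hcast]
    exact main_bound G hiso L hpos hlab hLne
end

section
/- Let G be a graph of order n with no isolated vertices and maximum vertex degree Δ. Then the integral sum-diameter of G satisfies isd(G) ≥ 2n - Δ - 3. -/
namespace Aux4

/-! ### Arithmetic lemmas about powers of 3 -/

lemma p3mono : StrictMono (fun i : ℕ => (3:ℤ) ^ i) :=
  fun _ _ h => pow_lt_pow_right₀ (by norm_num) h

lemma p3le {i j : ℕ} (h : i ≤ j) : (3:ℤ)^i ≤ 3^j := p3mono.le_iff_le.mpr h

lemma p3pos (i : ℕ) : (0:ℤ) < 3^i := pow_pos (by norm_num) i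

lemma p3odd (i : ℕ) : Odd ((3:ℤ)^i) := Odd.pow ⟨1, by norm_num⟩

lemma lemA {i j k : ℕ} : (3:ℤ)^i + 3^j ≠ 3^k := by
  intro h
  have : Even ((3:ℤ)^i + 3^j) := (p3odd i).add_odd (p3odd j)
  rw [h] at this
  exact (Int.not_odd_iff_even.mpr this) (p3odd k)

lemma lemD {i j k l p : ℕ} : (3:ℤ)^i + 3^j + (3^k + 3^l) ≠ 3^p := by
  intro h
  have : Even ((3:ℤ)^i + 3^j + (3^k + 3^l)) :=
    ((p3odd i).add_odd (p3odd j)).add ((p3odd k).add_odd (p3odd l))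
  rw [h] at this
  exact (Int.not_odd_iff_even.mpr this) (p3odd p)

lemma lemF {i j k p q : ℕ} : (3:ℤ)^i + 3^j + 3^k ≠ 3^p + 3^q := by
  intro h
  have h1 : Odd ((3:ℤ)^i + 3^j + 3^k) := ((p3odd i).add_odd (p3odd j)).add_odd (p3odd k)
  have h2 : Even ((3:ℤ)^p + 3^q) := (p3odd p).add_odd (p3odd q)
  rw [h] at h1
  exact (Int.not_odd_iff_even.mpr h2) h1

lemma lemB' {i j k l : ℕ} (hij : i < j) (hkl : k < l)
    (h : (3:ℤ)^i + 3^j = 3^k + 3^l) : i = k ∧ j = l := by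
  have hjl : j = l := by
    rcases lt_trichotomy j l with hc | hc | hc
    · exfalso
      have f1 : (3:ℤ)^i ≤ 3^j := p3le hij.le
      have f2 : (3:ℤ)^(j+1) ≤ 3^l := p3le hc
      have f3 : (3:ℤ)^(j+1) = 3 * 3^j := by rw [pow_succ]; ring
      have f4 : (0:ℤ) < 3^k := p3pos k
      have f5 : (0:ℤ) < 3^j := p3pos j
      linarith
    · exact hc
    · exfalso
      have f1 : (3:ℤ)^k ≤ 3^l := p3le hkl.le
      have f2 : (3:ℤ)^(l+1) ≤ 3^j := p3le hc
      have f3 : (3:ℤ)^(l+1) = 3 * 3^l := by rw [pow_succ]; ring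
      have f4 : (0:ℤ) < 3^i := p3pos i
      have f5 : (0:ℤ) < 3^l := p3pos l
      linarith
  subst hjl
  have : (3:ℤ)^i = 3^k := by linarith
  exact ⟨p3mono.injective this, rfl⟩

lemma lemB {i j k l : ℕ} (hij : i ≠ j) (hkl : k ≠ l)
    (h : (3:ℤ)^i + 3^j = 3^k + 3^l) : (i = k ∧ j = l) ∨ (i = l ∧ j = k) := by
  rcases hij.lt_or_gt with h1 | h1 <;> rcases hkl.lt_or_gt with h2 | h2
  · exact Or.inl (lemB' h1 h2 h)
  · have := lemB' h1 h2 (by linarith)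
    exact Or.inr ⟨this.1, this.2⟩
  · have := lemB' h1 h2 (by linarith)
    exact Or.inr ⟨this.2, this.1⟩
  · have := lemB' h1 h2 (by linarith)
    exact Or.inl ⟨this.2, this.1⟩

lemma lemC {i j k p : ℕ} (hij : i ≠ j) : (3:ℤ)^i + 3^j + 3^k ≠ 3^p := by
  intro h
  set mx := max (max i j) k with hmx
  have hi : i ≤ mx := le_trans (le_max_left i j) (le_max_left _ _)
  have hj : j ≤ mx := le_trans (le_max_right i j) (le_max_left _ _)
  have hk : k ≤ mx := le_max_right _ _
  have hup : (3:ℤ)^i + 3^j + 3^k < 3^(mx+1) := by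
    have h3 : (3:ℤ)^(mx+1) = 3 * 3^mx := by rw [pow_succ]; ring
    have hks : (3:ℤ)^k ≤ 3^mx := p3le hk
    have hpair : (3:ℤ)^i + 3^j < 2 * 3^mx := by
      rcases eq_or_lt_of_le hi with he | hlt
      · have : j < mx := lt_of_le_of_ne hj (by rw [← he]; exact hij.symm)
        have := p3mono this
        have hie : (3:ℤ)^i ≤ 3^mx := p3le hi
        simp only at this
        linarith
      · have := p3mono hlt
        have hje : (3:ℤ)^j ≤ 3^mx := p3le hj
        simp only at this
        linarith
    linarith
  have hlow : (3:ℤ)^mx < 3^i + 3^j + 3^k := by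
    have h1 := p3pos i; have h2 := p3pos j; have h3 := p3pos k
    rcases max_cases (max i j) k with ⟨he, _⟩ | ⟨he, _⟩
    · rcases max_cases i j with ⟨he2, _⟩ | ⟨he2, _⟩
      · rw [← hmx] at he; rw [he, he2]; linarith
      · rw [← hmx] at he; rw [he, he2]; linarith
    · rw [← hmx] at he; rw [he]; linarith
  rw [h] at hup hlow
  have hpm : mx < p := p3mono.lt_iff_lt.mp hlow
  have : (3:ℤ)^(mx+1) ≤ 3^p := p3le hpm
  linarith

lemma pair_bound {i j M : ℕ} (hij : i ≠ j) (hi : i ≤ M) (hj : j ≤ M) :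
    3 * ((3:ℤ)^i + 3^j) ≤ 4 * 3^M := by
  rcases hij.lt_or_gt with h | h
  · have h1 : i + 1 ≤ M := h.trans_le hj
    have h2 : (3:ℤ)^(i+1) ≤ 3^M := p3le h1
    have h3 : (3:ℤ)^(i+1) = 3 * 3^i := by rw [pow_succ]; ring
    have h4 : (3:ℤ)^j ≤ 3^M := p3le hj
    linarith
  · have h1 : j + 1 ≤ M := h.trans_le hi
    have h2 : (3:ℤ)^(j+1) ≤ 3^M := p3le h1
    have h3 : (3:ℤ)^(j+1) = 3 * 3^j := by rw [pow_succ]; ring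
    have h4 : (3:ℤ)^i ≤ 3^M := p3le hi
    linarith

lemma lemE {i j k l p q : ℕ} (hij : i ≠ j) (hkl : k ≠ l) :
    (3:ℤ)^i + 3^j + (3^k + 3^l) ≠ 3^p + 3^q := by
  intro h
  set mx := max (max i j) (max k l) with hmx
  have hi : i ≤ mx := le_trans (le_max_left i j) (le_max_left _ _)
  have hj : j ≤ mx := le_trans (le_max_right i j) (le_max_left _ _)
  have hk : k ≤ mx := le_trans (le_max_left k l) (le_max_right _ _)
  have hl : l ≤ mx := le_trans (le_max_right k l) (le_max_right _ _)
  have hub : 3 * ((3:ℤ)^i + 3^j + (3^k + 3^l)) ≤ 8 * 3^mx := by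
    have := pair_bound hij hi hj
    have := pair_bound hkl hk hl
    linarith
  have hlb : (3:ℤ)^mx < 3^i + 3^j + (3^k + 3^l) := by
    have p1 := p3pos i; have p2 := p3pos j; have p3 := p3pos k; have p4 := p3pos l
    have : (3:ℤ)^mx = 3^i ∨ (3:ℤ)^mx = 3^j ∨ (3:ℤ)^mx = 3^k ∨ (3:ℤ)^mx = 3^l := by
      rcases max_cases (max i j) (max k l) with ⟨he, _⟩ | ⟨he, _⟩ <;>
        [rcases max_cases i j with ⟨he2, _⟩ | ⟨he2, _⟩;
         rcases max_cases k l with ⟨he2, _⟩ | ⟨he2, _⟩]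
      · left; rw [← hmx] at he; rw [he, he2]
      · right; left; rw [← hmx] at he; rw [he, he2]
      · right; right; left; rw [← hmx] at he; rw [he, he2]
      · right; right; right; rw [← hmx] at he; rw [he, he2]
    rcases this with he | he | he | he <;> rw [he] <;> linarith
  have hq' : max p q = mx := by
    by_contra hne
    rcases Nat.lt_or_ge (max p q) mx with hc | hc
    · have h1 : (3:ℤ)^p ≤ 3^(max p q) := p3le (le_max_left _ _)
      have h2 : (3:ℤ)^q ≤ 3^(max p q) := p3le (le_max_right _ _)
      have h3 : (3:ℤ)^(max p q + 1) ≤ 3^mx := p3le hc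
      have h4 : (3:ℤ)^(max p q + 1) = 3 * 3^(max p q) := by rw [pow_succ]; ring
      have h5 := p3pos (max p q)
      linarith
    · have hc' : mx < max p q := lt_of_le_of_ne hc (fun hh => hne hh.symm)
      have h3 : (3:ℤ)^(mx + 1) ≤ 3^(max p q) := p3le hc'
      have h4 : (3:ℤ)^(mx + 1) = 3 * 3^mx := by rw [pow_succ]; ring
      have h5 : (3:ℤ)^(max p q) ≤ 3^p + 3^q := by
        rcases max_cases p q with ⟨he, _⟩ | ⟨he, _⟩ <;> rw [he] <;>
          [linarith [p3pos q]; linarith [p3pos p]]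
      have h6 := p3pos mx
      linarith
  have hpq' : (3:ℤ)^p + 3^q = 3^(max p q) + 3^(min p q) := by
    rcases max_cases p q with ⟨h1, h2⟩ | ⟨h1, h2⟩
    · rw [h1, min_eq_right h2]
    · rw [h1, min_eq_left (le_of_lt h2)]; ring
  have hidx : mx = i ∨ mx = j ∨ mx = k ∨ mx = l := by
    rcases max_cases (max i j) (max k l) with ⟨he, _⟩ | ⟨he, _⟩ <;>
      [rcases max_cases i j with ⟨he2, _⟩ | ⟨he2, _⟩;
       rcases max_cases k l with ⟨he2, _⟩ | ⟨he2, _⟩]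
    · left; rw [← hmx] at he; rw [he, he2]
    · right; left; rw [← hmx] at he; rw [he, he2]
    · right; right; left; rw [← hmx] at he; rw [he, he2]
    · right; right; right; rw [← hmx] at he; rw [he, he2]
  rw [hpq', hq'] at h
  rcases hidx with he | he | he | he
  · rw [he] at h
    exact lemC hkl (p := min p q) (i := k) (j := l) (k := j) (by linarith)
  · rw [he] at h
    exact lemC hkl (p := min p q) (i := k) (j := l) (k := i) (by linarith)
  · rw [he] at h
    exact lemC hij (p := min p q) (k := l) (by linarith)
  · rw [he] at h
    exact lemC hij (p := min p q) (k := k) (by linarith)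

/-! ### Existence of a sum labeling -/

lemma exists_labeling {V : Type*} [Fintype V] (G : SimpleGraph V) [DecidableRel G.Adj]
    (hV : Nonempty V) : ∃ L : Finset ℤ, IsSumLabeling G L ∧ L.Nonempty := by
  classical
  set e := Fintype.equivFin V with he
  set f : V → ℤ := fun v => (3:ℤ) ^ ((e v : ℕ)) with hf
  have hfinj : Function.Injective f := by
    intro u v h
    exact e.injective (Fin.ext (p3mono.injective h))
  have hidx : ∀ {u v : V}, f u ≠ f v → ((e u : ℕ)) ≠ ((e v : ℕ)) := by
    intro u v h hh
    exact h (by simp only [hf]; rw [hh])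
  set S : Finset ℤ := Finset.univ.image f with hS
  set E : Finset ℤ := Finset.image (fun p : V × V => f p.1 + f p.2)
      (Finset.univ.filter fun p : V × V => G.Adj p.1 p.2) with hE
  have hSmem : ∀ x, x ∈ S ↔ ∃ v, f v = x := by
    intro x
    simp [hS]
  have hEmem : ∀ x, x ∈ E ↔ ∃ p : V × V, G.Adj p.1 p.2 ∧ f p.1 + f p.2 = x := by
    intro x
    simp [hE]
  refine ⟨S ∪ E, ⟨f, hfinj, ?_, ?_, ?_⟩, ?_⟩
  · intro v
    exact Finset.mem_union_left _ ((hSmem (f v)).mpr ⟨v, rfl⟩)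
  · intro u v
    constructor
    · intro hadj
      have hne : u ≠ v := G.ne_of_adj hadj
      refine ⟨fun hh => hne (hfinj hh), Finset.mem_union_right _ ?_⟩
      exact (hEmem _).mpr ⟨(u, v), hadj, rfl⟩
    · rintro ⟨hne, hsum⟩
      rcases Finset.mem_union.mp hsum with hs | hs
      · obtain ⟨w, hw⟩ := (hSmem _).mp hs
        exact absurd hw.symm (lemA (i := e u) (j := e v) (k := e w))
      · obtain ⟨p, hp, hpe⟩ := (hEmem _).mp hs
        have hp12 : f p.1 ≠ f p.2 := fun hh => (G.ne_of_adj hp) (hfinj hh)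
        rcases lemB (hidx hne) (hidx hp12) hpe.symm with ⟨h1, h2⟩ | ⟨h1, h2⟩
        · have hu1 : u = p.1 := e.injective (Fin.ext h1)
          have hv2 : v = p.2 := e.injective (Fin.ext h2)
          rw [hu1, hv2]; exact hp
        · have hu2 : u = p.2 := e.injective (Fin.ext h1)
          have hv1 : v = p.1 := e.injective (Fin.ext h2)
          rw [hu2, hv1]; exact hp.symm
  · intro a ha hanr b hb hba hmem
    have haE : a ∈ E := by
      rcases Finset.mem_union.mp ha with hs | hs
      · obtain ⟨w, hw⟩ := (hSmem _).mp hs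
        exact absurd ⟨w, hw⟩ hanr
      · exact hs
    obtain ⟨p, hp, hpe⟩ := (hEmem _).mp haE
    have hp12 : (e p.1 : ℕ) ≠ (e p.2 : ℕ) :=
      hidx (fun hh => (G.ne_of_adj hp) (hfinj hh))
    have hpe' : (3:ℤ)^(e p.1 : ℕ) + 3^(e p.2 : ℕ) = a := hpe
    rcases Finset.mem_union.mp hb with hbs | hbe
    · obtain ⟨w, hw⟩ := (hSmem _).mp hbs
      have hw' : (3:ℤ)^(e w : ℕ) = b := hw
      rcases Finset.mem_union.mp hmem with hm | hm
      · obtain ⟨z, hz⟩ := (hSmem _).mp hm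
        have hz' : (3:ℤ)^(e z : ℕ) = a + b := hz
        exact lemC hp12 (k := e w) (p := e z) (by rw [hpe', hw']; exact hz'.symm)
      · obtain ⟨q, hq, hqe⟩ := (hEmem _).mp hm
        have hqe' : (3:ℤ)^(e q.1 : ℕ) + 3^(e q.2 : ℕ) = a + b := hqe
        exact lemF (i := e p.1) (j := e p.2) (k := e w)
          (p := e q.1) (q := e q.2) (by rw [hpe', hw']; exact hqe'.symm)
    · obtain ⟨q, hq, hqe⟩ := (hEmem _).mp hbe
      have hq12 : (e q.1 : ℕ) ≠ (e q.2 : ℕ) :=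
        hidx (fun hh => (G.ne_of_adj hq) (hfinj hh))
      have hqe' : (3:ℤ)^(e q.1 : ℕ) + 3^(e q.2 : ℕ) = b := hqe
      rcases Finset.mem_union.mp hmem with hm | hm
      · obtain ⟨z, hz⟩ := (hSmem _).mp hm
        have hz' : (3:ℤ)^(e z : ℕ) = a + b := hz
        exact lemD (i := e p.1) (j := e p.2) (k := e q.1) (l := e q.2) (p := e z)
          (by rw [hpe', hqe']; exact hz'.symm)
      · obtain ⟨r, hr, hre⟩ := (hEmem _).mp hm
        have hre' : (3:ℤ)^(e r.1 : ℕ) + 3^(e r.2 : ℕ) = a + b := hre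
        exact lemE hp12 hq12 (p := e r.1) (q := e r.2)
          (by rw [hpe', hqe']; exact hre'.symm)
  · obtain ⟨v⟩ := hV
    exact ⟨f v, Finset.mem_union_left _ ((hSmem (f v)).mpr ⟨v, rfl⟩)⟩

lemma degBound {V : Type*} [Fintype V] (G : SimpleGraph V) [DecidableRel G.Adj]
    {L : Finset ℤ} {f : V → ℤ}
    (hadj : ∀ u v : V, G.Adj u v ↔ (f u ≠ f v ∧ f u + f v ∈ L)) (w : V) :
    ((((Finset.univ.image f).erase (f w)).filter (fun u => u + f w ∈ L)).card)
      ≤ G.maxDegree := by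
  classical
  have hsub : ((Finset.univ.image f).erase (f w)).filter (fun u => u + f w ∈ L)
      ⊆ (G.neighborFinset w).image f := by
    intro u hu
    rw [Finset.mem_filter, Finset.mem_erase] at hu
    obtain ⟨⟨hne, hmem⟩, hsum⟩ := hu
    rw [Finset.mem_image] at hmem ⊢
    obtain ⟨v, _, hv⟩ := hmem
    refine ⟨v, ?_, hv⟩
    rw [SimpleGraph.mem_neighborFinset, hadj]
    constructor
    · rw [hv]; exact fun hh => hne hh.symm
    · rw [hv, add_comm]; exact hsum
  calc _ ≤ ((G.neighborFinset w).image f).card := Finset.card_le_card hsub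
    _ ≤ (G.neighborFinset w).card := Finset.card_image_le
    _ = G.degree w := rfl
    _ ≤ G.maxDegree := G.degree_le_maxDegree w

lemma mixCase {V : Type*} [Fintype V] (G : SimpleGraph V) [DecidableRel G.Adj]
    {L : Finset ℤ} (hL : L.Nonempty) {f : V → ℤ} (hinj : Function.Injective f)
    (hmem : ∀ v, f v ∈ L)
    (hadj : ∀ u v : V, G.Adj u v ↔ (f u ≠ f v ∧ f u + f v ∈ L))
    {a b : ℤ} (wa : V) (hwa : f wa = a) (hbS : ∃ v, f v = b)
    (ha0 : a < 0) (hb0 : 0 < b)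
    (hmax : ∀ v : V, f v < 0 → f v ≤ a) (hmin : ∀ v : V, 0 < f v → b ≤ f v)
    (hno0 : ∀ v : V, f v ≠ 0) (hab : -a ≤ b) :
    2 * (Fintype.card V : ℤ) - G.maxDegree - 3 ≤ L.max' hL - L.min' hL := by
  classical
  set m := L.min' hL with hm
  set M := L.max' hL with hM
  set S : Finset ℤ := Finset.univ.image f with hS
  have hSL : S ⊆ L := by
    intro x hx
    rw [hS, Finset.mem_image] at hx
    obtain ⟨v, _, hv⟩ := hx
    rw [← hv]; exact hmem v
  have hcardS : S.card = Fintype.card V := by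
    rw [hS, Finset.card_image_of_injective _ hinj, Finset.card_univ]
  have hlow : ∀ x ∈ L, m ≤ x := fun x hx => L.min'_le x hx
  have hup : ∀ x ∈ L, x ≤ M := fun x hx => L.le_max' x hx
  have haS : a ∈ S := by
    rw [hS, Finset.mem_image]; exact ⟨wa, Finset.mem_univ _, hwa⟩
  have hma : m ≤ a := hlow a (hSL haS)
  obtain ⟨vb, hvb⟩ := hbS
  have hbS' : b ∈ S := by
    rw [hS, Finset.mem_image]; exact ⟨vb, Finset.mem_univ _, hvb⟩
  have hbM : b ≤ M := hup b (hSL hbS')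
  have hmM : m ≤ M := le_trans hma (le_trans (le_of_lt ha0) (le_trans hb0.le hbM))
  -- the P / NP split
  set P := (S.erase a).filter (fun u => u + a ∈ L) with hP
  set NP := (S.erase a).filter (fun u => ¬ (u + a ∈ L)) with hNP
  have hPNP : P.card + NP.card = (S.erase a).card :=
    Finset.card_filter_add_card_filter_not _
  have herase : (S.erase a).card + 1 = S.card := Finset.card_erase_add_one haS
  have hPdeg : P.card ≤ G.maxDegree := by
    have := degBound G hadj wa
    rw [hwa] at this
    exact this
  -- gap sets
  set G1 := (Finset.Icc m a) \ L with hG1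
  set G2 := (Finset.Ioo a b) \ L with hG2
  set G3 := (Finset.Icc b M) \ L with hG3
  -- NP injection bound
  have hNPbound : NP.card ≤ (Finset.Ico (m+a) m).card + G1.card
      + (Finset.Ico (b+a) b).card + G3.card := by
    have hmap : ∀ u ∈ NP, u + a ∈ ((Finset.Ico (m+a) m) ∪ G1) ∪ ((Finset.Ico (b+a) b) ∪ G3) := by
      intro u hu
      rw [hNP, Finset.mem_filter, Finset.mem_erase] at hu
      obtain ⟨⟨hne, huS⟩, hnl⟩ := hu
      obtain ⟨v, _, hv⟩ := Finset.mem_image.mp huS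
      have huL : u ∈ L := hSL huS
      have hum : m ≤ u := hlow u huL
      have huM : u ≤ M := hup u huL
      rcases lt_trichotomy u 0 with hu0 | hu0 | hu0
      · -- u negative
        have hua : u ≤ a := by rw [← hv] at hu0 ⊢; exact hmax v hu0
        rcases lt_or_ge (u + a) m with hc | hc
        · refine Finset.mem_union_left _ (Finset.mem_union_left _ ?_)
          rw [Finset.mem_Ico]
          exact ⟨by linarith, hc⟩
        · refine Finset.mem_union_left _ (Finset.mem_union_right _ ?_)
          rw [hG1, Finset.mem_sdiff, Finset.mem_Icc]
          exact ⟨⟨hc, by linarith⟩, hnl⟩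
      · exact absurd (hv.trans hu0) (hno0 v)
      · -- u positive
        have hub : b ≤ u := by rw [← hv] at hu0 ⊢; exact hmin v hu0
        rcases lt_or_ge (u + a) b with hc | hc
        · refine Finset.mem_union_right _ (Finset.mem_union_left _ ?_)
          rw [Finset.mem_Ico]
          exact ⟨by linarith, hc⟩
        · refine Finset.mem_union_right _ (Finset.mem_union_right _ ?_)
          rw [hG3, Finset.mem_sdiff, Finset.mem_Icc]
          exact ⟨⟨hc, by linarith⟩, hnl⟩
    have hinj2 : Set.InjOn (fun u => u + a) NP := fun x _ y _ h => by
      simpa using h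
    calc NP.card ≤ (((Finset.Ico (m+a) m) ∪ G1) ∪ ((Finset.Ico (b+a) b) ∪ G3)).card :=
          Finset.card_le_card_of_injOn _ hmap hinj2
      _ ≤ ((Finset.Ico (m+a) m) ∪ G1).card + ((Finset.Ico (b+a) b) ∪ G3).card :=
          Finset.card_union_le _ _
      _ ≤ ((Finset.Ico (m+a) m).card + G1.card) + ((Finset.Ico (b+a) b).card + G3.card) :=
          add_le_add (Finset.card_union_le _ _) (Finset.card_union_le _ _)
      _ = _ := by ring
  -- gap decomposition
  have hGdecomp : G1.card + G2.card + G3.card ≤ ((Finset.Icc m M) \ L).card := by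
    have hsub : (G1 ∪ G2) ∪ G3 ⊆ (Finset.Icc m M) \ L := by
      intro x hx
      rw [Finset.mem_sdiff, Finset.mem_Icc]
      rcases Finset.mem_union.mp hx with hx' | hx'
      · rcases Finset.mem_union.mp hx' with hx'' | hx''
        · rw [hG1, Finset.mem_sdiff, Finset.mem_Icc] at hx''
          exact ⟨⟨hx''.1.1, by linarith [hx''.1.2, hbM]⟩, hx''.2⟩
        · rw [hG2, Finset.mem_sdiff, Finset.mem_Ioo] at hx''
          exact ⟨⟨by linarith [hx''.1.1], by linarith [hx''.1.2]⟩, hx''.2⟩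
      · rw [hG3, Finset.mem_sdiff, Finset.mem_Icc] at hx'
        exact ⟨⟨by linarith [hx'.1.1], hx'.1.2⟩, hx'.2⟩
    have hd12 : Disjoint G1 G2 := by
      rw [Finset.disjoint_left]
      intro x hx1 hx2
      rw [hG1, Finset.mem_sdiff, Finset.mem_Icc] at hx1
      rw [hG2, Finset.mem_sdiff, Finset.mem_Ioo] at hx2
      linarith [hx1.1.2, hx2.1.1]
    have hd123 : Disjoint (G1 ∪ G2) G3 := by
      rw [Finset.disjoint_left]
      intro x hx1 hx3
      rw [hG3, Finset.mem_sdiff, Finset.mem_Icc] at hx3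
      rcases Finset.mem_union.mp hx1 with hx' | hx'
      · rw [hG1, Finset.mem_sdiff, Finset.mem_Icc] at hx'
        linarith [hx'.1.2, hx3.1.1]
      · rw [hG2, Finset.mem_sdiff, Finset.mem_Ioo] at hx'
        linarith [hx'.1.2, hx3.1.1]
    calc G1.card + G2.card + G3.card = ((G1 ∪ G2) ∪ G3).card := by
          rw [Finset.card_union_of_disjoint hd123, Finset.card_union_of_disjoint hd12]
      _ ≤ _ := Finset.card_le_card hsub
  -- mid-gap lower bound
  have hmid : (Finset.Ioo a b).card ≤ G2.card + (L \ S).card := by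
    have hsub : Finset.Ioo a b ⊆ G2 ∪ (L \ S) := by
      intro x hx
      rw [Finset.mem_Ioo] at hx
      by_cases hxl : x ∈ L
      · refine Finset.mem_union_right _ ?_
        rw [Finset.mem_sdiff]
        refine ⟨hxl, fun hxS => ?_⟩
        obtain ⟨v, _, hv⟩ := Finset.mem_image.mp hxS
        rcases lt_trichotomy x 0 with h0 | h0 | h0
        · have := hmax v (hv ▸ h0)
          rw [hv] at this
          linarith [hx.1]
        · exact hno0 v (hv.trans h0)
        · have := hmin v (hv ▸ h0)
          rw [hv] at this
          linarith [hx.2]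
      · refine Finset.mem_union_left _ ?_
        rw [hG2, Finset.mem_sdiff]
        exact ⟨Finset.mem_Ioo.mpr hx, hxl⟩
    calc (Finset.Ioo a b).card ≤ (G2 ∪ (L \ S)).card := Finset.card_le_card hsub
      _ ≤ _ := Finset.card_union_le _ _
  -- global cardinalities
  have htotal : ((Finset.Icc m M) \ L).card + L.card = (Finset.Icc m M).card := by
    apply Finset.card_sdiff_add_card_eq_card
    intro x hx
    rw [Finset.mem_Icc]
    exact ⟨hlow x hx, hup x hx⟩
  have hLsplit : (L \ S).card + S.card = L.card :=
    Finset.card_sdiff_add_card_eq_card hSL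
  -- cast and finish
  have cIcc : ((Finset.Icc m M).card : ℤ) = M + 1 - m := by
    rw [Int.card_Icc]
    exact Int.toNat_of_nonneg (by linarith)
  have cIoo : ((Finset.Ioo a b).card : ℤ) = b - a - 1 := by
    rw [Int.card_Ioo]
    exact Int.toNat_of_nonneg (by linarith)
  have cIco1 : ((Finset.Ico (m+a) m).card : ℤ) = -a := by
    rw [Int.card_Ico]
    rw [show m - (m + a) = -a by ring]
    exact Int.toNat_of_nonneg (by linarith)
  have cIco2 : ((Finset.Ico (b+a) b).card : ℤ) = -a := by
    rw [Int.card_Ico]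
    rw [show b - (b + a) = -a by ring]
    exact Int.toNat_of_nonneg (by linarith)
  have z1 : (P.card : ℤ) + NP.card + 1 = S.card := by
    have := congrArg (Nat.cast (R := ℤ)) (hPNP.symm ▸ herase : P.card + NP.card + 1 = S.card)
    push_cast at this
    linarith
  have z2 : (NP.card : ℤ) ≤ -a + G1.card + (-a) + G3.card := by
    have := (Nat.cast_le (α := ℤ)).mpr hNPbound
    push_cast at this
    linarith [cIco1, cIco2]
  have z3 : (G1.card : ℤ) + G2.card + G3.card ≤ ((Finset.Icc m M) \ L).card := by
    exact_mod_cast hGdecomp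
  have z4 : (b : ℤ) - a - 1 ≤ G2.card + (L \ S).card := by
    have := (Nat.cast_le (α := ℤ)).mpr hmid
    push_cast at this
    linarith [cIoo]
  have z5 : (((Finset.Icc m M) \ L).card : ℤ) + L.card = M + 1 - m := by
    have := congrArg (Nat.cast (R := ℤ)) htotal
    push_cast at this
    linarith [cIcc]
  have z6 : ((L \ S).card : ℤ) + S.card = L.card := by exact_mod_cast hLsplit
  have z7 : (P.card : ℤ) ≤ G.maxDegree := by exact_mod_cast hPdeg
  have z8 : (S.card : ℤ) = Fintype.card V := by exact_mod_cast hcardS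
  linarith


lemma posCase {V : Type*} [Fintype V] (G : SimpleGraph V) [DecidableRel G.Adj]
    (hiso : ∀ v : V, ∃ w : V, G.Adj v w)
    {L : Finset ℤ} (hL : L.Nonempty) {f : V → ℤ} (hinj : Function.Injective f)
    (hmem : ∀ v, f v ∈ L)
    (hadj : ∀ u v : V, G.Adj u v ↔ (f u ≠ f v ∧ f u + f v ∈ L))
    (hpos : ∀ v : V, 0 < f v) (hV : Nonempty V) :
    2 * (Fintype.card V : ℤ) - G.maxDegree - 3 ≤ L.max' hL - L.min' hL := by
  classical
  set m := L.min' hL with hm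
  set M := L.max' hL with hM
  set S : Finset ℤ := Finset.univ.image f with hS
  have hSne : S.Nonempty := by
    obtain ⟨v⟩ := hV
    exact ⟨f v, Finset.mem_image.mpr ⟨v, Finset.mem_univ _, rfl⟩⟩
  have hSL : S ⊆ L := by
    intro x hx
    obtain ⟨v, _, hv⟩ := Finset.mem_image.mp hx
    rw [← hv]; exact hmem v
  have hcardS : S.card = Fintype.card V := by
    rw [hS, Finset.card_image_of_injective _ hinj, Finset.card_univ]
  have hlow : ∀ x ∈ L, m ≤ x := fun x hx => L.min'_le x hx
  have hup : ∀ x ∈ L, x ≤ M := fun x hx => L.le_max' x hx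
  set b := S.min' hSne with hb
  have hbS : b ∈ S := S.min'_mem hSne
  obtain ⟨vb, _, hvb⟩ := Finset.mem_image.mp hbS
  have hb0 : 0 < b := by rw [← hvb]; exact hpos vb
  -- all sums u + b with u ∈ S are ≤ M
  obtain ⟨vM, _, hvM⟩ := Finset.mem_image.mp (S.max'_mem hSne)
  obtain ⟨w', hw'⟩ := hiso vM
  have hsumM : f vM + f w' ∈ L := ((hadj vM w').mp hw').2
  have hkey : ∀ u ∈ S, u + b ≤ M := by
    intro u hu
    have h1 : u ≤ S.max' hSne := S.le_max' u hu
    have h2 : b ≤ f w' := by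
      rw [hb]
      exact S.min'_le _ (Finset.mem_image.mpr ⟨w', Finset.mem_univ _, rfl⟩)
    have h3 : f vM + f w' ≤ M := hup _ hsumM
    rw [hvM] at h3
    linarith
  set P := (S.erase b).filter (fun u => u + b ∈ L) with hP
  set NP := (S.erase b).filter (fun u => ¬ (u + b ∈ L)) with hNP
  have hPNP : P.card + NP.card = (S.erase b).card :=
    Finset.card_filter_add_card_filter_not _
  have herase : (S.erase b).card + 1 = S.card := Finset.card_erase_add_one hbS
  have hPdeg : P.card ≤ G.maxDegree := by
    have := degBound G hadj vb
    rw [hvb] at this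
    exact this
  have hNPb : NP.card ≤ ((Finset.Icc m M) \ L).card := by
    have hmap : ∀ u ∈ NP, u + b ∈ (Finset.Icc m M) \ L := by
      intro u hu
      rw [hNP, Finset.mem_filter, Finset.mem_erase] at hu
      obtain ⟨⟨hne, huS⟩, hnl⟩ := hu
      rw [Finset.mem_sdiff, Finset.mem_Icc]
      have hum : m ≤ u := hlow u (hSL huS)
      exact ⟨⟨by linarith, hkey u huS⟩, hnl⟩
    have hinj2 : Set.InjOn (fun u => u + b) NP := fun x _ y _ h => by simpa using h
    exact Finset.card_le_card_of_injOn _ hmap hinj2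
  have htotal : ((Finset.Icc m M) \ L).card + L.card = (Finset.Icc m M).card := by
    apply Finset.card_sdiff_add_card_eq_card
    intro x hx
    rw [Finset.mem_Icc]
    exact ⟨hlow x hx, hup x hx⟩
  have hnL : S.card ≤ L.card := Finset.card_le_card hSL
  have hmM : m ≤ M := L.min'_le _ (L.max'_mem hL)
  have cIcc : ((Finset.Icc m M).card : ℤ) = M + 1 - m := by
    rw [Int.card_Icc]
    exact Int.toNat_of_nonneg (by linarith)
  have z1 : (P.card : ℤ) + NP.card + 1 = S.card := by
    have := congrArg (Nat.cast (R := ℤ)) (hPNP.symm ▸ herase : P.card + NP.card + 1 = S.card)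
    push_cast at this
    linarith
  have z2 : (NP.card : ℤ) ≤ (((Finset.Icc m M) \ L).card : ℤ) := by exact_mod_cast hNPb
  have z5 : (((Finset.Icc m M) \ L).card : ℤ) + L.card = M + 1 - m := by
    have := congrArg (Nat.cast (R := ℤ)) htotal
    push_cast at this
    linarith [cIcc]
  have z6 : (S.card : ℤ) ≤ L.card := by exact_mod_cast hnL
  have z7 : (P.card : ℤ) ≤ G.maxDegree := by exact_mod_cast hPdeg
  have z8 : (S.card : ℤ) = Fintype.card V := by exact_mod_cast hcardS
  linarith

-- mirror helpers
lemma mem_neg_image {L : Finset ℤ} {x : ℤ} : -x ∈ L.image (fun t => -t) ↔ x ∈ L := by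
  constructor
  · intro h
    obtain ⟨y, hy, hxy⟩ := Finset.mem_image.mp h
    have : y = x := by linarith [neg_injective hxy]
    rw [← this]; exact hy
  · intro h
    exact Finset.mem_image.mpr ⟨x, h, rfl⟩

lemma neg_image_nonempty {L : Finset ℤ} (hL : L.Nonempty) : (L.image (fun t => -t)).Nonempty :=
  hL.image _

lemma max'_neg_image {L : Finset ℤ} (hL : L.Nonempty) :
    (L.image (fun t => -t)).max' (hL.image _) = - L.min' hL := by
  apply le_antisymm
  · apply Finset.max'_le
    intro y hy
    obtain ⟨x, hx, hxy⟩ := Finset.mem_image.mp hy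
    rw [← hxy]
    exact neg_le_neg (L.min'_le x hx)
  · exact Finset.le_max' _ _ (Finset.mem_image.mpr ⟨L.min' hL, L.min'_mem hL, rfl⟩)

lemma min'_neg_image {L : Finset ℤ} (hL : L.Nonempty) :
    (L.image (fun t => -t)).min' (hL.image _) = - L.max' hL := by
  apply le_antisymm
  · exact Finset.min'_le _ _ (Finset.mem_image.mpr ⟨L.max' hL, L.max'_mem hL, rfl⟩)
  · apply Finset.le_min'
    intro y hy
    obtain ⟨x, hx, hxy⟩ := Finset.mem_image.mp hy
    rw [← hxy]
    exact neg_le_neg (L.le_max' x hx)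

lemma neg_adj {V : Type*} (G : SimpleGraph V) {L : Finset ℤ} {f : V → ℤ}
    (hadj : ∀ u v : V, G.Adj u v ↔ (f u ≠ f v ∧ f u + f v ∈ L)) :
    ∀ u v : V, G.Adj u v ↔ ((fun x => -(f x)) u ≠ (fun x => -(f x)) v ∧
      (fun x => -(f x)) u + (fun x => -(f x)) v ∈ L.image (fun t => -t)) := by
  intro u v
  rw [hadj u v]
  constructor
  · rintro ⟨h1, h2⟩
    refine ⟨fun hh => h1 (by linarith [neg_injective hh]), ?_⟩
    simp only
    rw [show -f u + -f v = -(f u + f v) by ring]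
    exact mem_neg_image.mpr h2
  · rintro ⟨h1, h2⟩
    simp only at h1 h2
    refine ⟨fun hh => h1 (by rw [hh]), ?_⟩
    rw [show -f u + -f v = -(f u + f v) by ring] at h2
    exact mem_neg_image.mp h2


-- MAIN ASSEMBLY
lemma main_bound {V : Type*} [Fintype V] (G : SimpleGraph V) [DecidableRel G.Adj]
    (hiso : ∀ v : V, ∃ w : V, G.Adj v w)
    {L : Finset ℤ} (hL : L.Nonempty) (h : IsSumLabeling G L) :
    2 * (Fintype.card V : ℤ) - G.maxDegree - 3 ≤ L.max' hL - L.min' hL := by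
  classical
  obtain ⟨f, hinj, hmem, hadj, _⟩ := h
  have hmM : L.min' hL ≤ L.max' hL := L.min'_le _ (L.max'_mem hL)
  rcases isEmpty_or_nonempty V with hV | hV
  · have hc : Fintype.card V = 0 := Fintype.card_eq_zero
    rw [hc]
    have hD : (0:ℤ) ≤ (G.maxDegree : ℤ) := Nat.cast_nonneg _
    push_cast
    linarith
  · by_cases h0 : ∃ v, f v = 0
    · -- a zero label: max degree is n - 1
      obtain ⟨v0, hv0⟩ := h0
      set S : Finset ℤ := Finset.univ.image f with hS
      have hSL : S ⊆ L := by
        intro x hx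
        obtain ⟨v, _, hv⟩ := Finset.mem_image.mp hx
        rw [← hv]; exact hmem v
      have hcardS : S.card = Fintype.card V := by
        rw [hS, Finset.card_image_of_injective _ hinj, Finset.card_univ]
      have h0S : (0:ℤ) ∈ S := Finset.mem_image.mpr ⟨v0, Finset.mem_univ _, hv0⟩
      have h2 : (S.erase (0:ℤ)).filter (fun u => u + 0 ∈ L) = S.erase 0 := by
        apply Finset.filter_true_of_mem
        intro u hu
        rw [add_zero]
        exact hSL (Finset.mem_of_mem_erase hu)
      have h1 : (S.erase (0:ℤ)).card ≤ G.maxDegree := by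
        have := degBound G hadj v0
        rw [hv0] at this
        rw [← h2]
        exact this
      have herase : (S.erase (0:ℤ)).card + 1 = S.card := Finset.card_erase_add_one h0S
      have hn : S.card ≤ (Finset.Icc (L.min' hL) (L.max' hL)).card := by
        apply Finset.card_le_card
        intro x hx
        rw [Finset.mem_Icc]
        exact ⟨L.min'_le x (hSL hx), L.le_max' x (hSL hx)⟩
      have cIcc : ((Finset.Icc (L.min' hL) (L.max' hL)).card : ℤ)
          = L.max' hL + 1 - L.min' hL := by
        rw [Int.card_Icc]
        exact Int.toNat_of_nonneg (by linarith)
      have z1 : ((S.erase (0:ℤ)).card : ℤ) + 1 = S.card := by exact_mod_cast herase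
      have z2 : ((S.erase (0:ℤ)).card : ℤ) ≤ G.maxDegree := by exact_mod_cast h1
      have z3 : (S.card : ℤ) ≤ ((Finset.Icc (L.min' hL) (L.max' hL)).card : ℤ) := by
        exact_mod_cast hn
      have z4 : (S.card : ℤ) = Fintype.card V := by exact_mod_cast hcardS
      linarith
    · push_neg at h0
      by_cases hXe : ∃ v, f v < 0
      · by_cases hYe : ∃ v, 0 < f v
        · -- mixed case
          set S : Finset ℤ := Finset.univ.image f with hS
          set X := S.filter (fun x => x < 0) with hX
          set Y := S.filter (fun x => 0 < x) with hY
          have hXne : X.Nonempty := by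
            obtain ⟨v, hv⟩ := hXe
            exact ⟨f v, Finset.mem_filter.mpr
              ⟨Finset.mem_image.mpr ⟨v, Finset.mem_univ _, rfl⟩, hv⟩⟩
          have hYne : Y.Nonempty := by
            obtain ⟨v, hv⟩ := hYe
            exact ⟨f v, Finset.mem_filter.mpr
              ⟨Finset.mem_image.mpr ⟨v, Finset.mem_univ _, rfl⟩, hv⟩⟩
          set a := X.max' hXne with ha
          set b := Y.min' hYne with hb
          have haX : a ∈ X := X.max'_mem hXne
          have hbY : b ∈ Y := Y.min'_mem hYne
          have ha0 : a < 0 := (Finset.mem_filter.mp haX).2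
          have hb0 : 0 < b := (Finset.mem_filter.mp hbY).2
          obtain ⟨wa, _, hwa⟩ := Finset.mem_image.mp (Finset.mem_filter.mp haX).1
          obtain ⟨vb, _, hvb⟩ := Finset.mem_image.mp (Finset.mem_filter.mp hbY).1
          have hmax : ∀ v : V, f v < 0 → f v ≤ a := by
            intro v hv
            exact X.le_max' _ (Finset.mem_filter.mpr
              ⟨Finset.mem_image.mpr ⟨v, Finset.mem_univ _, rfl⟩, hv⟩)
          have hmin : ∀ v : V, 0 < f v → b ≤ f v := by
            intro v hv
            exact Y.min'_le _ (Finset.mem_filter.mpr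
              ⟨Finset.mem_image.mpr ⟨v, Finset.mem_univ _, rfl⟩, hv⟩)
          by_cases hab : -a ≤ b
          · exact mixCase G hL hinj hmem hadj wa hwa ⟨vb, hvb⟩ ha0 hb0 hmax hmin h0 hab
          · push_neg at hab
            have hL' : (L.image (fun t => -t)).Nonempty := hL.image _
            have hres := mixCase G (L := L.image (fun t => -t)) hL'
              (f := fun v => -(f v))
              (fun u v hh => hinj (by linarith [neg_injective hh]))
              (fun v => mem_neg_image.mpr (hmem v))
              (neg_adj G hadj)
              (a := -b) (b := -a) vb (by show -(f vb) = -b; rw [hvb])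
              ⟨wa, by show -(f wa) = -a; rw [hwa]⟩
              (by linarith) (by linarith)
              (by intro v hv
                  have h1 : 0 < f v := by linarith
                  linarith [hmin v h1])
              (by intro v hv
                  have h1 : f v < 0 := by linarith
                  linarith [hmax v h1])
              (by intro v hh
                  exact h0 v (neg_eq_zero.mp hh))
              (by linarith)
            rw [max'_neg_image hL, min'_neg_image hL] at hres
            linarith
        · -- no positive labels: all negative
          have hneg : ∀ v : V, f v < 0 := by
            intro v
            rcases lt_trichotomy (f v) 0 with h | h | h
            · exact h
            · exact absurd h (h0 v)
            · exact absurd ⟨v, h⟩ hYe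
          have hL' : (L.image (fun t => -t)).Nonempty := hL.image _
          have hres := posCase G hiso hL' (f := fun v => -(f v))
            (fun u v hh => hinj (by linarith [neg_injective hh]))
            (fun v => mem_neg_image.mpr (hmem v))
            (neg_adj G hadj)
            (by intro v; linarith [hneg v]) hV
          rw [max'_neg_image hL, min'_neg_image hL] at hres
          linarith
      · -- no negative labels: all positive
        have hpos : ∀ v : V, 0 < f v := by
          intro v
          rcases lt_trichotomy (f v) 0 with h | h | h
          · exact absurd ⟨v, h⟩ hXe
          · exact absurd h (h0 v)
          · exact h
        exact posCase G hiso hL hinj hmem hadj hpos hV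


end Aux4


/-- For a graph `G` of order `n` with no isolated vertices and maximum degree `Δ`, one has
`isd(G) ≥ 2n - Δ - 3`. -/
theorem stmt4 {V : Type*} [Fintype V] (G : SimpleGraph V) [DecidableRel G.Adj]
    (hiso : ∀ v : V, ∃ w : V, G.Adj v w) :
    2 * (Fintype.card V : ℤ) - (G.maxDegree : ℤ) - 3 ≤ (intSumDiam G : ℤ) := by
  classical
  unfold intSumDiam
  rcases isEmpty_or_nonempty V with hV | hV
  · have hc : Fintype.card V = 0 := Fintype.card_eq_zero
    rw [hc]
    have h1 : (0:ℤ) ≤ (G.maxDegree : ℤ) := Nat.cast_nonneg _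
    have h2 : (0:ℤ) ≤ ((sInf {d | ∃ L : Finset ℤ, IsSumLabeling G L ∧
        ∃ hL : L.Nonempty, (L.max' hL - L.min' hL).toNat = d} : ℕ) : ℤ) := Nat.cast_nonneg _
    push_cast
    linarith
  · obtain ⟨L, hlab, hLne⟩ := Aux4.exists_labeling G hV
    have hset : {d | ∃ L : Finset ℤ, IsSumLabeling G L ∧
        ∃ hL : L.Nonempty, (L.max' hL - L.min' hL).toNat = d}.Nonempty :=
      ⟨_, L, hlab, hLne, rfl⟩
    obtain ⟨L', hlab', hL', hd⟩ := Nat.sInf_mem hset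
    calc 2 * (Fintype.card V : ℤ) - G.maxDegree - 3
        ≤ L'.max' hL' - L'.min' hL' := Aux4.main_bound G hiso hL' hlab'
      _ = (((L'.max' hL' - L'.min' hL').toNat : ℕ) : ℤ) :=
          (Int.toNat_of_nonneg (by linarith [L'.min'_le _ (L'.max'_mem hL')])).symm
      _ = _ := by rw [hd]
end

section
/- For all positive integers n, the spum of the perfect matching nK₂ equals 4n - 2; in particular, the sum number σ(nK₂) = 1, and any set of 2n+1 positive integers inducing nK₂ plus one isolated vertex has range at least 4n-2, with equality achieved by L = [2n-1, 4n-2] ∪ {6n-3}. -/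
def pr {n : ℕ} (v : Fin n × Fin 2) : Fin n × Fin 2 := (v.1, 1 - v.2)

lemma matching_adj {n : ℕ} {u v : Fin n × Fin 2} :
    (matching n).Adj u v ↔ u ≠ v ∧ u.1 = v.1 := by
  unfold matching
  rw [SimpleGraph.fromRel_adj]
  constructor
  · rintro ⟨h, h1 | h1⟩
    · exact ⟨h, h1⟩
    · exact ⟨h, h1.symm⟩
  · rintro ⟨h, h1⟩; exact ⟨h, Or.inl h1⟩

lemma adj_pr {n : ℕ} (v : Fin n × Fin 2) : (matching n).Adj v (pr v) := by
  rw [matching_adj]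
  refine ⟨?_, rfl⟩
  simp only [ne_eq, Prod.ext_iff, pr, not_and]
  intro _ h
  omega

lemma eq_pr_of_adj {n : ℕ} {u v : Fin n × Fin 2} (h : (matching n).Adj u v) : u = pr v := by
  rw [matching_adj] at h
  obtain ⟨hne, h1⟩ := h
  have h2 : u.2 ≠ v.2 := fun hh => hne (Prod.ext h1 hh)
  have h3 : u.2 = 1 - v.2 := by omega
  exact Prod.ext h1 h3

lemma lower_bound (n : ℕ) (hn : 1 ≤ n) (L : Finset ℤ) (hpos : ∀ x ∈ L, 0 < x)
    (hlab : IsSumLabeling (matching n) L) (hcard : L.card = 2 * n + 1)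
    (hL : L.Nonempty) : 4 * (n : ℤ) - 2 ≤ L.max' hL - L.min' hL := by
  obtain ⟨f, hinj, hmem, hadj, hiso⟩ := hlab
  set m := L.min' hL with hm
  set β := L.max' hL with hβ
  have hmL : m ∈ L := L.min'_mem hL
  have hβL : β ∈ L := L.max'_mem hL
  have hmpos : 0 < m := hpos m hmL
  have hpairsum : ∀ v, f v + f (pr v) ∈ L := fun v => ((hadj v (pr v)).mp (adj_pr v)).2
  have hub : ∀ v, f v + m ≤ β := by
    intro v
    have h2 : f v + f (pr v) ≤ β := L.le_max' _ (hpairsum v)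
    have h3 : m ≤ f (pr v) := L.min'_le _ (hmem _)
    omega
  set I : Finset ℤ := Finset.image f Finset.univ with hI
  have hIcard : I.card = 2 * n := by
    rw [hI, Finset.card_image_of_injective _ hinj, Finset.card_univ, Fintype.card_prod,
      Fintype.card_fin, Fintype.card_fin, Nat.mul_comm]
  have hIsub : I ⊆ L := by
    intro x hx
    obtain ⟨v, _, rfl⟩ := Finset.mem_image.mp hx
    exact hmem v
  have hβI : β ∉ I := by
    intro hx
    obtain ⟨v, _, hv⟩ := Finset.mem_image.mp hx
    have := hub v
    omega
  have heq : insert β I = L := by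
    apply Finset.eq_of_subset_of_card_le
    · intro x hx
      rcases Finset.mem_insert.mp hx with rfl | hx
      · exact hβL
      · exact hIsub hx
    · rw [hcard, Finset.card_insert_of_notMem hβI, hIcard]
  have hmβ : m < β := Finset.min'_lt_max'_of_card L (by omega)
  have hmI : m ∈ I := by
    have h0 : m ∈ insert β I := heq ▸ hmL
    rcases Finset.mem_insert.mp h0 with h | h
    · omega
    · exact h
  obtain ⟨v₀, _, hv₀⟩ := Finset.mem_image.mp hmI
  have hprI : f (pr v₀) ∈ I := Finset.mem_image.mpr ⟨pr v₀, Finset.mem_univ _, rfl⟩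
  have hprne : f (pr v₀) ≠ m := by
    rw [← hv₀]
    intro h
    exact (adj_pr v₀).ne (hinj h).symm
  set N := (I.erase m).erase (f (pr v₀)) with hN
  have hNcard : N.card = 2 * n - 2 := by
    rw [hN, Finset.card_erase_of_mem (Finset.mem_erase.mpr ⟨hprne, hprI⟩),
      Finset.card_erase_of_mem hmI, hIcard]
    omega
  have hkey : ∀ y ∈ N, y + m ∉ L ∧ m < y + m ∧ y + m ≤ β := by
    intro y hy
    have hy2 := Finset.mem_erase.mp hy
    have hy3 := Finset.mem_erase.mp hy2.2
    have hyI : y ∈ I := hy3.2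
    obtain ⟨u, _, hu⟩ := Finset.mem_image.mp hyI
    have hypos : 0 < y := hpos y (hIsub hyI)
    refine ⟨?_, by omega, by have := hub u; omega⟩
    intro hsum
    have hadj' : (matching n).Adj u v₀ :=
      (hadj u v₀).mpr ⟨by rw [hu, hv₀]; exact hy3.1, by rw [hu, hv₀]; exact hsum⟩
    exact hy2.1 (by rw [← hu, eq_pr_of_adj hadj'])
  set K := N.image (· + m) with hK
  have hKcard : K.card = N.card := Finset.card_image_of_injective _ (add_left_injective m)
  have hdisj : Disjoint K L := by
    rw [Finset.disjoint_left]
    intro x hx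
    obtain ⟨y, hy, rfl⟩ := Finset.mem_image.mp hx
    exact (hkey y hy).1
  have hsubIcc : K ∪ L ⊆ Finset.Icc m β := by
    intro x hx
    rcases Finset.mem_union.mp hx with hx | hx
    · obtain ⟨y, hy, rfl⟩ := Finset.mem_image.mp hx
      have h5 := hkey y hy
      exact Finset.mem_Icc.mpr ⟨by omega, h5.2.2⟩
    · exact Finset.mem_Icc.mpr ⟨L.min'_le x hx, L.le_max' x hx⟩
  have hcount : (K ∪ L).card ≤ (Finset.Icc m β).card := Finset.card_le_card hsubIcc
  rw [Finset.card_union_of_disjoint hdisj, Int.card_Icc, hKcard, hNcard, hcard] at hcount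
  omega


lemma construct (n : ℕ) (hn : 1 ≤ n) (L₀ : Finset ℤ)
    (hL₀ : L₀ = Finset.Icc (2 * (n : ℤ) - 1) (4 * (n : ℤ) - 2) ∪ {6 * (n : ℤ) - 3}) :
    (∀ x ∈ L₀, 0 < x) ∧ IsSumLabeling (matching n) L₀ ∧ L₀.card = 2 * n + 1 ∧
      ∃ h₀ : L₀.Nonempty, L₀.max' h₀ - L₀.min' h₀ = 4 * (n : ℤ) - 2 := by
  have hn' : (1 : ℤ) ≤ (n : ℤ) := by exact_mod_cast hn
  have hmemL : ∀ x : ℤ, x ∈ L₀ ↔ ((2*(n:ℤ)-1 ≤ x ∧ x ≤ 4*(n:ℤ)-2) ∨ x = 6*(n:ℤ)-3) := by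
    intro x
    rw [hL₀]
    simp [Finset.mem_union, Finset.mem_Icc]
    exact or_comm
  set f : Fin n × Fin 2 → ℤ :=
    fun v => if v.2 = 0 then 2*(n:ℤ)-1+(v.1.val : ℤ) else 4*(n:ℤ)-2-(v.1.val : ℤ) with hf
  have hfval : ∀ v : Fin n × Fin 2,
      (v.2 = 0 ∧ f v = 2*(n:ℤ)-1+(v.1.val : ℤ)) ∨ (v.2 = 1 ∧ f v = 4*(n:ℤ)-2-(v.1.val : ℤ)) := by
    intro v
    rcases (by omega : v.2 = 0 ∨ v.2 = 1) with h | h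
    · left; exact ⟨h, by rw [hf]; simp [h]⟩
    · right; refine ⟨h, by rw [hf]; simp [h]⟩
  have hvlt : ∀ v : Fin n × Fin 2, v.1.val < n := fun v => v.1.isLt
  have hpos : ∀ x ∈ L₀, 0 < x := by
    intro x hx
    have := (hmemL x).mp hx
    omega
  have hfinj : Function.Injective f := by
    intro u v huv
    have h1 := hvlt u
    have h2 := hvlt v
    rcases hfval u with ⟨hu2, hu⟩ | ⟨hu2, hu⟩ <;> rcases hfval v with ⟨hv2, hv⟩ | ⟨hv2, hv⟩ <;>
      rw [hu, hv] at huv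
    · exact Prod.ext (Fin.ext (by omega)) (hu2.trans hv2.symm)
    · omega
    · omega
    · exact Prod.ext (Fin.ext (by omega)) (hu2.trans hv2.symm)
  have hfmem : ∀ v, f v ∈ L₀ := by
    intro v
    have h1 := hvlt v
    rcases hfval v with ⟨_, hu⟩ | ⟨_, hu⟩ <;> · rw [hmemL, hu]; left; omega
  have hadj : ∀ u v, (matching n).Adj u v ↔ (f u ≠ f v ∧ f u + f v ∈ L₀) := by
    intro u v
    have h1 := hvlt u
    have h2 := hvlt v
    constructor
    · intro h
      obtain ⟨hne, he⟩ := matching_adj.mp h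
      refine ⟨fun hh => hne (hfinj hh), ?_⟩
      have h3 : u.2 ≠ v.2 := fun hh => hne (Prod.ext he hh)
      have h4 : u.1.val = v.1.val := congrArg Fin.val he
      rw [hmemL]
      rcases hfval u with ⟨hu2, hu⟩ | ⟨hu2, hu⟩ <;> rcases hfval v with ⟨hv2, hv⟩ | ⟨hv2, hv⟩ <;>
        rw [hu, hv] <;> omega
    · rintro ⟨hne, hsum⟩
      rw [matching_adj]
      rw [hmemL] at hsum
      rcases hfval u with ⟨hu2, hu⟩ | ⟨hu2, hu⟩ <;> rcases hfval v with ⟨hv2, hv⟩ | ⟨hv2, hv⟩ <;>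
        rw [hu, hv] at hne hsum
      · omega
      · have h5 : u.1.val = v.1.val := by omega
        exact ⟨fun hh => (by rw [hh] at hu2; omega : False), Fin.ext h5⟩
      · have h5 : u.1.val = v.1.val := by omega
        exact ⟨fun hh => (by rw [hh] at hu2; omega : False), Fin.ext h5⟩
      · omega
  have hiso : ∀ a ∈ L₀, a ∉ Set.range f → ∀ b ∈ L₀, b ≠ a → a + b ∉ L₀ := by
    intro a ha hnr b hb hba hab
    have hbm := (hmemL b).mp hb
    have ha6 : a = 6*(n:ℤ)-3 := by
      by_contra h6
      have haIcc : 2*(n:ℤ)-1 ≤ a ∧ a ≤ 4*(n:ℤ)-2 := by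
        rcases (hmemL a).mp ha with h | h
        · exact h
        · exact absurd h h6
      apply hnr
      by_cases hsmall : a ≤ 3*(n:ℤ)-2
      · refine ⟨(⟨(a - (2*(n:ℤ)-1)).toNat, by omega⟩, 0), ?_⟩
        rw [hf]
        simp only [Fin.isValue, Fin.val_mk, if_pos rfl]
        show 2*(n:ℤ)-1+(((a - (2*(n:ℤ)-1)).toNat : ℕ) : ℤ) = a
        omega
      · refine ⟨(⟨(4*(n:ℤ)-2 - a).toNat, by omega⟩, 1), ?_⟩
        rw [hf]
        simp only [Fin.isValue, one_ne_zero, if_false, Fin.val_mk]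
        show 4*(n:ℤ)-2-(((4*(n:ℤ)-2 - a).toNat : ℕ) : ℤ) = a
        omega
    have := (hmemL (a+b)).mp hab
    omega
  have hcard : L₀.card = 2 * n + 1 := by
    rw [hL₀, Finset.card_union_of_disjoint, Int.card_Icc, Finset.card_singleton]
    · omega
    · rw [Finset.disjoint_singleton_right]
      simp only [Finset.mem_Icc]
      omega
  have hne₀ : L₀.Nonempty := ⟨6*(n:ℤ)-3, (hmemL _).mpr (Or.inr rfl)⟩
  have hmax : L₀.max' hne₀ = 6*(n:ℤ)-3 := by
    apply le_antisymm
    · apply Finset.max'_le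
      intro x hx
      have := (hmemL x).mp hx
      omega
    · exact Finset.le_max' _ _ ((hmemL _).mpr (Or.inr rfl))
  have hmin : L₀.min' hne₀ = 2*(n:ℤ)-1 := by
    apply le_antisymm
    · exact Finset.min'_le _ _ ((hmemL _).mpr (Or.inl ⟨le_refl _, by omega⟩))
    · apply Finset.le_min'
      intro x hx
      have := (hmemL x).mp hx
      omega
  exact ⟨hpos, ⟨f, hfinj, hfmem, hadj, hiso⟩, hcard, hne₀, by rw [hmax, hmin]; ring⟩


lemma no_zero (n : ℕ) (hn : 1 ≤ n) (L : Finset ℤ) (hpos : ∀ x ∈ L, 0 < x)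
    (hlab : IsSumLabeling (matching n) L) (hcard : L.card = 2 * n) : False := by
  obtain ⟨f, hinj, hmem, hadj, _⟩ := hlab
  have hLne : L.Nonempty := Finset.card_pos.mp (by omega)
  set β := L.max' hLne with hβ
  have hβL : β ∈ L := L.max'_mem _
  set I : Finset ℤ := Finset.image f Finset.univ with hI
  have hIcard : I.card = 2 * n := by
    rw [hI, Finset.card_image_of_injective _ hinj, Finset.card_univ, Fintype.card_prod,
      Fintype.card_fin, Fintype.card_fin, Nat.mul_comm]
  have hIsub : I ⊆ L := by
    intro x hx
    obtain ⟨v, _, rfl⟩ := Finset.mem_image.mp hx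
    exact hmem v
  have heq : I = L := Finset.eq_of_subset_of_card_le hIsub (by omega)
  have hβI : β ∈ I := heq ▸ hβL
  obtain ⟨v, _, hv⟩ := Finset.mem_image.mp hβI
  have h1 : f v + f (pr v) ∈ L := ((hadj v (pr v)).mp (adj_pr v)).2
  have h2 : f v + f (pr v) ≤ β := L.le_max' _ h1
  have h3 : 0 < f (pr v) := hpos _ (hmem _)
  omega

/-- For all `n ≥ 1`, `σ(nK₂) = 1` and `spum(nK₂) = 4n - 2`: any set of `2n+1` positive
integers inducing `nK₂` plus one isolated vertex has range at least `4n-2`, with equality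
achieved by `L = [2n-1, 4n-2] ∪ {6n-3}`. -/
theorem stmt10 (n : ℕ) (hn : 1 ≤ n) :
    sumNumber (matching n) = 1 ∧
    spum (matching n) = 4 * n - 2 ∧
    (∀ L : Finset ℤ, (∀ x ∈ L, 0 < x) → IsSumLabeling (matching n) L → L.card = 2 * n + 1 →
      ∀ hL : L.Nonempty, 4 * (n : ℤ) - 2 ≤ L.max' hL - L.min' hL) ∧
    (∀ L₀ : Finset ℤ,
      L₀ = Finset.Icc (2 * (n : ℤ) - 1) (4 * (n : ℤ) - 2) ∪ {6 * (n : ℤ) - 3} →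
      (∀ x ∈ L₀, 0 < x) ∧ IsSumLabeling (matching n) L₀ ∧ L₀.card = 2 * n + 1 ∧
      ∃ h₀ : L₀.Nonempty, L₀.max' h₀ - L₀.min' h₀ = 4 * (n : ℤ) - 2) := by
  have hcardV : Fintype.card (Fin n × Fin 2) = 2 * n := by
    rw [Fintype.card_prod, Fintype.card_fin, Fintype.card_fin, Nat.mul_comm]
  obtain ⟨hp, hl, hc, hne₀, hd⟩ := construct n hn _ rfl
  have hσ : sumNumber (matching n) = 1 := by
    have h1mem : ∃ L : Finset ℤ, (∀ x ∈ L, 0 < x) ∧ IsSumLabeling (matching n) L ∧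
        L.card = Fintype.card (Fin n × Fin 2) + 1 :=
      ⟨_, hp, hl, by rw [hc, hcardV]⟩
    unfold sumNumber
    apply le_antisymm
    · exact Nat.sInf_le h1mem
    · refine le_csInf ⟨1, h1mem⟩ ?_
      rintro k ⟨L, hp', hl', hc'⟩
      rcases Nat.eq_zero_or_pos k with rfl | h
      · exact (no_zero n hn L hp' hl' (by rw [hc', hcardV]; omega)).elim
      · exact h
  have hspum : spum (matching n) = 4 * n - 2 := by
    have h2mem : ∃ L : Finset ℤ, (∀ x ∈ L, 0 < x) ∧ IsSumLabeling (matching n) L ∧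
        L.card = Fintype.card (Fin n × Fin 2) + sumNumber (matching n) ∧
        ∃ hL : L.Nonempty, (L.max' hL - L.min' hL).toNat = 4 * n - 2 :=
      ⟨_, hp, hl, by rw [hc, hcardV, hσ], hne₀, by rw [hd]; omega⟩
    unfold spum
    apply le_antisymm
    · exact Nat.sInf_le h2mem
    · refine le_csInf ⟨_, h2mem⟩ ?_
      rintro d ⟨L, hp', hl', hc', hne', hd'⟩
      have hc'' : L.card = 2 * n + 1 := by rw [hc', hcardV, hσ]
      have := lower_bound n hn L hp' hl' hc'' hne'
      omega
  exact ⟨hσ, hspum, fun L hpL hlL hcL hneL => lower_bound n hn L hpL hlL hcL hneL,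
    fun L₀ hL₀ => construct n hn L₀ hL₀⟩
end

section
/- For n ≥ 3, the set L = {-1} ∪ {1, 3, 5, ..., 4n-5} ∪ {4n-4} of integers induces as its sum graph a perfect matching on 2n vertices nK₂ (with no extra isolated vertices): the odd labels 1, 3, ..., 4n-5 are matched in pairs summing to 4n-4, the label 4n-4 is matched with -1, and there are no other edges. Consequently isd(nK₂) ≤ 4n-3. -/
def matchLabel (n : ℕ) (v : Fin n × Fin 2) : ℤ :=
  if v.1.val = n - 1 then (if v.2.val = 0 then -1 else 4 * n - 4)
  else (if v.2.val = 0 then 2 * v.1.val + 1 else 4 * n - 5 - 2 * v.1.val)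

lemma memL (n : ℕ) (hn : 3 ≤ n) (a : ℤ) :
    a ∈ ({-1} ∪ ((Finset.range (2 * n - 2)).image (fun k : ℕ => 2 * (k : ℤ) + 1))
        ∪ {4 * (n : ℤ) - 4} : Finset ℤ) ↔
      a = -1 ∨ a = 4 * n - 4 ∨ (a % 2 = 1 ∧ 1 ≤ a ∧ a ≤ 4 * n - 5) := by
  simp only [Finset.mem_union, Finset.mem_singleton, Finset.mem_image, Finset.mem_range]
  constructor
  · rintro ((rfl | ⟨k, hk, rfl⟩) | rfl)
    · tauto
    · right; right; omega
    · tauto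
  · rintro (rfl | rfl | ⟨h1, h2, h3⟩)
    · tauto
    · tauto
    · left; right; exact ⟨((a - 1) / 2).toNat, by omega, by omega⟩

lemma matchLabel_inj (n : ℕ) (hn : 3 ≤ n) : Function.Injective (matchLabel n) := by
  rintro ⟨⟨i, hi⟩, ⟨s, hs⟩⟩ ⟨⟨j, hj⟩, ⟨t, ht⟩⟩ h
  simp only [matchLabel] at h
  have : i = j ∧ s = t := by split_ifs at h <;> omega
  simp [Prod.ext_iff, Fin.ext_iff, this.1, this.2]


/-- For `n ≥ 3`, the set `L = {-1} ∪ {1, 3, ..., 4n-5} ∪ {4n-4}` induces the perfect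
matching `nK₂` with no extra isolated vertices; consequently `isd(nK₂) ≤ 4n - 3`. -/
theorem stmt11 (n : ℕ) (hn : 3 ≤ n) :
    let L : Finset ℤ := {-1} ∪
      ((Finset.range (2 * n - 2)).image (fun k : ℕ => 2 * (k : ℤ) + 1)) ∪ {4 * (n : ℤ) - 4}
    IsSumLabeling (matching n) L ∧ L.card = 2 * n ∧
    intSumDiam (matching n) ≤ 4 * n - 3 := by
  intro L
  have hmem : ∀ a : ℤ, a ∈ L ↔
      a = -1 ∨ a = 4 * n - 4 ∨ (a % 2 = 1 ∧ 1 ≤ a ∧ a ≤ 4 * n - 5) := memL n hn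
  have hinj : Function.Injective (matchLabel n) := matchLabel_inj n hn
  have hmemf : ∀ v, matchLabel n v ∈ L := by
    rintro ⟨⟨i, hi⟩, ⟨s, hs⟩⟩
    rw [hmem]; simp only [matchLabel]
    split_ifs <;> omega
  have hsur : ∀ a ∈ L, a ∈ Set.range (matchLabel n) := by
    intro a ha
    simp only [L, Finset.mem_union, Finset.mem_singleton, Finset.mem_image,
      Finset.mem_range] at ha
    rcases ha with ((rfl | ⟨k, hk, rfl⟩) | rfl)
    · exact ⟨(⟨n - 1, by omega⟩, ⟨0, by omega⟩), by simp [matchLabel]⟩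
    · by_cases hk2 : k ≤ n - 2
      · refine ⟨(⟨k, by omega⟩, ⟨0, by omega⟩), ?_⟩
        simp only [matchLabel]; split_ifs <;> omega
      · refine ⟨(⟨2 * n - 3 - k, by omega⟩, ⟨1, by omega⟩), ?_⟩
        simp only [matchLabel, Fin.val_mk]; split_ifs <;> first | omega | (exfalso; assumption)
    · exact ⟨(⟨n - 1, by omega⟩, ⟨1, by omega⟩), by simp [matchLabel]⟩
  have hadj : ∀ u v, (matching n).Adj u v ↔
      (matchLabel n u ≠ matchLabel n v ∧ matchLabel n u + matchLabel n v ∈ L) := by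
    rintro ⟨⟨i, hi⟩, ⟨s, hs⟩⟩ ⟨⟨j, hj⟩, ⟨t, ht⟩⟩
    rw [hmem]
    simp only [matching, SimpleGraph.fromRel_adj, matchLabel, ne_eq, Prod.mk.injEq,
      Fin.mk.injEq]
    split_ifs <;> omega
  have hlab : IsSumLabeling (matching n) L := by
    refine ⟨matchLabel n, hinj, hmemf, hadj, ?_⟩
    intro a ha hnr
    exact absurd (hsur a ha) hnr
  have hLne : L.Nonempty := ⟨-1, by rw [hmem]; tauto⟩
  have hmax : L.max' hLne = 4 * n - 4 := by
    refine le_antisymm (Finset.max'_le _ _ _ fun b hb => ?_) (Finset.le_max' _ _ ?_)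
    · rw [hmem] at hb; omega
    · rw [hmem]; omega
  have hmin : L.min' hLne = -1 := by
    refine le_antisymm (Finset.min'_le _ _ ?_) (Finset.le_min' _ _ _ fun b hb => ?_)
    · rw [hmem]; omega
    · rw [hmem] at hb; omega
  have hcard : L.card = 2 * n := by
    have d1 : Disjoint ({-1} : Finset ℤ)
        ((Finset.range (2 * n - 2)).image (fun k : ℕ => 2 * (k : ℤ) + 1)) := by
      simp only [Finset.disjoint_left, Finset.mem_singleton, Finset.mem_image,
        Finset.mem_range]
      rintro a rfl ⟨k, hk, hk2⟩; omega
    have d2 : Disjoint (({-1} : Finset ℤ) ∪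
        ((Finset.range (2 * n - 2)).image (fun k : ℕ => 2 * (k : ℤ) + 1)))
        ({4 * (n : ℤ) - 4}) := by
      simp only [Finset.disjoint_right, Finset.mem_singleton, Finset.mem_union,
        Finset.mem_image, Finset.mem_range]
      rintro a rfl h
      rcases h with h | ⟨k, hk, hk2⟩ <;> omega
    have : L.card = 1 + (2 * n - 2) + 1 := by
      rw [show L = ({-1} ∪ ((Finset.range (2 * n - 2)).image (fun k : ℕ => 2 * (k : ℤ) + 1))
          ∪ {4 * (n : ℤ) - 4} : Finset ℤ) from rfl,
        Finset.card_union_of_disjoint d2, Finset.card_union_of_disjoint d1,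
        Finset.card_image_of_injective _ (fun a b h => by simpa using (by omega : a = b)),
        Finset.card_singleton, Finset.card_singleton, Finset.card_range]
    omega
  refine ⟨hlab, hcard, ?_⟩
  apply Nat.sInf_le
  exact ⟨L, hlab, hLne, by rw [hmax, hmin]; omega⟩
end

section
/- Let G be a graph with n vertices (n ≥ 2). Then sd(G) ≤ 64n² - 64n + 9. More specifically, given a Sidon set {s₁ < ... < sₙ} ⊆ [1, 2p²] for a prime p with n ≤ p < 2n, the label set L consisting of the vertex labels 4sᵢ + 1 and, for each edge (i,j) of G, the edge label 4sᵢ + 4sⱼ + 2, induces G together with |E(G)| isolated vertices. -/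

def sN (p i : ℕ) : ℕ := 2 * p * i + i ^ 2 % p + 1

lemma sN_strictMono {p : ℕ} (hp : 0 < p) : StrictMono (sN p) := by
  intro i j hij
  have h1 : i ^ 2 % p < p := Nat.mod_lt _ hp
  have h2 : 2 * p * (i + 1) ≤ 2 * p * j := Nat.mul_le_mul_left _ hij
  rw [Nat.mul_add, Nat.mul_one] at h2
  unfold sN
  have h3 : 0 ≤ j ^ 2 % p := Nat.zero_le _
  linarith

lemma sN_le {p i : ℕ} (hp : 0 < p) : sN p i ≤ 2 * p * i + p := by
  have : i ^ 2 % p < p := Nat.mod_lt _ hp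
  unfold sN; omega

lemma div_unique' {m a b r s : ℕ} (hr : r < m) (hs : s < m)
    (h : m * a + r = m * b + s) : a = b ∧ r = s := by
  have hab : a = b := by
    rcases Nat.lt_trichotomy a b with h' | h' | h'
    · have h2 : m * (a + 1) ≤ m * b := Nat.mul_le_mul_left _ h'
      rw [Nat.mul_add, Nat.mul_one] at h2
      exfalso; linarith
    · exact h'
    · have h2 : m * (b + 1) ≤ m * a := Nat.mul_le_mul_left _ h'
      rw [Nat.mul_add, Nat.mul_one] at h2
      exfalso; linarith
  subst hab
  exact ⟨rfl, Nat.add_left_cancel h⟩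

lemma sidon {p : ℕ} (hp : p.Prime) (hp2 : p ≠ 2) {i j k l : ℕ}
    (hi : i < p) (hk : k < p) (hl : l < p)
    (h : sN p i + sN p j = sN p k + sN p l) :
    (i = k ∧ j = l) ∨ (i = l ∧ j = k) := by
  have hp0 : 0 < p := hp.pos
  have hri : i ^ 2 % p < p := Nat.mod_lt _ hp0
  have hrj : j ^ 2 % p < p := Nat.mod_lt _ hp0
  have hrk : k ^ 2 % p < p := Nat.mod_lt _ hp0
  have hrl : l ^ 2 % p < p := Nat.mod_lt _ hp0
  have h2 : 2 * p * (i + j) + (i ^ 2 % p + j ^ 2 % p)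
      = 2 * p * (k + l) + (k ^ 2 % p + l ^ 2 % p) := by
    unfold sN at h
    have e1 : 2 * p * (i + j) = 2 * p * i + 2 * p * j := by ring
    have e2 : 2 * p * (k + l) = 2 * p * k + 2 * p * l := by ring
    rw [e1, e2]; linarith
  obtain ⟨hsum, hres⟩ := div_unique' (by omega) (by omega) h2
  haveI : Fact p.Prime := ⟨hp⟩
  haveI : NeZero p := ⟨hp0.ne'⟩
  have hsum' : (i : ZMod p) + j = k + l := by
    exact_mod_cast congrArg (Nat.cast : ℕ → ZMod p) hsum
  have hres' : (i : ZMod p) ^ 2 + (j : ZMod p) ^ 2 = (k : ZMod p) ^ 2 + (l : ZMod p) ^ 2 := by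
    have h3 := congrArg (Nat.cast : ℕ → ZMod p) hres
    push_cast at h3
    rw [ZMod.natCast_mod, ZMod.natCast_mod, ZMod.natCast_mod, ZMod.natCast_mod] at h3
    push_cast at h3
    exact h3
  have h2ne : (2 : ZMod p) ≠ 0 := by
    intro hc
    have : ((2 : ℕ) : ZMod p) = 0 := by exact_mod_cast hc
    rw [ZMod.natCast_eq_zero_iff] at this
    have := (Nat.prime_dvd_prime_iff_eq hp Nat.prime_two).mp this
    exact hp2 this
  have hprod : (i : ZMod p) * j = (k : ZMod p) * l := by
    have h3 : (2 : ZMod p) * ((i : ZMod p) * j) = 2 * ((k : ZMod p) * l) := by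
      linear_combination ((i : ZMod p) + j + k + l) * hsum' - hres'
    exact mul_left_cancel₀ h2ne h3
  have hkey : ((i : ZMod p) - k) * ((i : ZMod p) - l) = 0 := by
    linear_combination (i : ZMod p) * hsum' - hprod
  rcases mul_eq_zero.mp hkey with h' | h'
  · have hik : i = k := by
      have h4 := congrArg ZMod.val (sub_eq_zero.mp h')
      rwa [ZMod.val_cast_of_lt hi, ZMod.val_cast_of_lt hk] at h4
    exact Or.inl ⟨hik, by omega⟩
  · have hil : i = l := by
      have h4 := congrArg ZMod.val (sub_eq_zero.mp h')
      rwa [ZMod.val_cast_of_lt hi, ZMod.val_cast_of_lt hl] at h4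
    exact Or.inr ⟨hil, by omega⟩

/-- For every graph `G` on `n ≥ 2` vertices, `sd(G) ≤ 64n² - 64n + 9`. -/
theorem stmt15 {V : Type*} [Fintype V] (G : SimpleGraph V) (hn : 2 ≤ Fintype.card V) :
    sumDiam G ≤ 64 * Fintype.card V ^ 2 - 64 * Fintype.card V + 9 := by
  classical
  set n := Fintype.card V with hn'
  obtain ⟨p, hp, hnp, hp2n⟩ := Nat.exists_prime_lt_and_le_two_mul n (by omega)
  have hp2 : p ≠ 2 := by omega
  set e := Fintype.equivFin V with he
  set g : V → ℕ := fun v => sN p (e v : ℕ) with hg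
  set f : V → ℤ := fun v => 4 * (g v : ℤ) + 1 with hf
  have hglt : ∀ v : V, (e v : ℕ) < p := fun v => lt_trans (e v).isLt hnp
  have hginj : Function.Injective g := by
    intro u v h
    apply e.injective
    apply Fin.val_injective
    exact (sN_strictMono hp.pos).injective h
  have hsid : ∀ u v u' v' : V, g u + g v = g u' + g v' →
      (u = u' ∧ v = v') ∨ (u = v' ∧ v = u') := by
    intro u v u' v' h
    rcases sidon hp hp2 (hglt u) (hglt u') (hglt v') h with ⟨h1, h2⟩ | ⟨h1, h2⟩
    · exact Or.inl ⟨e.injective (Fin.val_injective h1), e.injective (Fin.val_injective h2)⟩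
    · exact Or.inr ⟨e.injective (Fin.val_injective h1), e.injective (Fin.val_injective h2)⟩
  set L : Finset ℤ := (Finset.univ.image f) ∪
    ((Finset.univ.filter fun q : V × V => G.Adj q.1 q.2).image
      fun q : V × V => (4 * (g q.1 : ℤ) + 4 * (g q.2 : ℤ) + 2)) with hL
  have hmemL : ∀ a : ℤ, a ∈ L ↔ (∃ v, f v = a) ∨
      ∃ u v, G.Adj u v ∧ 4 * (g u : ℤ) + 4 * (g v : ℤ) + 2 = a := by
    intro a
    rw [hL]
    simp only [Finset.mem_union, Finset.mem_image, Finset.mem_filter, Finset.mem_univ,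
      true_and, Prod.exists]
  have hfinj : Function.Injective f := by
    intro u v h
    apply hginj
    simp only [hf] at h
    omega
  have hfmem : ∀ v, f v ∈ L := by
    intro v
    exact (hmemL _).mpr (Or.inl ⟨v, rfl⟩)
  have hAdj : ∀ u v, G.Adj u v ↔ (f u ≠ f v ∧ f u + f v ∈ L) := by
    intro u v
    constructor
    · intro h
      refine ⟨fun hc => h.ne (hfinj hc), ?_⟩
      apply (hmemL _).mpr
      exact Or.inr ⟨u, v, h, by simp only [hf]; ring⟩
    · rintro ⟨hne, hmem⟩
      rcases (hmemL _).mp hmem with ⟨w, hw⟩ | ⟨a, b, hab, heq⟩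
      · exfalso
        simp only [hf] at hw
        omega
      · have hgeq : g a + g b = g u + g v := by
          simp only [hf] at heq
          omega
        rcases hsid a b u v hgeq with ⟨h1, h2⟩ | ⟨h1, h2⟩
        · subst h1; subst h2; exact hab
        · subst h1; subst h2; exact hab.symm
  have hform : ∀ c ∈ L, (∃ m : ℕ, c = 4 * (m : ℤ) + 1) ∨ (∃ m : ℕ, c = 4 * (m : ℤ) + 2) := by
    intro c hc
    rcases (hmemL c).mp hc with ⟨v, hv⟩ | ⟨u, v, _, heq⟩
    · left; exact ⟨g v, by simp only [hf] at hv; omega⟩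
    · right; exact ⟨g u + g v, by push_cast; omega⟩
  have hiso : ∀ a ∈ L, a ∉ Set.range f → ∀ b ∈ L, b ≠ a → a + b ∉ L := by
    intro a haL har b hbL hbne hsum
    have ha2 : ∃ m : ℕ, a = 4 * (m : ℤ) + 2 := by
      rcases (hmemL a).mp haL with ⟨v, hv⟩ | ⟨u, v, _, heq⟩
      · exact absurd ⟨v, hv⟩ har
      · exact ⟨g u + g v, by push_cast; omega⟩
    obtain ⟨x, hx⟩ := ha2
    rcases hform b hbL with ⟨y, hy⟩ | ⟨y, hy⟩ <;>
      rcases hform _ hsum with ⟨z, hz⟩ | ⟨z, hz⟩ <;> omega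
  have hpos : ∀ x ∈ L, (0 : ℤ) < x := by
    intro x hx
    rcases hform x hx with ⟨m, hm⟩ | ⟨m, hm⟩ <;> omega
  have hV : Nonempty V := Fintype.card_pos_iff.mp (by omega)
  obtain ⟨v0⟩ := hV
  have hneL : L.Nonempty := ⟨f v0, hfmem v0⟩
  -- bounds
  set M : ℕ := 2 * p * (n - 1) + p with hM
  have hgle : ∀ v, g v ≤ M := by
    intro v
    have h1 : (e v : ℕ) ≤ n - 1 := by
      have := (e v).isLt
      omega
    calc g v ≤ 2 * p * (e v : ℕ) + p := sN_le hp.pos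
      _ ≤ 2 * p * (n - 1) + p := by
          have := Nat.mul_le_mul_left (2 * p) h1
          omega
  have hub : ∀ a ∈ L, a ≤ ((8 * M + 2 : ℕ) : ℤ) := by
    intro a ha
    rcases (hmemL a).mp ha with ⟨v, hv⟩ | ⟨u, v, _, heq⟩
    · have := hgle v
      simp only [hf] at hv
      push_cast
      omega
    · have h1 := hgle u
      have h2 := hgle v
      push_cast
      omega
  have hd : (L.max' hneL - L.min' hneL).toNat ≤ 8 * M + 1 := by
    rw [Int.toNat_le]
    have h1 := Finset.max'_le L hneL _ hub
    have h2 := Finset.le_min' L hneL 1 (fun a ha => hpos a ha)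
    push_cast
    omega
  have hmem : (L.max' hneL - L.min' hneL).toNat ∈
      {d | ∃ L' : Finset ℤ, (∀ x ∈ L', 0 < x) ∧ IsSumLabeling G L' ∧
        ∃ hL' : L'.Nonempty, (L'.max' hL' - L'.min' hL').toNat = d} :=
    ⟨L, hpos, ⟨f, hfinj, hfmem, hAdj, hiso⟩, hneL, rfl⟩
  refine le_trans (Nat.sInf_le hmem) ?_
  -- arithmetic: 8*M+1 ≤ 64n² - 64n + 9
  obtain ⟨q, hq⟩ : ∃ q, n = q + 1 := ⟨n - 1, by omega⟩
  have hq1 : 1 ≤ q := by omega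
  have hMq : M = 2 * p * q + p := by rw [hM, hq]; norm_num
  have hpq : p * q ≤ (2 * q + 2) * q := Nat.mul_le_mul_right q (by omega)
  have key : 8 * (2 * p * q + p) + 1 + 64 * (q + 1) ≤ 64 * (q + 1) ^ 2 + 9 := by
    have hqq : q ≤ q * q := Nat.le_mul_of_pos_left q hq1
    have hsq : 64 * (q + 1) ^ 2 = 64 * (q * q) + 128 * q + 64 := by ring
    rw [hsq]
    have hp' : p ≤ 2 * q + 2 := by omega
    nlinarith [hpq, hqq, hp']
  have hq' : q + 1 = n := hq.symm
  rw [hq'] at key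
  rw [← hMq] at key
  have h1 : 64 * n ≤ 64 * n ^ 2 := by nlinarith
  obtain ⟨X, hX⟩ : ∃ X, X = 64 * n ^ 2 := ⟨_, rfl⟩
  rw [← hX] at h1 key ⊢
  omega
end

section
/- Let S = {s₁, ..., sₙ} be a Sidon set of positive integers and G a graph on vertex set {1, ..., n}. Let L = {4sᵢ + 1 : 1 ≤ i ≤ n} ∪ {4sᵢ + 4sⱼ + 2 : (i,j) ∈ E(G)}. Then the induced sum graph of L consists of a copy of G on the labels 4sᵢ + 1 (with 4sᵢ+1 adjacent to 4sⱼ+1 iff (i,j) ∈ E(G)) together with the edge labels as isolated vertices. -/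
/-- Given a Sidon set `{s 1, ..., s n}` of positive integers and a graph `G` on `{1, ..., n}`,
the label set `L = {4sᵢ + 1} ∪ {4sᵢ + 4sⱼ + 2 : (i,j) ∈ E(G)}` induces a copy of `G` on the
labels `4sᵢ + 1` together with the edge labels as isolated vertices. -/
theorem stmt16 (n : ℕ) (G : SimpleGraph (Fin n)) [DecidableRel G.Adj]
    (s : Fin n → ℤ) (hpos : ∀ i, 0 < s i) (hinj : Function.Injective s)
    (hSidon : ∀ i j k l : Fin n, s i + s j = s k + s l →
      (s i = s k ∧ s j = s l) ∨ (s i = s l ∧ s j = s k)) :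
    let L : Finset ℤ := (Finset.univ.image fun i => 4 * s i + 1) ∪
      (((Finset.univ : Finset (Fin n × Fin n)).filter (fun p => G.Adj p.1 p.2)).image
        (fun p => 4 * s p.1 + 4 * s p.2 + 2))
    (∀ i j : Fin n, G.Adj i j ↔ (i ≠ j ∧ (4 * s i + 1) + (4 * s j + 1) ∈ L)) ∧
    (∀ a ∈ L, (∀ i, a ≠ 4 * s i + 1) → ∀ b ∈ L, b ≠ a → a + b ∉ L) := by
  intro L
  have hmem : ∀ x : ℤ, x ∈ L ↔ ((∃ i, x = 4 * s i + 1) ∨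
      ∃ i j, G.Adj i j ∧ x = 4 * s i + 4 * s j + 2) := by
    intro x
    simp only [L, Finset.mem_union, Finset.mem_image, Finset.mem_filter, Finset.mem_univ,
      true_and]
    constructor
    · rintro (⟨i, hi⟩ | ⟨⟨i, j⟩, hadj, heq⟩)
      · exact Or.inl ⟨i, hi.symm⟩
      · exact Or.inr ⟨i, j, hadj, heq.symm⟩
    · rintro (⟨i, hi⟩ | ⟨i, j, hadj, heq⟩)
      · exact Or.inl ⟨i, hi.symm⟩
      · exact Or.inr ⟨⟨i, j⟩, hadj, heq.symm⟩
  constructor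
  · intro i j
    constructor
    · intro h
      refine ⟨G.ne_of_adj h, ?_⟩
      rw [hmem]
      exact Or.inr ⟨i, j, h, by ring⟩
    · rintro ⟨hne, hsum⟩
      rw [hmem] at hsum
      rcases hsum with ⟨k, hk⟩ | ⟨k, l, hadj, heq⟩
      · omega
      · have h4 : s i + s j = s k + s l := by omega
        rcases hSidon i j k l h4 with ⟨h1, h2⟩ | ⟨h1, h2⟩
        · rw [hinj h1, hinj h2]; exact hadj
        · rw [hinj h1, hinj h2]; exact hadj.symm
  · intro a ha hnv b hb _ hab
    rw [hmem] at ha hb hab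
    rcases ha with ⟨i, hi⟩ | ⟨i, j, _, hij⟩
    · exact hnv i hi
    · rcases hb with ⟨k, hk⟩ | ⟨k, l, _, hkl⟩ <;>
        rcases hab with ⟨m, hm⟩ | ⟨m, m', _, hm⟩ <;> omega
end

section
/- Let f(n) denote the maximum of sd(G) over all graphs G on n vertices. Then 2f(n) ≥ C(n,2) - log₂(n!) for all sufficiently large n; in particular f(n) = Ω(n²). The key counting fact: every connected graph on n vertices admits an optimal sum-graph labeling L with max L ≤ 2f(n), and distinct (isomorphism classes of) connected graphs require distinct such label sets, so 2^{2f(n)} ≥ (number of connected graphs on n vertices) ≥ (1-o(1))·2^{C(n,2)}/n!. -/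
/-- The maximum of `sd(G)` over graphs `G` on `n` vertices. -/
noncomputable def maxSumDiam (n : ℕ) : ℕ :=
  sSup (Set.range fun G : SimpleGraph (Fin n) => sumDiam G)


-- mod 3 facts
lemma pow4_mod3 (k : ℕ) : 4 ^ k % 3 = 1 := by
  rw [Nat.pow_mod]; simp

lemma two_pow4_mod3 (p q : ℕ) : (4 ^ p + 4 ^ q) % 3 = 2 := by
  rw [Nat.add_mod, pow4_mod3, pow4_mod3]

lemma three_pow4_mod3 (p q r : ℕ) : (4 ^ p + 4 ^ q + 4 ^ r) % 3 = 0 := by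
  rw [Nat.add_mod, two_pow4_mod3, pow4_mod3]

lemma four_pow4_mod3 (p q r s : ℕ) : (4 ^ p + 4 ^ q + 4 ^ r + 4 ^ s) % 3 = 1 := by
  rw [Nat.add_mod, three_pow4_mod3, pow4_mod3]

-- uniqueness of two-power sums
lemma pow4_add_inj_aux {u v i j : ℕ} (huv : u < v) (hij : i < j)
    (h : 4 ^ u + 4 ^ v = 4 ^ i + 4 ^ j) : u = i ∧ v = j := by
  have hvj : v = j := by
    rcases lt_trichotomy v j with hlt | he | hgt
    · exfalso
      have h1 : (4:ℕ) ^ u < 4 ^ v := Nat.pow_lt_pow_right (by norm_num) huv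
      have h2 : (4:ℕ) ^ (v+1) ≤ 4 ^ j := Nat.pow_le_pow_right (by norm_num) hlt
      have h3 : (4:ℕ) ^ (v+1) = 4 * 4 ^ v := by ring
      have e1 : (0:ℕ) < 4 ^ i := Nat.pow_pos (by norm_num)
      have e2 : (0:ℕ) < 4 ^ v := Nat.pow_pos (by norm_num)
      omega
    · exact he
    · exfalso
      have h1 : (4:ℕ) ^ i < 4 ^ j := Nat.pow_lt_pow_right (by norm_num) hij
      have h2 : (4:ℕ) ^ (j+1) ≤ 4 ^ v := Nat.pow_le_pow_right (by norm_num) hgt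
      have h3 : (4:ℕ) ^ (j+1) = 4 * 4 ^ j := by ring
      have e1 : (0:ℕ) < 4 ^ u := Nat.pow_pos (by norm_num)
      have e2 : (0:ℕ) < 4 ^ j := Nat.pow_pos (by norm_num)
      omega
  subst hvj
  have : (4:ℕ) ^ u = 4 ^ i := by omega
  exact ⟨Nat.pow_right_injective (by norm_num) this, rfl⟩

lemma pow4_add_inj {u v i j : ℕ} (huv : u ≠ v) (hij : i ≠ j)
    (h : 4 ^ u + 4 ^ v = 4 ^ i + 4 ^ j) : (u = i ∧ v = j) ∨ (u = j ∧ v = i) := by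
  rcases huv.lt_or_gt with h1 | h1 <;> rcases hij.lt_or_gt with h2 | h2
  · exact Or.inl (pow4_add_inj_aux h1 h2 h)
  · exact Or.inr (pow4_add_inj_aux h1 h2 (by omega))
  · obtain ⟨a, b⟩ := pow4_add_inj_aux h1 h2 (by omega); exact Or.inr ⟨b, a⟩
  · obtain ⟨a, b⟩ := pow4_add_inj_aux h1 h2 (by omega); exact Or.inl ⟨b, a⟩

-- a sum of two distinct powers of 4 is never a single power of 4 (not needed? keep)
lemma pow4_pair_le {p q m : ℕ} (hpq : p ≠ q) (hp : p ≤ m) (hq : q ≤ m) :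
    4 ^ p + 4 ^ q ≤ 5 * 4 ^ (m - 1) := by
  have hm : 1 ≤ m := by omega
  rcases hpq.lt_or_gt with h | h
  · have h1 : (4:ℕ) ^ p ≤ 4 ^ (m-1) := Nat.pow_le_pow_right (by norm_num) (by omega)
    have h2 : (4:ℕ) ^ q ≤ 4 ^ m := Nat.pow_le_pow_right (by norm_num) hq
    have h3 : (4:ℕ) ^ m = 4 * 4 ^ (m-1) := by
      rw [← pow_succ']; congr 1; omega
    omega
  · have h1 : (4:ℕ) ^ q ≤ 4 ^ (m-1) := Nat.pow_le_pow_right (by norm_num) (by omega)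
    have h2 : (4:ℕ) ^ p ≤ 4 ^ m := Nat.pow_le_pow_right (by norm_num) hp
    have h3 : (4:ℕ) ^ m = 4 * 4 ^ (m-1) := by
      rw [← pow_succ']; congr 1; omega
    omega

lemma pow4_quad_ne_pow {p q r s c : ℕ} (hpq : p ≠ q) (hrs : r ≠ s) :
    4 ^ p + 4 ^ q + 4 ^ r + 4 ^ s ≠ 4 ^ c := by
  intro h
  have e1 : (0:ℕ) < 4 ^ p := Nat.pow_pos (by norm_num)
  have e2 : (0:ℕ) < 4 ^ q := Nat.pow_pos (by norm_num)
  have e3 : (0:ℕ) < 4 ^ r := Nat.pow_pos (by norm_num)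
  have e4 : (0:ℕ) < 4 ^ s := Nat.pow_pos (by norm_num)
  obtain ⟨m, hmp, hmq, hmr, hms, hm1, hmeq⟩ :
      ∃ m, p ≤ m ∧ q ≤ m ∧ r ≤ m ∧ s ≤ m ∧ 1 ≤ m ∧
        (m = p ∨ m = q ∨ m = r ∨ m = s) := by
    refine ⟨max (max p q) (max r s), by omega, by omega, by omega, by omega, by omega, by omega⟩
  have hmaxle : (4:ℕ) ^ m < 4 ^ p + 4 ^ q + 4 ^ r + 4 ^ s := by
    rcases hmeq with hh | hh | hh | hh <;> rw [hh] <;> omega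
  have h1 := pow4_pair_le hpq hmp hmq
  have h2 := pow4_pair_le hrs hmr hms
  have h4 : (4:ℕ) ^ m = 4 * 4 ^ (m - 1) := by
    rw [← pow_succ']; congr 1; omega
  have h5 : (4:ℕ) ^ (m+1) = 16 * 4 ^ (m - 1) := by
    rw [show m + 1 = (m-1) + 2 by omega]; ring
  have hlow : (4:ℕ) ^ m < 4 ^ c := by omega
  have hhigh : (4:ℕ) ^ c < 4 ^ (m+1) := by omega
  have hc1 : m < c := (Nat.pow_lt_pow_iff_right (by norm_num : 1 < 4)).mp hlow
  have hc2 : c < m + 1 := (Nat.pow_lt_pow_iff_right (by norm_num : 1 < 4)).mp hhigh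
  omega


open Finset in
noncomputable def labelSet {n : ℕ} (G : SimpleGraph (Fin n)) : Finset ℤ := by
  classical
  exact (univ.image fun i : Fin n => ((4 ^ (i : ℕ) : ℕ) : ℤ)) ∪
    ((univ.filter fun p : Fin n × Fin n => G.Adj p.1 p.2).image
      fun p => ((4 ^ (p.1 : ℕ) + 4 ^ (p.2 : ℕ) : ℕ) : ℤ))

lemma mem_labelSet {n : ℕ} {G : SimpleGraph (Fin n)} {x : ℤ} :
    x ∈ labelSet G ↔ (∃ i : Fin n, x = ((4 ^ (i : ℕ) : ℕ) : ℤ)) ∨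
      (∃ i j : Fin n, G.Adj i j ∧ x = ((4 ^ (i : ℕ) + 4 ^ (j : ℕ) : ℕ) : ℤ)) := by
  classical
  simp only [labelSet, Finset.mem_union, Finset.mem_image, Finset.mem_filter,
    Finset.mem_univ, true_and]
  constructor
  · rintro (⟨i, _, rfl⟩ | ⟨p, hp, rfl⟩)
    · exact Or.inl ⟨i, rfl⟩
    · exact Or.inr ⟨p.1, p.2, hp, rfl⟩
  · rintro (⟨i, rfl⟩ | ⟨i, j, h, rfl⟩)
    · exact Or.inl ⟨i, rfl⟩
    · exact Or.inr ⟨(i, j), h, rfl⟩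

lemma labelSet_pos {n : ℕ} {G : SimpleGraph (Fin n)} : ∀ x ∈ labelSet G, 0 < x := by
  intro x hx
  rcases mem_labelSet.mp hx with ⟨i, rfl⟩ | ⟨i, j, _, rfl⟩ <;>
    · push_cast
      positivity

-- elements of labelSet are ≡ 1 or 2 mod 3 (as naturals)
lemma labelSet_isSumLabeling {n : ℕ} (G : SimpleGraph (Fin n)) :
    IsSumLabeling G (labelSet G) := by
  classical
  refine ⟨fun i => ((4 ^ (i : ℕ) : ℕ) : ℤ), ?_, ?_, ?_, ?_⟩
  · intro a b hab
    have hab' : ((4 ^ (a : ℕ) : ℕ) : ℤ) = ((4 ^ (b : ℕ) : ℕ) : ℤ) := hab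
    have : (4:ℕ) ^ (a : ℕ) = 4 ^ (b : ℕ) := by exact_mod_cast hab'
    exact Fin.ext (Nat.pow_right_injective (by norm_num) this)
  · intro v; exact mem_labelSet.mpr (Or.inl ⟨v, rfl⟩)
  · intro u v
    constructor
    · intro h
      have huv : u ≠ v := h.ne
      constructor
      · intro he
        have he' : ((4 ^ (u : ℕ) : ℕ) : ℤ) = ((4 ^ (v : ℕ) : ℕ) : ℤ) := he
        have : (4:ℕ) ^ (u : ℕ) = 4 ^ (v : ℕ) := by exact_mod_cast he'
        exact huv (Fin.ext (Nat.pow_right_injective (by norm_num) this))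
      · exact mem_labelSet.mpr (Or.inr ⟨u, v, h, by push_cast; ring⟩)
    · rintro ⟨hne, hmem⟩
      have hne' : ((4 ^ (u : ℕ) : ℕ) : ℤ) ≠ ((4 ^ (v : ℕ) : ℕ) : ℤ) := hne
      have hmem' : ((4 ^ (u : ℕ) : ℕ) : ℤ) + ((4 ^ (v : ℕ) : ℕ) : ℤ) ∈ labelSet G := hmem
      have huv : (u : ℕ) ≠ (v : ℕ) := by
        intro he; apply hne'; rw [he]
      rcases mem_labelSet.mp hmem' with ⟨i, hi⟩ | ⟨i, j, hadj, hij⟩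
      · exfalso
        have : (4 ^ (u:ℕ) + 4 ^ (v:ℕ) : ℕ) = 4 ^ (i:ℕ) := by exact_mod_cast hi
        have h1 := two_pow4_mod3 (u:ℕ) (v:ℕ)
        have h2 := pow4_mod3 (i:ℕ)
        omega
      · have : (4 ^ (u:ℕ) + 4 ^ (v:ℕ) : ℕ) = 4 ^ (i:ℕ) + 4 ^ (j:ℕ) := by exact_mod_cast hij
        have hij' : (i:ℕ) ≠ (j:ℕ) := by
          intro he; exact hadj.ne (Fin.ext he)
        rcases pow4_add_inj huv hij' this with ⟨h1, h2⟩ | ⟨h1, h2⟩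
        · rwa [show u = i from Fin.ext h1, show v = j from Fin.ext h2]
        · rw [show u = j from Fin.ext h1, show v = i from Fin.ext h2]
          exact hadj.symm
  · intro a ha hnr b hb hba hmem
    -- a is a sum label
    have ha' : ∃ i j : Fin n, G.Adj i j ∧ a = ((4 ^ (i:ℕ) + 4 ^ (j:ℕ) : ℕ) : ℤ) := by
      rcases mem_labelSet.mp ha with ⟨i, hi⟩ | h
      · exact absurd ⟨i, hi.symm⟩ hnr
      · exact h
    obtain ⟨i, j, hadj, rfl⟩ := ha'
    have hij : (i:ℕ) ≠ (j:ℕ) := fun he => hadj.ne (Fin.ext he)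
    rcases mem_labelSet.mp hb with ⟨k, rfl⟩ | ⟨r, s, hrs, rfl⟩
    · -- triple: mod 3 = 0, but labelSet elements are 1 or 2 mod 3
      rcases mem_labelSet.mp hmem with ⟨c, hc⟩ | ⟨c, d, _, hcd⟩
      · have : (4 ^ (i:ℕ) + 4 ^ (j:ℕ) + 4 ^ (k:ℕ) : ℕ) = 4 ^ (c:ℕ) := by exact_mod_cast hc
        have h1 := three_pow4_mod3 (i:ℕ) (j:ℕ) (k:ℕ)
        have h2 := pow4_mod3 (c:ℕ)
        omega
      · have : (4 ^ (i:ℕ) + 4 ^ (j:ℕ) + 4 ^ (k:ℕ) : ℕ) = 4 ^ (c:ℕ) + 4 ^ (d:ℕ) := by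
          exact_mod_cast hcd
        have h1 := three_pow4_mod3 (i:ℕ) (j:ℕ) (k:ℕ)
        have h2 := two_pow4_mod3 (c:ℕ) (d:ℕ)
        omega
    · have hrs' : (r:ℕ) ≠ (s:ℕ) := fun he => hrs.ne (Fin.ext he)
      rcases mem_labelSet.mp hmem with ⟨c, hc⟩ | ⟨c, d, _, hcd⟩
      · have h9 : (4 ^ (i:ℕ) + 4 ^ (j:ℕ) + (4 ^ (r:ℕ) + 4 ^ (s:ℕ)) : ℕ) = 4 ^ (c:ℕ) := by
          exact_mod_cast hc
        exact pow4_quad_ne_pow hij hrs'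
          (show 4 ^ (i:ℕ) + 4 ^ (j:ℕ) + 4 ^ (r:ℕ) + 4 ^ (s:ℕ) = 4 ^ (c:ℕ) by omega)
      · have : (4 ^ (i:ℕ) + 4 ^ (j:ℕ) + (4 ^ (r:ℕ) + 4 ^ (s:ℕ)) : ℕ)
            = 4 ^ (c:ℕ) + 4 ^ (d:ℕ) := by exact_mod_cast hcd
        have h1 := four_pow4_mod3 (i:ℕ) (j:ℕ) (r:ℕ) (s:ℕ)
        have h2 := two_pow4_mod3 (c:ℕ) (d:ℕ)
        omega

lemma labelSet_nonempty {n : ℕ} (hn : 1 ≤ n) (G : SimpleGraph (Fin n)) :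
    (labelSet G).Nonempty :=
  ⟨_, mem_labelSet.mpr (Or.inl ⟨⟨0, hn⟩, rfl⟩)⟩


lemma connected_exists_adj {n : ℕ} (hn : 2 ≤ n) {G : SimpleGraph (Fin n)}
    (hG : G.Connected) : ∀ u : Fin n, ∃ v, G.Adj u v := by
  intro u
  have hw : ∃ w : Fin n, w ≠ u := by
    by_cases h : u = ⟨0, by omega⟩
    · exact ⟨⟨1, by omega⟩, by rw [h]; intro he; simpa using congrArg Fin.val he⟩
    · exact ⟨⟨0, by omega⟩, fun he => h he.symm⟩
  obtain ⟨w, hwu⟩ := hw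
  obtain ⟨p⟩ := hG.preconnected u w
  cases p with
  | nil => exact absurd rfl hwu.symm
  | cons h _ => exact ⟨_, h⟩

lemma sumDiam_le_maxSumDiam {n : ℕ} (G : SimpleGraph (Fin n)) :
    sumDiam G ≤ maxSumDiam n := by
  classical
  have hfin : (Set.range fun G : SimpleGraph (Fin n) => sumDiam G).Finite :=
    Set.finite_range _
  exact le_csSup hfin.bddAbove ⟨G, rfl⟩

lemma exists_good_label {n : ℕ} (hn : 2 ≤ n) {G : SimpleGraph (Fin n)}
    (hG : G.Connected) :
    ∃ L : Finset ℤ, IsSumLabeling G L ∧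
      L ⊆ Finset.Icc 1 (2 * (maxSumDiam n : ℤ) - 1) := by
  classical
  have hset : {d | ∃ L : Finset ℤ, (∀ x ∈ L, 0 < x) ∧ IsSumLabeling G L ∧
      ∃ hL : L.Nonempty, (L.max' hL - L.min' hL).toNat = d}.Nonempty := by
    refine ⟨_, labelSet G, labelSet_pos, labelSet_isSumLabeling G,
      labelSet_nonempty (by omega) G, rfl⟩
  have hmem : ∃ L : Finset ℤ, (∀ x ∈ L, 0 < x) ∧ IsSumLabeling G L ∧
      ∃ hL : L.Nonempty, (L.max' hL - L.min' hL).toNat = sumDiam G := Nat.sInf_mem hset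
  obtain ⟨L, hpos, hlab, hL, heq⟩ := hmem
  refine ⟨L, hlab, ?_⟩
  obtain ⟨f, hinj, hmemL, hiff, _⟩ := hlab
  obtain ⟨v, hadj⟩ := connected_exists_adj hn hG ⟨0, by omega⟩
  have h1 : f (⟨0, by omega⟩ : Fin n) ≠ f v := ((hiff (⟨0, by omega⟩ : Fin n) v).mp hadj).1
  have h2 : f (⟨0, by omega⟩ : Fin n) + f v ∈ L := ((hiff (⟨0, by omega⟩ : Fin n) v).mp hadj).2
  set mn := L.min' hL with hmn
  set mx := L.max' hL with hmx
  have hmn1 : 1 ≤ mn := hpos _ (L.min'_mem hL)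
  have hf0 : mn ≤ f (⟨0, by omega⟩ : Fin n) := L.min'_le _ (hmemL _)
  have hfv : mn ≤ f v := L.min'_le _ (hmemL v)
  have hsum : f (⟨0, by omega⟩ : Fin n) + f v ≤ mx := L.le_max' _ h2
  have hsum2 : 2 * mn + 1 ≤ mx := by
    rcases h1.lt_or_gt with h | h <;> omega
  have hd : ((sumDiam G : ℕ) : ℤ) = mx - mn := by
    rw [← heq]
    exact Int.toNat_of_nonneg (by omega)
  have hfn : (sumDiam G : ℤ) ≤ (maxSumDiam n : ℤ) := by
    exact_mod_cast sumDiam_le_maxSumDiam G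
  intro x hx
  have hx1 : mn ≤ x := L.min'_le _ hx
  have hx2 : x ≤ mx := L.le_max' _ hx
  rw [Finset.mem_Icc]
  omega


open Finset in
lemma range_subset_of_labelings {n : ℕ} (hn : 2 ≤ n) {G : SimpleGraph (Fin n)}
    (hG : G.Connected) {L : Finset ℤ} {f f' : Fin n → ℤ}
    (hmemL : ∀ v, f v ∈ L) (hiff : ∀ u v, G.Adj u v ↔ (f u ≠ f v ∧ f u + f v ∈ L))
    (hiso' : ∀ a ∈ L, a ∉ Set.range f' → ∀ b ∈ L, b ≠ a → a + b ∉ L) :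
    Set.range f ⊆ Set.range f' := by
  rintro x ⟨u, rfl⟩
  by_contra hx
  obtain ⟨v, hadj⟩ := connected_exists_adj hn hG u
  obtain ⟨hne, hsum⟩ := (hiff u v).mp hadj
  exact hiso' (f u) (hmemL u) hx (f v) (hmemL v) (Ne.symm hne) hsum

open Finset in
lemma fiber_card_le {n : ℕ} (hn : 2 ≤ n) {L : Finset ℤ} (t : Finset (SimpleGraph (Fin n)))
    (ht : ∀ G ∈ t, G.Connected ∧ IsSumLabeling G L) : t.card ≤ Nat.factorial n := by
  classical
  rcases t.eq_empty_or_nonempty with rfl | ⟨G₀, hG₀⟩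
  · simp
  have key : ∀ G ∈ t, ∃ f : Fin n → ℤ, Function.Injective f ∧ (∀ v, f v ∈ L) ∧
      (∀ u v, G.Adj u v ↔ (f u ≠ f v ∧ f u + f v ∈ L)) ∧
      (∀ a ∈ L, a ∉ Set.range f → ∀ b ∈ L, b ≠ a → a + b ∉ L) :=
    fun G hG => (ht G hG).2
  choose F hinj hmem hiff hiso using key
  set f₀ := F G₀ hG₀ with hf₀
  set R : Finset ℤ := Finset.univ.image f₀ with hR
  have hcardR : R.card = n := by
    rw [hR, Finset.card_image_of_injective _ (hinj G₀ hG₀), Finset.card_univ, Fintype.card_fin]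
  have hrange : ∀ G (hG : G ∈ t), ∀ v, F G hG v ∈ R := by
    intro G hG v
    have := range_subset_of_labelings hn (ht G hG).1 (hmem G hG) (hiff G hG)
      (hiso G₀ hG₀) ⟨v, rfl⟩
    obtain ⟨w, hw⟩ := this
    rw [hR]
    exact Finset.mem_image.mpr ⟨w, Finset.mem_univ w, hw⟩
  have hcard : t.card ≤ Fintype.card (Fin n ↪ {x // x ∈ R}) := by
    rw [← Fintype.card_coe t]
    refine Fintype.card_le_of_embedding ⟨fun g => ⟨fun v => ⟨F g.1 g.2 v, hrange g.1 g.2 v⟩,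
      fun a b hab => hinj g.1 g.2 (by simpa using congrArg Subtype.val hab)⟩, ?_⟩
    rintro ⟨G₁, h₁⟩ ⟨G₂, h₂⟩ he
    have hfe : ∀ v, F G₁ h₁ v = F G₂ h₂ v := by
      intro v
      have := congrArg (fun (e : Fin n ↪ {x // x ∈ R}) => (e v : ℤ)) he
      exact this
    have : G₁ = G₂ := by
      ext u v
      rw [hiff G₁ h₁, hiff G₂ h₂, hfe u, hfe v]
    simp [this]
  calc t.card ≤ Fintype.card (Fin n ↪ {x // x ∈ R}) := hcard
    _ = (Fintype.card {x // x ∈ R}).descFactorial (Fintype.card (Fin n)) :=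
        Fintype.card_embedding_eq
    _ = n.descFactorial n := by rw [Fintype.card_coe, hcardR, Fintype.card_fin]
    _ = Nat.factorial n := Nat.descFactorial_self n

open Finset in
lemma card_conn_le {n : ℕ} (hn : 2 ≤ n) :
    Nat.card {G : SimpleGraph (Fin n) // G.Connected} ≤
      Nat.factorial n * 2 ^ (2 * maxSumDiam n - 1) := by
  classical
  rw [Nat.card_eq_fintype_card, Fintype.card_subtype]
  set M : ℤ := 2 * (maxSumDiam n : ℤ) - 1 with hM
  set I : Finset ℤ := Finset.Icc 1 M with hI
  set optL : SimpleGraph (Fin n) → Finset ℤ := fun G =>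
    if h : ∃ L, IsSumLabeling G L ∧ L ⊆ I then h.choose else ∅ with hoptL
  have hopt : ∀ G : SimpleGraph (Fin n), G.Connected →
      IsSumLabeling G (optL G) ∧ optL G ⊆ I := by
    intro G hG
    have h : ∃ L, IsSumLabeling G L ∧ L ⊆ I := exists_good_label hn hG
    rw [hoptL]
    simp only [dif_pos h]
    exact h.choose_spec
  set s : Finset (SimpleGraph (Fin n)) := Finset.univ.filter (fun G => G.Connected) with hs
  have main : s.card ≤ Nat.factorial n * (s.image optL).card := by
    refine Finset.card_le_mul_card_image s _ ?_
    intro b _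
    refine fiber_card_le hn (L := b) _ ?_
    intro G hGmem
    rw [Finset.mem_filter] at hGmem
    obtain ⟨hGs, hGb⟩ := hGmem
    rw [hs, Finset.mem_filter] at hGs
    exact ⟨hGs.2, hGb ▸ (hopt G hGs.2).1⟩
  have himg : (s.image optL).card ≤ 2 ^ (2 * maxSumDiam n - 1) := by
    have hsub : s.image optL ⊆ I.powerset := by
      intro b hb
      obtain ⟨G, hGs, rfl⟩ := Finset.mem_image.mp hb
      rw [hs, Finset.mem_filter] at hGs
      exact Finset.mem_powerset.mpr (hopt G hGs.2).2
    calc (s.image optL).card ≤ I.powerset.card := Finset.card_le_card hsub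
      _ = 2 ^ I.card := Finset.card_powerset I
      _ = 2 ^ (2 * maxSumDiam n - 1) := by
          congr 1
          rw [hI, Int.card_Icc]
          omega
  calc s.card ≤ Nat.factorial n * (s.image optL).card := main
    _ ≤ Nat.factorial n * 2 ^ (2 * maxSumDiam n - 1) := Nat.mul_le_mul_left _ himg


open Finset

abbrev Pairs (n : ℕ) := {p : Fin n × Fin n // p.1 < p.2}

lemma card_pairs (n : ℕ) : Fintype.card (Pairs n) = n.choose 2 := by
  classical
  rw [Fintype.card_subtype]
  have : (Finset.univ.powersetCard 2 : Finset (Finset (Fin n))).card = n.choose 2 := by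
    rw [Finset.card_powersetCard, Finset.card_univ, Fintype.card_fin]
  rw [← this]
  refine Finset.card_bij (fun p _ => ({p.1, p.2} : Finset (Fin n))) ?_ ?_ ?_
  · intro p hp
    rw [Finset.mem_filter] at hp
    rw [Finset.mem_powersetCard_univ]
    exact Finset.card_pair (Fin.ne_of_lt hp.2)
  · intro p hp q hq he
    rw [Finset.mem_filter] at hp hq
    replace he : ({p.1, p.2} : Finset (Fin n)) = {q.1, q.2} := he
    have h1 : p.1 = q.1 ∨ p.1 = q.2 := by
      have : p.1 ∈ ({q.1, q.2} : Finset (Fin n)) := he ▸ (by simp)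
      simpa using this
    have h2 : p.2 = q.1 ∨ p.2 = q.2 := by
      have : p.2 ∈ ({q.1, q.2} : Finset (Fin n)) := he ▸ (by simp)
      simpa using this
    have hp2 := hp.2; have hq2 := hq.2
    rcases h1 with h1 | h1 <;> rcases h2 with h2 | h2
    · exfalso; rw [h1, h2] at hp2; exact lt_irrefl _ hp2
    · exact Prod.ext h1 h2
    · exfalso; rw [h1, h2] at hp2; exact absurd hq2 (asymm hp2)
    · exfalso; rw [h1, h2] at hp2; exact lt_irrefl _ hp2
  · intro S hS
    rw [Finset.mem_powersetCard_univ] at hS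
    obtain ⟨a, b, hab, rfl⟩ := Finset.card_eq_two.mp hS
    rcases hab.lt_or_gt with h | h
    · exact ⟨(a, b), Finset.mem_filter.mpr ⟨Finset.mem_univ _, h⟩, rfl⟩
    · exact ⟨(b, a), Finset.mem_filter.mpr ⟨Finset.mem_univ _, h⟩, by
        simp [Finset.pair_comm]⟩

noncomputable def decodeGraph {n : ℕ} (b : Pairs n → Bool) : SimpleGraph (Fin n) :=
  SimpleGraph.fromRel (fun u v => if h : u < v then b ⟨(u, v), h⟩ = true else False)

lemma decodeGraph_adj {n : ℕ} (b : Pairs n → Bool) (p : Pairs n) :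
    (decodeGraph b).Adj p.1.1 p.1.2 ↔ b p = true := by
  obtain ⟨⟨u, v⟩, huv⟩ := p
  simp only [decodeGraph, SimpleGraph.fromRel_adj]
  constructor
  · rintro ⟨hne, h | h⟩
    · rwa [dif_pos huv] at h
    · rw [dif_neg (asymm huv)] at h
      exact absurd h id
  · intro h
    exact ⟨Fin.ne_of_lt huv, Or.inl (by rwa [dif_pos huv])⟩

lemma card_graphs_ge (n : ℕ) : 2 ^ n.choose 2 ≤ Fintype.card (SimpleGraph (Fin n)) := by
  classical
  have hinj : Function.Injective (decodeGraph (n := n)) := by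
    intro b b' he
    funext p
    have := decodeGraph_adj b p
    rw [he, decodeGraph_adj b' p] at this
    rcases Bool.eq_false_or_eq_true (b' p) with h | h <;>
      rcases Bool.eq_false_or_eq_true (b p) with h' | h' <;> simp_all
  calc 2 ^ n.choose 2 = Fintype.card (Pairs n → Bool) := by
        rw [Fintype.card_fun, Fintype.card_bool, card_pairs]
    _ ≤ Fintype.card (SimpleGraph (Fin n)) := Fintype.card_le_of_injective _ hinj

open Finset in
lemma cross_card_ge {n : ℕ} (S : Finset (Fin n))
    [DecidablePred (fun p : Pairs n => ¬((p.1.1 ∈ S) ↔ (p.1.2 ∈ S)))] :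
    S.card * (univ \ S).card ≤
      (univ.filter (fun p : Pairs n => ¬((p.1.1 ∈ S) ↔ (p.1.2 ∈ S)))).card := by
  classical
  rw [← Finset.card_product]
  rcases (S ×ˢ (univ \ S)).eq_empty_or_nonempty with he | ⟨⟨a, b⟩, hab⟩
  · simp [he]
  rw [Finset.mem_product, Finset.mem_sdiff] at hab
  have hne : a ≠ b := fun h => hab.2.2 (h ▸ hab.1)
  have junk : Pairs n :=
    if h : a < b then ⟨(a, b), h⟩ else ⟨(b, a), hne.lt_or_gt.resolve_left h⟩
  refine Finset.card_le_card_of_injOn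
    (fun x => if h : x.1 < x.2 then ⟨(x.1, x.2), h⟩ else
      if h' : x.2 < x.1 then ⟨(x.2, x.1), h'⟩ else junk) ?_ ?_
  · rintro ⟨c, d⟩ hcd
    rw [Finset.mem_coe, Finset.mem_product, Finset.mem_sdiff] at hcd
    have hcdne : c ≠ d := fun h => hcd.2.2 (h ▸ hcd.1)
    rw [Finset.mem_coe, Finset.mem_filter]
    dsimp only
    rcases hcdne.lt_or_gt with h | h
    · rw [dif_pos h]
      refine ⟨Finset.mem_univ _, ?_⟩
      simp only
      intro hiff
      exact hcd.2.2 (hiff.mp hcd.1)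
    · rw [dif_neg (asymm h), dif_pos h]
      refine ⟨Finset.mem_univ _, ?_⟩
      simp only
      intro hiff
      exact hcd.2.2 (hiff.mpr hcd.1)
  · rintro ⟨c, d⟩ hcd ⟨c', d'⟩ hcd' he
    dsimp only at he
    simp only [Finset.coe_product, Set.mem_prod, Finset.mem_coe, Finset.mem_sdiff]
      at hcd hcd'
    have h1 : c ≠ d := fun h => hcd.2.2 (h ▸ hcd.1)
    have h2 : c' ≠ d' := fun h => hcd'.2.2 (h ▸ hcd'.1)
    rcases h1.lt_or_gt with h | h <;> rcases h2.lt_or_gt with h' | h' <;>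
      simp only [dif_pos h, dif_pos h', dif_neg (asymm h), dif_neg (asymm h')] at he <;>
      have := congrArg Subtype.val he <;> simp only [Prod.mk.injEq] at this
    · exact Prod.ext this.1 this.2
    · exact absurd (this.1 ▸ hcd.1) hcd'.2.2
    · exact absurd (this.1.symm ▸ hcd'.1) hcd.2.2
    · exact Prod.ext this.2 this.1

open Finset in
lemma nocross_card_le {n : ℕ} (S : Finset (Fin n)) (t : Finset (SimpleGraph (Fin n)))
    (ht : ∀ G ∈ t, ∀ u v, G.Adj u v → ((u ∈ S) ↔ (v ∈ S))) :
    t.card ≤ 2 ^ (n.choose 2 - S.card * (univ \ S).card) := by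
  classical
  set ncp : Finset (Pairs n) := univ.filter (fun p => ((p.1.1 ∈ S) ↔ (p.1.2 ∈ S))) with hncp
  set cp : Finset (Pairs n) :=
    univ.filter (fun p => ¬((p.1.1 ∈ S) ↔ (p.1.2 ∈ S))) with hcp
  have hsplit : ncp.card + cp.card = (univ : Finset (Pairs n)).card :=
    Finset.card_filter_add_card_filter_not
      (s := (univ : Finset (Pairs n))) (p := fun p => ((p.1.1 ∈ S) ↔ (p.1.2 ∈ S)))
  have hcross : S.card * (univ \ S).card ≤ cp.card := cross_card_ge S
  have huniv : (univ : Finset (Pairs n)).card = n.choose 2 := by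
    rw [Finset.card_univ, card_pairs]
  have hncp_le : ncp.card ≤ n.choose 2 - S.card * (univ \ S).card := by
    have h1 : ncp.card = n.choose 2 - cp.card := by omega
    rw [h1]
    exact Nat.sub_le_sub_left hcross _
  have hinj : t.card ≤ Fintype.card ({p // p ∈ ncp} → Bool) := by
    rw [← Fintype.card_coe t]
    refine Fintype.card_le_of_embedding ⟨fun g q => decide (g.1.Adj q.1.1.1 q.1.1.2), ?_⟩
    rintro ⟨G₁, h₁⟩ ⟨G₂, h₂⟩ he
    have key : ∀ u v : Fin n, u < v → (G₁.Adj u v ↔ G₂.Adj u v) := by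
      intro u v huv
      by_cases hmem : (⟨(u, v), huv⟩ : Pairs n) ∈ ncp
      · have := congrFun he ⟨⟨(u, v), huv⟩, hmem⟩
        simp only [decide_eq_decide] at this
        exact this
      · rw [hncp, Finset.mem_filter] at hmem
        have hmem' : ¬((u ∈ S) ↔ (v ∈ S)) := fun hiff => hmem ⟨Finset.mem_univ _, hiff⟩
        constructor
        · intro h; exact absurd (ht G₁ h₁ u v h) hmem'
        · intro h; exact absurd (ht G₂ h₂ u v h) hmem'
    suffices hG : G₁ = G₂ by simp [hG]
    ext u v
    rcases lt_trichotomy u v with h | h | h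
    · exact key u v h
    · subst h; simp
    · rw [SimpleGraph.adj_comm, SimpleGraph.adj_comm (G := G₂)]
      exact key v u h
  calc t.card ≤ Fintype.card ({p // p ∈ ncp} → Bool) := hinj
    _ = 2 ^ ncp.card := by rw [Fintype.card_fun, Fintype.card_bool, Fintype.card_coe]
    _ ≤ 2 ^ (n.choose 2 - S.card * (univ \ S).card) :=
        Nat.pow_le_pow_right (by norm_num) hncp_le


lemma aux_4m (m : ℕ) (hm : 5 ≤ m) : 4 * m + 3 ≤ 2 ^ m := by
  induction m, hm using Nat.le_induction with
  | base => norm_num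
  | succ m hm ih =>
    have : (2:ℕ) ^ (m+1) = 2 * 2 ^ m := by ring
    omega

lemma aux_8m (m : ℕ) (hm : 6 ≤ m) : 8 * m + 7 ≤ 2 ^ m := by
  induction m, hm using Nat.le_induction with
  | base => norm_num
  | succ m hm ih =>
    have : (2:ℕ) ^ (m+1) = 2 * 2 ^ m := by ring
    omega

lemma nat_le_pow_div4 {n : ℕ} (hn : 20 ≤ n) : n ≤ 2 ^ (n / 4) := by
  have h := aux_4m (n / 4) (by omega)
  omega

lemma nat_le_pow_div8 {n : ℕ} (hn : 48 ≤ n) : n - 1 ≤ 2 ^ (n / 8) := by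
  have h := aux_8m (n / 8) (by omega)
  omega

lemma choose_two_mul (n : ℕ) : n.choose 2 * 2 = n * (n - 1) := by
  rw [Nat.choose_two_right]
  refine Nat.div_mul_cancel ?_
  rcases Nat.even_or_odd n with h | h
  · exact (h.mul_right _).two_dvd
  · rcases n with _ | m
    · simp
    · have he : Even m := by
        rcases Nat.even_or_odd m with h' | h'
        · exact h'
        · exact absurd (h'.add_one) (by simpa using h)
      have : Even ((m+1) * (m + 1 - 1)) := by simpa using he.mul_left (m+1)
      exact this.two_dvd

lemma term_bound {n k : ℕ} (hn : 50 ≤ n) (hk1 : 1 ≤ k) (hk2 : k ≤ n - 1) :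
    n.choose k * 2 ^ (n.choose 2 - k * (n - k)) ≤ 2 ^ (n.choose 2 - 1 - n / 8) := by
  obtain ⟨j, hj⟩ : ∃ j, j = min k (n - k) := ⟨_, rfl⟩
  have hj1 : 1 ≤ j := by omega
  have hjk : j ≤ k := by omega
  have hjnk : j ≤ n - k := by omega
  have hj2 : j + j ≤ n := by omega
  -- choose bound
  have s1 : n.choose k ≤ n ^ j := by
    rcases le_total k (n - k) with h | h
    · have hh : j = k := by omega
      rw [hh]
      exact Nat.choose_le_pow n k
    · have hjv : j = n - k := by omega
      have hsym : n.choose (n - k) = n.choose k := Nat.choose_symm (by omega)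
      rw [hjv, ← hsym]
      exact Nat.choose_le_pow n (n - k)
  have s2 : n ^ j ≤ 2 ^ (n / 4 * j) := by
    calc n ^ j ≤ (2 ^ (n / 4)) ^ j := Nat.pow_le_pow_left (nat_le_pow_div4 (by omega)) j
      _ = 2 ^ (n / 4 * j) := by rw [← pow_mul]
  -- K = j * (n - j)
  have s3 : k * (n - k) = j * (n - j) := by
    rcases le_total k (n - k) with h | h
    · have hh : j = k := by omega
      rw [hh]
    · have hjv : j = n - k := by omega
      have h1 : n - (n - k) = k := by omega
      rw [hjv, h1, Nat.mul_comm]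
  have s4 : n / 4 * j + n / 8 + 1 ≤ j * (n - j) := by
    have hA : n / 4 + (n / 8 + 1) ≤ n - j := by omega
    have hB : n / 8 + 1 ≤ j * (n / 8 + 1) := Nat.le_mul_of_pos_left _ (by omega)
    calc n / 4 * j + n / 8 + 1 ≤ j * (n / 4) + j * (n / 8 + 1) := by
          rw [Nat.mul_comm (n/4) j]; omega
      _ = j * (n / 4 + (n / 8 + 1)) := by ring
      _ ≤ j * (n - j) := Nat.mul_le_mul_left _ hA
  have s5 : k * (n - k) ≤ n.choose 2 := by
    have h2 : 2 * (k * (n - k)) ≤ n * (n - 1) := by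
      have hkn : k ≤ n := by omega
      nlinarith [Nat.sub_add_cancel hkn, Nat.sub_add_cancel (show 1 ≤ n by omega)]
    have h3 := choose_two_mul n
    nlinarith
  -- assemble
  obtain ⟨P, hP⟩ : ∃ P, P = n / 4 * j := ⟨_, rfl⟩
  obtain ⟨K, hK⟩ : ∃ K, K = k * (n - k) := ⟨_, rfl⟩
  have hexp : P + (n.choose 2 - K) ≤ n.choose 2 - 1 - n / 8 := by
    have h4 : P + n / 8 + 1 ≤ K := by rw [hP, hK, s3]; exact s4
    have h5 : K ≤ n.choose 2 := by rw [hK]; exact s5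
    omega
  calc n.choose k * 2 ^ (n.choose 2 - k * (n - k))
      ≤ 2 ^ P * 2 ^ (n.choose 2 - K) := by
        rw [hP, hK]
        exact Nat.mul_le_mul (s1.trans s2) le_rfl
    _ = 2 ^ (P + (n.choose 2 - K)) := by rw [← pow_add]
    _ ≤ 2 ^ (n.choose 2 - 1 - n / 8) := Nat.pow_le_pow_right (by norm_num) hexp

open Finset in
lemma card_disc_le {n : ℕ} (hn : 50 ≤ n) :
    Nat.card {G : SimpleGraph (Fin n) // ¬G.Connected} ≤ 2 ^ (n.choose 2 - 1) := by
  classical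
  rw [Nat.card_eq_fintype_card, Fintype.card_subtype]
  set z : Fin n := ⟨0, by omega⟩ with hz
  set t : Finset (SimpleGraph (Fin n)) := univ.filter (fun G => ¬G.Connected) with hts
  set ψ : SimpleGraph (Fin n) → Finset (Fin n) :=
    fun G => univ.filter (fun v => G.Reachable z v) with hψ
  set T : Finset (Finset (Fin n)) := univ.filter (fun S => z ∈ S ∧ S ≠ univ) with hT
  have hmaps : ∀ G ∈ t, ψ G ∈ T := by
    intro G hG
    rw [hts, Finset.mem_filter] at hG
    rw [hT, Finset.mem_filter]
    refine ⟨Finset.mem_univ _, ?_, ?_⟩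
    · rw [hψ]; exact Finset.mem_filter.mpr ⟨Finset.mem_univ _, SimpleGraph.Reachable.refl z⟩
    · intro he
      apply hG.2
      have hreach : ∀ u, G.Reachable z u := by
        intro u
        have : u ∈ ψ G := by rw [he]; exact Finset.mem_univ u
        rw [hψ] at this
        exact (Finset.mem_filter.mp this).2
      haveI : Nonempty (Fin n) := ⟨z⟩
      exact ⟨fun u v => (hreach u).symm.trans (hreach v)⟩
  have h1 : t.card = ∑ S ∈ T, (t.filter (fun G => ψ G = S)).card :=
    Finset.card_eq_sum_card_fiberwise hmaps
  have h2 : ∀ S ∈ T, (t.filter (fun G => ψ G = S)).card ≤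
      2 ^ (n.choose 2 - S.card * (univ \ S).card) := by
    intro S hS
    refine nocross_card_le S _ ?_
    intro G hG u v hadj
    rw [Finset.mem_filter] at hG
    have hSG : ψ G = S := hG.2
    rw [← hSG, hψ]
    simp only [Finset.mem_filter, Finset.mem_univ, true_and]
    exact ⟨fun h => h.trans hadj.reachable, fun h => h.trans hadj.symm.reachable⟩
  have h3 : ∀ S ∈ T, S.card ∈ Finset.Icc 1 (n - 1) := by
    intro S hS
    rw [hT, Finset.mem_filter] at hS
    rw [Finset.mem_Icc]
    constructor
    · exact Finset.card_pos.mpr ⟨z, hS.2.1⟩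
    · have : S.card < n := by
        have := Finset.card_lt_card ((Finset.subset_univ S).ssubset_of_ne hS.2.2)
        rwa [Finset.card_univ, Fintype.card_fin] at this
      omega
  have h4 : ∑ S ∈ T, 2 ^ (n.choose 2 - S.card * (univ \ S).card) =
      ∑ k ∈ Finset.Icc 1 (n-1), ∑ S ∈ T.filter (fun S => S.card = k),
        2 ^ (n.choose 2 - S.card * (univ \ S).card) :=
    (Finset.sum_fiberwise_of_maps_to h3 _).symm
  have h5 : ∀ k ∈ Finset.Icc 1 (n-1),
      (∑ S ∈ T.filter (fun S => S.card = k),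
        2 ^ (n.choose 2 - S.card * (univ \ S).card)) ≤ 2 ^ (n.choose 2 - 1 - n / 8) := by
    intro k hk
    rw [Finset.mem_Icc] at hk
    have hterm : ∀ S ∈ T.filter (fun S => S.card = k),
        2 ^ (n.choose 2 - S.card * (univ \ S).card) = 2 ^ (n.choose 2 - k * (n - k)) := by
      intro S hS
      rw [Finset.mem_filter] at hS
      rw [Finset.card_sdiff_of_subset (Finset.subset_univ S), Finset.card_univ, Fintype.card_fin, hS.2]
    rw [Finset.sum_congr rfl hterm, Finset.sum_const, smul_eq_mul]
    have hcount : (T.filter (fun S => S.card = k)).card ≤ n.choose k := by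
      have hsub : T.filter (fun S => S.card = k) ⊆ univ.powersetCard k := by
        intro S hS
        rw [Finset.mem_filter] at hS
        exact Finset.mem_powersetCard_univ.mpr hS.2
      calc (T.filter (fun S => S.card = k)).card ≤ (univ.powersetCard k).card :=
            Finset.card_le_card hsub
        _ = n.choose k := by rw [Finset.card_powersetCard, Finset.card_univ, Fintype.card_fin]
    calc (T.filter (fun S => S.card = k)).card * 2 ^ (n.choose 2 - k * (n - k))
        ≤ n.choose k * 2 ^ (n.choose 2 - k * (n - k)) := Nat.mul_le_mul_right _ hcount
      _ ≤ 2 ^ (n.choose 2 - 1 - n / 8) := term_bound (by omega) hk.1 hk.2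
  have h6 : t.card ≤ (n - 1) * 2 ^ (n.choose 2 - 1 - n / 8) := by
    calc t.card = ∑ S ∈ T, (t.filter (fun G => ψ G = S)).card := h1
      _ ≤ ∑ S ∈ T, 2 ^ (n.choose 2 - S.card * (univ \ S).card) := Finset.sum_le_sum h2
      _ = ∑ k ∈ Finset.Icc 1 (n-1), ∑ S ∈ T.filter (fun S => S.card = k),
            2 ^ (n.choose 2 - S.card * (univ \ S).card) := h4
      _ ≤ ∑ k ∈ Finset.Icc 1 (n-1), 2 ^ (n.choose 2 - 1 - n / 8) := Finset.sum_le_sum h5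
      _ = (n - 1) * 2 ^ (n.choose 2 - 1 - n / 8) := by
          rw [Finset.sum_const, smul_eq_mul, Nat.card_Icc,
            show n - 1 + 1 - 1 = n - 1 from by omega]
  have hchoose_big : n + 1 ≤ n.choose 2 := by
    have hC2 := choose_two_mul n
    obtain ⟨Q, hQ⟩ : ∃ Q, Q = n * (n - 1) := ⟨_, rfl⟩
    have h7 : 3 * n ≤ Q := by
      rw [hQ]
      calc 3 * n ≤ (n - 1) * n := Nat.mul_le_mul_right n (by omega)
        _ = n * (n - 1) := Nat.mul_comm _ _
    have h8 : n.choose 2 * 2 = Q := by rw [hQ]; exact hC2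
    omega
  calc t.card ≤ (n - 1) * 2 ^ (n.choose 2 - 1 - n / 8) := h6
    _ ≤ 2 ^ (n / 8) * 2 ^ (n.choose 2 - 1 - n / 8) :=
        Nat.mul_le_mul_right _ (nat_le_pow_div8 (by omega))
    _ = 2 ^ (n / 8 + (n.choose 2 - 1 - n / 8)) := by rw [← pow_add]
    _ = 2 ^ (n.choose 2 - 1) := by
        congr 1
        omega

lemma maxSumDiam_pos {n : ℕ} (hn : 2 ≤ n) : 1 ≤ maxSumDiam n := by
  haveI : Nonempty (Fin n) := ⟨⟨0, by omega⟩⟩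
  obtain ⟨L, hlab, hsub⟩ := exists_good_label hn (SimpleGraph.connected_top (V := Fin n))
  obtain ⟨f, _, hmem, _, _⟩ := hlab
  have hx := hsub (hmem ⟨0, by omega⟩)
  rw [Finset.mem_Icc] at hx
  omega


lemma choose_two_big {n : ℕ} (hn : 4 ≤ n) : n + 1 ≤ n.choose 2 := by
  have hC2 := choose_two_mul n
  obtain ⟨Q, hQ⟩ : ∃ Q, Q = n * (n - 1) := ⟨_, rfl⟩
  have h7 : 3 * n ≤ Q := by
    rw [hQ]
    calc 3 * n ≤ (n - 1) * n := Nat.mul_le_mul_right n (by omega)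
      _ = n * (n - 1) := Nat.mul_comm _ _
  have h8 : n.choose 2 * 2 = Q := by rw [hQ]; exact hC2
  omega

lemma card_conn_ge {n : ℕ} (hn : 50 ≤ n) :
    2 ^ (n.choose 2 - 1) ≤ Nat.card {G : SimpleGraph (Fin n) // G.Connected} := by
  classical
  have hsplit : Nat.card {G : SimpleGraph (Fin n) // G.Connected} +
      Nat.card {G : SimpleGraph (Fin n) // ¬G.Connected} =
      Fintype.card (SimpleGraph (Fin n)) := by
    rw [Nat.card_eq_fintype_card, Nat.card_eq_fintype_card, Fintype.card_subtype,
      Fintype.card_subtype, ← Finset.card_univ]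
    exact Finset.card_filter_add_card_filter_not _
  have h1 := card_graphs_ge n
  have h2 := card_disc_le hn
  have h3 : 2 ^ n.choose 2 = 2 * 2 ^ (n.choose 2 - 1) := by
    rw [← pow_succ']
    congr 1
    have := choose_two_big (n := n) (by omega)
    omega
  omega

-- main counting inequality, real form
lemma main_ineq {n : ℕ} (hn : 50 ≤ n) :
    (n.choose 2 : ℝ) - Real.logb 2 (n.factorial) ≤ 2 * (maxSumDiam n : ℝ) := by
  have h0 : 2 ^ (n.choose 2 - 1) ≤ Nat.factorial n * 2 ^ (2 * maxSumDiam n - 1) :=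
    le_trans (card_conn_ge hn) (card_conn_le (by omega))
  have hf1 : 1 ≤ maxSumDiam n := maxSumDiam_pos (by omega)
  have hC1 : 1 ≤ n.choose 2 := by have := choose_two_big (n := n) (by omega); omega
  -- cast to ℝ
  have hr : (2:ℝ) ^ (n.choose 2 - 1 : ℕ) ≤ (n.factorial : ℝ) * 2 ^ (2 * maxSumDiam n - 1 : ℕ) := by
    exact_mod_cast h0
  have hlog := Real.logb_le_logb_of_le (b := 2) (by norm_num) (by positivity) hr
  rw [Real.logb_mul (by positivity) (by positivity)] at hlog
  rw [Real.logb_pow, Real.logb_pow, Real.logb_self_eq_one (by norm_num), mul_one, mul_one]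
    at hlog
  have hc1 : ((n.choose 2 - 1 : ℕ) : ℝ) = (n.choose 2 : ℝ) - 1 := by
    push_cast [Nat.cast_sub hC1]
    ring
  have hc2 : ((2 * maxSumDiam n - 1 : ℕ) : ℝ) = 2 * (maxSumDiam n : ℝ) - 1 := by
    push_cast [Nat.cast_sub (show 1 ≤ 2 * maxSumDiam n by omega)]
    ring
  rw [hc1, hc2] at hlog
  have hfact : (0:ℝ) < n.factorial := by positivity
  linarith [hlog]

lemma logb_fact_le {n : ℕ} (hn : 50 ≤ n) :
    Real.logb 2 (n.factorial) ≤ (n : ℝ) ^ 2 / 8 := by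
  have h1 : (n.factorial : ℝ) ≤ (n : ℝ) ^ n := by
    exact_mod_cast Nat.factorial_le_pow n
  have h2 : Real.logb 2 (n.factorial) ≤ Real.logb 2 ((n:ℝ) ^ n) :=
    Real.logb_le_logb_of_le (by norm_num) (by positivity) h1
  rw [Real.logb_pow] at h2
  have h3 : Real.logb 2 (n : ℝ) ≤ (n : ℝ) / 8 := by
    have hn8 : (n : ℕ) ≤ 2 ^ (n / 8) := by
      have := aux_8m (n / 8) (by omega)
      omega
    have h4 : Real.logb 2 (n : ℝ) ≤ Real.logb 2 ((2:ℝ) ^ (n / 8 : ℕ)) := by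
      apply Real.logb_le_logb_of_le (by norm_num) (by positivity)
      exact_mod_cast hn8
    rw [Real.logb_pow, Real.logb_self_eq_one (by norm_num), mul_one] at h4
    refine h4.trans ?_
    have := Nat.cast_div_le (α := ℝ) (m := n) (n := 8)
    push_cast at this ⊢
    linarith
  calc Real.logb 2 (n.factorial) ≤ (n : ℝ) * Real.logb 2 (n : ℝ) := h2
    _ ≤ (n : ℝ) * ((n : ℝ) / 8) := by
        apply mul_le_mul_of_nonneg_left h3 (by positivity)
    _ = (n : ℝ) ^ 2 / 8 := by ring


/-- For all sufficiently large `n`, `2·f(n) ≥ C(n,2) - log₂(n!)`, where `f(n)` is the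
maximum sum-diameter over graphs on `n` vertices; in particular `f(n) = Ω(n²)`. -/
theorem stmt17 :
    (∃ N : ℕ, ∀ n : ℕ, N ≤ n →
      ((n.choose 2 : ℝ) - Real.logb 2 (n.factorial) ≤ 2 * (maxSumDiam n : ℝ))) ∧
    (∃ c : ℝ, 0 < c ∧ ∃ N : ℕ, ∀ n : ℕ, N ≤ n → c * (n : ℝ) ^ 2 ≤ (maxSumDiam n : ℝ)) := by
  constructor
  · exact ⟨50, fun n hn => main_ineq hn⟩
  · refine ⟨1/8, by norm_num, 50, fun n hn => ?_⟩
    have h1 := main_ineq hn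
    have h2 := logb_fact_le hn
    have h3 : ((n.choose 2 : ℕ) : ℝ) = (n : ℝ) * ((n : ℝ) - 1) / 2 := by
      rw [Nat.cast_choose_two]
    have h4 : (50 : ℝ) ≤ (n : ℝ) := by exact_mod_cast hn
    rw [h3] at h1
    nlinarith [sq_nonneg ((n:ℝ))]
end

section
/- Let G₁ and G₂ be graphs without isolated vertices, let L₁ and L₂ be optimal sum-graph labelings of G₁ and G₂ respectively (achieving range sd(Gᵢ)), and set L₂' = (4·sd(G₁) - 2)·L₂ (every label scaled by 4·sd(G₁)-2). Then L₁ ∪ L₂' induces the disjoint union G₁ ∪ G₂ plus isolated vertices, and consequently sd(G₁ ∪ G₂) ≤ 2(2·sd(G₁) - 1)(2·sd(G₂) - 1) - 1. -/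
/-- If `L₁, L₂` are optimal sum-graph labelings of graphs `G₁, G₂` without isolated vertices,
then `L₁ ∪ (4·sd(G₁) - 2)·L₂` induces the disjoint union `G₁ ∪ G₂` plus isolated vertices, and
`sd(G₁ ∪ G₂) ≤ 2(2·sd(G₁) - 1)(2·sd(G₂) - 1) - 1`. -/
theorem stmt18 {V₁ V₂ : Type*} [Nonempty V₁] [Nonempty V₂]
    (G₁ : SimpleGraph V₁) (G₂ : SimpleGraph V₂)
    (h₁ : ∀ v : V₁, ∃ w, G₁.Adj v w) (h₂ : ∀ v : V₂, ∃ w, G₂.Adj v w)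
    (L₁ L₂ : Finset ℤ) (hL₁ : L₁.Nonempty) (hL₂ : L₂.Nonempty)
    (hp₁ : ∀ x ∈ L₁, 0 < x) (hp₂ : ∀ x ∈ L₂, 0 < x)
    (hs₁ : IsSumLabeling G₁ L₁) (hs₂ : IsSumLabeling G₂ L₂)
    (ho₁ : (L₁.max' hL₁ - L₁.min' hL₁).toNat = sumDiam G₁)
    (ho₂ : (L₂.max' hL₂ - L₂.min' hL₂).toNat = sumDiam G₂) :
    IsSumLabeling (G₁ ⊕g G₂)
      (L₁ ∪ L₂.image (fun x => (4 * (sumDiam G₁ : ℤ) - 2) * x)) ∧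
    (sumDiam (G₁ ⊕g G₂) : ℤ) ≤
      2 * (2 * (sumDiam G₁ : ℤ) - 1) * (2 * (sumDiam G₂ : ℤ) - 1) - 1 := by
  classical
  obtain ⟨f₁, hinj₁, hmem₁, hadj₁, hiso₁⟩ := hs₁
  obtain ⟨f₂, hinj₂, hmem₂, hadj₂, hiso₂⟩ := hs₂
  set d₁ : ℤ := (sumDiam G₁ : ℤ) with hd₁def
  set d₂ : ℤ := (sumDiam G₂ : ℤ) with hd₂def
  set m₁ := L₁.min' hL₁ with hm₁def
  set M₁ := L₁.max' hL₁ with hM₁def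
  set m₂ := L₂.min' hL₂ with hm₂def
  set M₂ := L₂.max' hL₂ with hM₂def
  have hm₁ : 0 < m₁ := hp₁ _ (L₁.min'_mem hL₁)
  have hm₂ : 0 < m₂ := hp₂ _ (L₂.min'_mem hL₂)
  have hmM₁ : m₁ ≤ M₁ := L₁.min'_le _ (L₁.max'_mem hL₁)
  have hmM₂ : m₂ ≤ M₂ := L₂.min'_le _ (L₂.max'_mem hL₂)
  have hd₁ : M₁ - m₁ = d₁ := by
    rw [hd₁def, ← ho₁]; exact (Int.toNat_of_nonneg (by linarith)).symm
  have hd₂ : M₂ - m₂ = d₂ := by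
    rw [hd₂def, ← ho₂]; exact (Int.toNat_of_nonneg (by linarith)).symm
  obtain ⟨v₁⟩ := ‹Nonempty V₁›
  obtain ⟨w₁, hvw₁⟩ := h₁ v₁
  obtain ⟨hne₁, hsum₁⟩ := (hadj₁ _ _).1 hvw₁
  have hkey₁ : 2 * m₁ + 1 ≤ M₁ := by
    have ha := L₁.min'_le _ (hmem₁ v₁)
    have hb := L₁.min'_le _ (hmem₁ w₁)
    have hc := L₁.le_max' _ hsum₁
    rcases lt_or_gt_of_ne hne₁ with h | h <;> omega
  obtain ⟨v₂⟩ := ‹Nonempty V₂›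
  obtain ⟨w₂, hvw₂⟩ := h₂ v₂
  obtain ⟨hne₂, hsum₂⟩ := (hadj₂ _ _).1 hvw₂
  have hkey₂ : 2 * m₂ + 1 ≤ M₂ := by
    have ha := L₂.min'_le _ (hmem₂ v₂)
    have hb := L₂.min'_le _ (hmem₂ w₂)
    have hc := L₂.le_max' _ hsum₂
    rcases lt_or_gt_of_ne hne₂ with h | h <;> omega
  have hM₁b : M₁ ≤ 2 * d₁ - 1 := by omega
  have hd₁2 : 2 ≤ d₁ := by omega
  have hM₂b : M₂ ≤ 2 * d₂ - 1 := by omega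
  have hd₂2 : 2 ≤ d₂ := by omega
  set c : ℤ := 4 * d₁ - 2 with hcdef
  have hc : 0 < c := by omega
  have hL₁ub : ∀ x ∈ L₁, x ≤ 2 * d₁ - 1 := fun x hx => le_trans (L₁.le_max' x hx) hM₁b
  have hL₂lb : ∀ x ∈ L₂, 1 ≤ x := fun x hx => hp₂ x hx
  have hL₂ub : ∀ x ∈ L₂, x ≤ 2 * d₂ - 1 := fun x hx => le_trans (L₂.le_max' x hx) hM₂b
  have hscale : ∀ y : ℤ, 1 ≤ y → c ≤ c * y := fun y hy =>
    le_mul_of_one_le_right hc.le hy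
  have hcinj : ∀ y z : ℤ, c * y = c * z → y = z := fun y z h =>
    mul_left_cancel₀ (by omega) h
  have hL₁c : ∀ x ∈ L₁, x < c := fun x hx => by
    have := hL₁ub x hx; omega
  have hnd : ∀ a : ℤ, 0 < a → a < c → ∀ y z : ℤ, a + c * y ≠ c * z := by
    intro a ha hac y z h
    have h2 : a = c * (z - y) := by rw [mul_sub]; linarith
    rcases le_or_gt (z - y) 0 with h0 | h0
    · nlinarith [mul_nonneg hc.le (neg_nonneg.mpr h0)]
    · have h3 : (1 : ℤ) ≤ z - y := h0
      have := hscale (z - y) h3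
      linarith
  have hdisj : ∀ x ∈ L₁, ∀ y ∈ L₂, x ≠ c * y := by
    intro x hx y hy h
    have h1 := hL₁ub x hx
    have h2 := hscale y (hL₂lb y hy)
    rw [h] at h1; linarith
  set f : V₁ ⊕ V₂ → ℤ := Sum.elim f₁ (fun v => c * f₂ v) with hfdef
  have hfinj : Function.Injective f := by
    rintro (u | u) (v | v) h
    · exact congrArg Sum.inl (hinj₁ h)
    · exact absurd h (hdisj _ (hmem₁ u) _ (hmem₂ v))
    · exact absurd h.symm (hdisj _ (hmem₁ v) _ (hmem₂ u))
    · exact congrArg Sum.inr (hinj₂ (hcinj _ _ h))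
  have hfm : ∀ v, f v ∈ (L₁ ∪ L₂.image (fun x => c * x)) := by
    rintro (u | u)
    · exact Finset.mem_union_left _ (hmem₁ u)
    · exact Finset.mem_union_right _ (Finset.mem_image_of_mem _ (hmem₂ u))
  have hadjU : ∀ u v : V₁ ⊕ V₂, (G₁ ⊕g G₂).Adj u v ↔
      (f u ≠ f v ∧ f u + f v ∈ L₁ ∪ L₂.image (fun x => c * x)) := by
    rintro (u | u) (v | v) <;> simp only [hfdef, Sum.elim_inl, Sum.elim_inr]
    · rw [show (G₁ ⊕g G₂).Adj (Sum.inl u) (Sum.inl v) ↔ G₁.Adj u v from Iff.rfl, hadj₁]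
      constructor
      · rintro ⟨hne, hmem⟩
        exact ⟨hne, Finset.mem_union_left _ hmem⟩
      · rintro ⟨hne, hmem⟩
        refine ⟨hne, ?_⟩
        rcases Finset.mem_union.1 hmem with h | h
        · exact h
        · exfalso
          obtain ⟨y, hy, hyy⟩ := Finset.mem_image.1 h
          have h1 := hL₁ub _ (hmem₁ u)
          have h2 := hL₁ub _ (hmem₁ v)
          have h3 := hscale y (hL₂lb y hy)
          rcases lt_or_gt_of_ne hne with hlt | hlt <;> linarith
    · constructor
      · intro h; exact absurd h (by simp [SimpleGraph.sum])
      · rintro ⟨hne, hmem⟩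
        exfalso
        rcases Finset.mem_union.1 hmem with h | h
        · have h0 := hL₁ub _ h
          have h1 := hp₁ _ (hmem₁ u)
          have h2 := hscale (f₂ v) (hL₂lb _ (hmem₂ v))
          linarith
        · obtain ⟨y, hy, hyy⟩ := Finset.mem_image.1 h
          exact hnd (f₁ u) (hp₁ _ (hmem₁ u)) (hL₁c _ (hmem₁ u)) (f₂ v) y hyy.symm
    · constructor
      · intro h; exact absurd h (by simp [SimpleGraph.sum])
      · rintro ⟨hne, hmem⟩
        exfalso
        rcases Finset.mem_union.1 hmem with h | h
        · have h0 := hL₁ub _ h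
          have h1 := hp₁ _ (hmem₁ v)
          have h2 := hscale (f₂ u) (hL₂lb _ (hmem₂ u))
          linarith
        · obtain ⟨y, hy, hyy⟩ := Finset.mem_image.1 h
          exact hnd (f₁ v) (hp₁ _ (hmem₁ v)) (hL₁c _ (hmem₁ v)) (f₂ u) y (by linarith)
    · rw [show (G₁ ⊕g G₂).Adj (Sum.inr u) (Sum.inr v) ↔ G₂.Adj u v from Iff.rfl, hadj₂]
      constructor
      · rintro ⟨hne, hmem⟩
        refine ⟨fun h => hne (hcinj _ _ h), ?_⟩
        refine Finset.mem_union_right _ ?_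
        rw [← mul_add]
        exact Finset.mem_image_of_mem _ hmem
      · rintro ⟨hne, hmem⟩
        have hne' : f₂ u ≠ f₂ v := fun h => hne (by rw [h])
        refine ⟨hne', ?_⟩
        rcases Finset.mem_union.1 hmem with h | h
        · exfalso
          have h0 := hL₁ub _ h
          have h2 := hscale (f₂ u + f₂ v)
            (by have := hL₂lb _ (hmem₂ u); have := hL₂lb _ (hmem₂ v); linarith)
          rw [mul_add] at h2
          linarith
        · obtain ⟨y, hy, hyy⟩ := Finset.mem_image.1 h
          have heq : f₂ u + f₂ v = y := hcinj _ _ (by rw [mul_add, hyy])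
          exact heq ▸ hy
  have hisoU : ∀ a ∈ L₁ ∪ L₂.image (fun x => c * x), a ∉ Set.range f →
      ∀ b ∈ L₁ ∪ L₂.image (fun x => c * x), b ≠ a →
      a + b ∉ L₁ ∪ L₂.image (fun x => c * x) := by
    intro a ha hra b hb hba hab
    rcases Finset.mem_union.1 ha with ha1 | ha2 <;> rcases Finset.mem_union.1 hb with hb1 | hb2
    · have hna : a ∉ Set.range f₁ := by
        rintro ⟨u, rfl⟩; exact hra ⟨Sum.inl u, rfl⟩
      have h5 := hiso₁ a ha1 hna b hb1 hba
      rcases Finset.mem_union.1 hab with h | h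
      · exact h5 h
      · obtain ⟨y, hy, hyy⟩ := Finset.mem_image.1 h
        have h1 := hL₁ub _ ha1
        have h2 := hL₁ub _ hb1
        have h3 := hscale y (hL₂lb y hy)
        rcases lt_or_gt_of_ne hba with hlt | hlt <;> linarith
    · obtain ⟨y, hy, rfl⟩ := Finset.mem_image.1 hb2
      rcases Finset.mem_union.1 hab with h | h
      · have h0 := hL₁ub _ h
        have h1 := hp₁ _ ha1
        have h2 := hscale y (hL₂lb y hy)
        linarith
      · obtain ⟨z, hz, hzz⟩ := Finset.mem_image.1 h
        exact hnd a (hp₁ _ ha1) (hL₁c _ ha1) y z hzz.symm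
    · obtain ⟨x, hx, rfl⟩ := Finset.mem_image.1 ha2
      rcases Finset.mem_union.1 hab with h | h
      · have h0 := hL₁ub _ h
        have h1 := hp₁ _ hb1
        have h2 := hscale x (hL₂lb x hx)
        linarith
      · obtain ⟨z, hz, hzz⟩ := Finset.mem_image.1 h
        exact hnd b (hp₁ _ hb1) (hL₁c _ hb1) x z (by linarith)
    · obtain ⟨x, hx, rfl⟩ := Finset.mem_image.1 ha2
      obtain ⟨y, hy, rfl⟩ := Finset.mem_image.1 hb2
      have hxy : y ≠ x := fun h => hba (by rw [h])
      have hnx : x ∉ Set.range f₂ := by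
        rintro ⟨u, rfl⟩; exact hra ⟨Sum.inr u, rfl⟩
      have h5 := hiso₂ x hx hnx y hy hxy
      rcases Finset.mem_union.1 hab with h | h
      · have h0 := hL₁ub _ h
        have h2 := hscale (x + y) (by have := hL₂lb _ hx; have := hL₂lb _ hy; linarith)
        rw [mul_add] at h2
        linarith
      · obtain ⟨z, hz, hzz⟩ := Finset.mem_image.1 h
        have heq : x + y = z := hcinj _ _ (by rw [mul_add, hzz])
        exact h5 (heq ▸ hz)
  have hlab : IsSumLabeling (G₁ ⊕g G₂) (L₁ ∪ L₂.image (fun x => c * x)) :=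
    ⟨f, hfinj, hfm, hadjU, hisoU⟩
  refine ⟨hlab, ?_⟩
  set L : Finset ℤ := L₁ ∪ L₂.image (fun x => c * x) with hLdef
  have hLne : L.Nonempty := hL₁.mono Finset.subset_union_left
  have hLpos : ∀ x ∈ L, 0 < x := by
    intro x hx
    rcases Finset.mem_union.1 hx with h | h
    · exact hp₁ x h
    · obtain ⟨y, hy, rfl⟩ := Finset.mem_image.1 h
      have := hscale y (hL₂lb y hy); linarith
  have hminL : 1 ≤ L.min' hLne := hLpos _ (L.min'_mem hLne)
  have hmaxL : L.max' hLne ≤ c * (2 * d₂ - 1) := by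
    apply Finset.max'_le
    intro x hx
    rcases Finset.mem_union.1 hx with h | h
    · have h1 := hL₁ub _ h
      have h2 := hscale (2 * d₂ - 1) (by linarith)
      linarith
    · obtain ⟨y, hy, rfl⟩ := Finset.mem_image.1 h
      exact mul_le_mul_of_nonneg_left (hL₂ub _ hy) hc.le
  have hmm : L.min' hLne ≤ L.max' hLne := L.min'_le _ (L.max'_mem hLne)
  have hle : sumDiam (G₁ ⊕g G₂) ≤ (L.max' hLne - L.min' hLne).toNat :=
    Nat.sInf_le ⟨L, hLpos, hlab, hLne, rfl⟩
  have hcast : ((sumDiam (G₁ ⊕g G₂) : ℤ)) ≤ L.max' hLne - L.min' hLne := by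
    calc ((sumDiam (G₁ ⊕g G₂) : ℤ)) ≤ ((L.max' hLne - L.min' hLne).toNat : ℤ) := by
          exact_mod_cast hle
      _ = L.max' hLne - L.min' hLne := Int.toNat_of_nonneg (by linarith)
  have hcc : c * (2 * d₂ - 1) = 2 * (2 * d₁ - 1) * (2 * d₂ - 1) := by
    rw [hcdef]; ring
  linarith
end
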